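/- arXiv:2003.04434 — 2 statements merged into one kernel-verified Lean document; each statement's English description precedes it below -/
import Mathlib

section
/- Let R = K[x_1][x_2;θ_2,δ_2]···[x_N;θ_N,δ_N] be a CGL extension whose presentation has a D-form R_D = D⟨x_1,…,x_N⟩, for a unital subring D ⊆ K, containing the homogeneous prime elements y_1,…,y_N. Then: (a) for each k ∈ [1,N], the element y_k is normal in (R_D)_k := D⟨x_1,…,x_k⟩ (i.e., y_k(R_D)_k = (R_D)_k y_k); and (b) for any subset I ⊆ [1,N], the multiplicative set generated by D^× ∪ {y_i : i ∈ I} is a denominator (Ore) set in R_D. -/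
open scoped Classical

namespace GYint

/-! ## Subalgebras generated by subsets of the generators -/

variable (K : Type) [Field K] {R : Type} [Ring R] [Algebra K R]

/-- The `K`-subalgebra of `R` generated by the generators `x i` with `P i`. -/
def xAdj {N : ℕ} (x : Fin N → R) (P : Fin N → Prop) : Subalgebra K R :=
  Algebra.adjoin K {r : R | ∃ i : Fin N, P i ∧ r = x i}

/-- `R_k` : the subalgebra generated by the first `k` generators (0-indexed: indices `< k`). -/
def Rk {N : ℕ} (x : Fin N → R) (k : ℕ) : Subalgebra K R :=
  xAdj K x (fun i => (i : ℕ) < k)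

/-- The interval subalgebra `R_{[a,b]}` generated by `x_a, …, x_b` (0-indexed, inclusive). -/
def Rint {N : ℕ} (x : Fin N → R) (a b : ℕ) : Subalgebra K R :=
  xAdj K x (fun i => a ≤ (i : ℕ) ∧ (i : ℕ) ≤ b)

variable {K}

/-- The ordered monomial `x^f = x_1^{f 1} ⋯ x_N^{f N}`. -/
def oMono {N : ℕ} (x : Fin N → R) (f : Fin N → ℕ) : R :=
  ((List.finRange N).map (fun i => x i ^ f i)).prod

/-- Evaluation at `h ∈ (Kˣ)^r` of the character with exponent vector `m`. -/
def charEval {r : ℕ} (h : Fin r → Kˣ) (m : Fin r → ℤ) : Kˣ :=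
  ∏ i, h i ^ m i

/-- The multiplicative bicharacter `Ω_t` on `ℤ^N` associated to a multiplicatively
skew-symmetric matrix `t`, with `Ω_t(e_j, e_k) = t j k`. -/
def omegaU {N : ℕ} (t : Fin N → Fin N → Kˣ) (f g : Fin N → ℤ) : Kˣ :=
  ∏ p : Fin N × Fin N, t p.1 p.2 ^ (f p.1 * g p.2)

/-! ## CGL extensions (quantum nilpotent algebras) -/

/-- An iterated skew polynomial (Ore) presentation
`R = K[x_1][x_2; θ_2, δ_2] ⋯ [x_N; θ_N, δ_N]` of a `K`-algebra `R`, together with the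
rational torus action data making it a CGL extension (quantum nilpotent algebra).
Here `θ k` and `δ k` are recorded as maps `R → R` whose restrictions to
`R_{k-1} = K⟨x_1,…,x_{k-1}⟩` are, respectively, a `K`-algebra automorphism (with
inverse the restriction of `θinv k`) and a `K`-linear locally nilpotent
`θ_k`-derivation; `x k * a = θ k a * x k + δ k a` for `a ∈ R_{k-1}`; the ordered
monomials in the generators form a `K`-basis of `R` (so each `R_k` is a free left
`R_{k-1}`-module with basis the powers of `x_k`); each `x k` is an eigenvector of the
torus `H = (Kˣ)^rk` with character `chi k`; `θ k` is implemented by the torus element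
`hElt k`, whose eigenvalue `lam k` on `x k` is not a root of unity, and whose
eigenvalue on `x j` (`j < k`) is `lamM k j`, the multiplicatively skew-symmetric
`λ`-matrix of the presentation. -/
structure CGLExt (K : Type) [Field K] (R : Type) [Ring R] [Algebra K R] (N : ℕ) where
  x : Fin N → R
  pbw : Module.Basis (Fin N → ℕ) K R
  pbw_eq : ∀ f, pbw f = oMono x f
  rk : ℕ
  act : (Fin rk → Kˣ) →* (R ≃ₐ[K] R)
  chi : Fin N → Fin rk → ℤ
  eigen : ∀ (h : Fin rk → Kˣ) (k : Fin N), act h (x k) = (charEval h (chi k) : K) • x k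
  θ : Fin N → R → R
  θinv : Fin N → R → R
  δ : Fin N → R → R
  θ_mem : ∀ k : Fin N, ∀ a ∈ Rk K x (k : ℕ), θ k a ∈ Rk K x (k : ℕ)
  θinv_mem : ∀ k : Fin N, ∀ a ∈ Rk K x (k : ℕ), θinv k a ∈ Rk K x (k : ℕ)
  δ_mem : ∀ k : Fin N, ∀ a ∈ Rk K x (k : ℕ), δ k a ∈ Rk K x (k : ℕ)
  θ_linear : ∀ (k : Fin N) (s : K), ∀ a ∈ Rk K x (k : ℕ), ∀ b ∈ Rk K x (k : ℕ),
    θ k (s • a + b) = s • θ k a + θ k b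
  θ_mul : ∀ k : Fin N, ∀ a ∈ Rk K x (k : ℕ), ∀ b ∈ Rk K x (k : ℕ), θ k (a * b) = θ k a * θ k b
  θ_one : ∀ k : Fin N, θ k 1 = 1
  θ_left_inv : ∀ k : Fin N, ∀ a ∈ Rk K x (k : ℕ), θinv k (θ k a) = a
  θ_right_inv : ∀ k : Fin N, ∀ a ∈ Rk K x (k : ℕ), θ k (θinv k a) = a
  δ_linear : ∀ (k : Fin N) (s : K), ∀ a ∈ Rk K x (k : ℕ), ∀ b ∈ Rk K x (k : ℕ),
    δ k (s • a + b) = s • δ k a + δ k b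
  δ_tw : ∀ k : Fin N, ∀ a ∈ Rk K x (k : ℕ), ∀ b ∈ Rk K x (k : ℕ),
    δ k (a * b) = δ k a * b + θ k a * δ k b
  ore : ∀ k : Fin N, ∀ a ∈ Rk K x (k : ℕ), x k * a = θ k a * x k + δ k a
  δ_nil : ∀ k : Fin N, ∀ a ∈ Rk K x (k : ℕ), ∃ n : ℕ, (δ k)^[n] a = 0
  hElt : Fin N → Fin rk → Kˣ
  lam : Fin N → Kˣ
  hElt_theta : ∀ k : Fin N, ∀ a ∈ Rk K x (k : ℕ), act (hElt k) a = θ k a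
  hElt_lam : ∀ k : Fin N, act (hElt k) (x k) = (lam k : K) • x k
  lam_nru : ∀ (k : Fin N) (n : ℕ), 0 < n → lam k ^ n ≠ 1
  lamM : Fin N → Fin N → Kˣ
  lamM_spec : ∀ k j : Fin N, (j : ℕ) < (k : ℕ) → act (hElt k) (x j) = (lamM k j : K) • x j
  lamM_diag : ∀ k, lamM k k = 1
  lamM_skew : ∀ k j, lamM j k = (lamM k j)⁻¹

/-- A symmetric CGL extension: additionally `δ_k (x_j) ∈ K⟨x_{j+1},…,x_{k-1}⟩` for all
`j < k` (via the Ore relation, `δ_k(x_j) = x_k x_j - λ_{kj} x_j x_k`), and for each `j`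
there is an element `h_j^*` of the torus acting on `x_k` by `λ_{kj}⁻¹` for `k > j` and
on `x_j` by an eigenvalue `λ_j^*` which is not a root of unity. -/
structure SymCGLExt (K : Type) [Field K] (R : Type) [Ring R] [Algebra K R] (N : ℕ)
    extends CGLExt K R N where
  sym_delta : ∀ j k : Fin N, (j : ℕ) < (k : ℕ) →
    x k * x j - (lamM k j : K) • (x j * x k) ∈ Rint K x ((j : ℕ) + 1) ((k : ℕ) - 1)
  hStar : Fin N → Fin rk → Kˣ
  lamStar : Fin N → Kˣ
  hStar_spec : ∀ j k : Fin N, (j : ℕ) < (k : ℕ) →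
    act (hStar j) (x k) = (((lamM k j)⁻¹ : Kˣ) : K) • x k
  hStar_lam : ∀ j : Fin N, act (hStar j) (x j) = (lamStar j : K) • x j
  lamStar_nru : ∀ (j : Fin N) (n : ℕ), 0 < n → lamStar j ^ n ≠ 1

/-- A homogeneous element (`H`-eigenvector with an integral character; `0` is allowed). -/
def IsHomog {N : ℕ} (E : CGLExt K R N) (u : R) : Prop :=
  ∃ m : Fin E.rk → ℤ, ∀ h : Fin E.rk → Kˣ, E.act h u = (charEval h m : K) • u

/-- `p` is a normal element of the subalgebra `S` : `p S = S p`. -/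
def IsNormalIn (S : Subalgebra K R) (p : R) : Prop :=
  (∀ a ∈ S, ∃ b ∈ S, p * a = b * p) ∧ (∀ a ∈ S, ∃ b ∈ S, a * p = p * b)

/-- `p` is a prime element of the subalgebra `S`: a nonzero normal element of `S`
such that `S/(p)` is a domain. -/
def IsPrimeElemIn (S : Subalgebra K R) (p : R) : Prop :=
  p ≠ 0 ∧ p ∈ S ∧ IsNormalIn S p ∧
  ∀ a b : R, a ∈ S → b ∈ S → (∃ c ∈ S, a * b = p * c) →
    (∃ c ∈ S, a = p * c) ∨ (∃ c ∈ S, b = p * c)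

/-! ## Predecessor and successor functions -/

/-- The predecessor function `p(k)` of the level sets of `η` (`⊥` playing the role of `-∞`). -/
noncomputable def predIdx {N : ℕ} {α : Type} (η : Fin N → α) (k : Fin N) : WithBot (Fin N) :=
  (Finset.univ.filter (fun j : Fin N => (j : ℕ) < (k : ℕ) ∧ η j = η k)).max

/-- The successor function `s(k)` of the level sets of `η` (`⊤` playing the role of `+∞`). -/
noncomputable def succIdx {N : ℕ} {α : Type} (η : Fin N → α) (k : Fin N) : WithTop (Fin N) :=
  (Finset.univ.filter (fun j : Fin N => (k : ℕ) < (j : ℕ) ∧ η j = η k)).min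

/-- Iterated successor `s^m(k)`. -/
noncomputable def succIter {N : ℕ} {α : Type} (η : Fin N → α) : ℕ → Fin N → WithTop (Fin N)
  | 0, k => (k : WithTop (Fin N))
  | n + 1, k => WithTop.recTopCoe ⊤ (fun j => succIdx η j) (succIter η n k)

/-- Iterated predecessor `p^m(k)`. -/
noncomputable def predIter {N : ℕ} {α : Type} (η : Fin N → α) : ℕ → Fin N → WithBot (Fin N)
  | 0, k => (k : WithBot (Fin N))
  | n + 1, k => WithBot.recBotCoe ⊥ (fun j => predIdx η j) (predIter η n k)

/-! ## The sequence of homogeneous prime elements, [GY1, Theorem 4.3] -/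

/-- The data of [GY1, Theorem 4.3] for a CGL extension `E`: a function `η : [1,N] → ℤ`,
elements `c_k ∈ R_{k-1}`, and the sequence `y_1, …, y_N` of homogeneous elements defined
by the recursion `y_k = y_{p(k)} x_k - c_k` (resp. `y_k = x_k` when `p(k) = -∞`) such that
for every `k`, `{y_j : j ≤ k, s(j) > k}` is a list of the homogeneous prime elements of
`R_k` up to scalar multiples. -/
structure YSystem {N : ℕ} (E : CGLExt K R N) where
  η : Fin N → ℤ
  y : Fin N → R
  c : Fin N → R
  c_mem : ∀ k : Fin N, c k ∈ Rk K E.x (k : ℕ)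
  y_rec : ∀ k j : Fin N, predIdx η k = (j : WithBot (Fin N)) → y k = y j * E.x k - c k
  y_base : ∀ k : Fin N, predIdx η k = ⊥ → y k = E.x k
  y_homog : ∀ k : Fin N, IsHomog E (y k)
  y_prime : ∀ k j : Fin N, (j : ℕ) ≤ (k : ℕ) →
    (∀ l : Fin N, succIdx η j = (l : WithTop (Fin N)) → (k : ℕ) < (l : ℕ)) →
    IsPrimeElemIn (Rk K E.x ((k : ℕ) + 1)) (y j)
  y_complete : ∀ (k : Fin N) (u : R), IsHomog E u →
    IsPrimeElemIn (Rk K E.x ((k : ℕ) + 1)) u →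
    ∃ j : Fin N, (j : ℕ) ≤ (k : ℕ) ∧
      (∀ l : Fin N, succIdx η j = (l : WithTop (Fin N)) → (k : ℕ) < (l : ℕ)) ∧
      ∃ t : Kˣ, u = (t : K) • y j

/-! ## Leading terms -/

/-- The reverse lexicographic order `f ≺ g` on exponent vectors. -/
def revLexLt {N : ℕ} (f g : Fin N → ℕ) : Prop :=
  ∃ n : Fin N, f n < g n ∧ ∀ m : Fin N, n < m → f m = g m

/-- `b` has leading term `t x^f` with respect to the PBW basis and `≺`. -/
def IsLeadingTerm {N : ℕ} (E : CGLExt K R N) (b : R) (t : K) (f : Fin N → ℕ) : Prop :=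
  t ≠ 0 ∧ E.pbw.repr b f = t ∧
    ∀ g : Fin N → ℕ, E.pbw.repr b g ≠ 0 → g = f ∨ revLexLt g f

/-! ## Interval prime elements of symmetric CGL extensions -/

/-- The `{0,1}`-vector (as natural numbers) supported on the `η`-chain from `a` to `b`,
i.e. on `{l : a ≤ l ≤ b, η l = η a}`; for `b = s^m(a)` this is the exponent vector of
`x_a x_{s(a)} ⋯ x_{s^m(a)}`, i.e. `e_{[a,b]}`. -/
noncomputable def chainIndN {N : ℕ} {α : Type} (η : Fin N → α) (a b : Fin N) : Fin N → ℕ :=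
  fun l => if a ≤ l ∧ l ≤ b ∧ η l = η a then 1 else 0

/-- Integer version of `chainIndN`, the vector `e_{[a,b]} ∈ ℤ^N`. -/
noncomputable def chainIndZ {N : ℕ} {α : Type} (η : Fin N → α) (a b : Fin N) : Fin N → ℤ :=
  fun l => if a ≤ l ∧ l ≤ b ∧ η l = η a then 1 else 0

/-- The standard basis vector `e_i ∈ ℤ^N`. -/
def eVecZ {N : ℕ} (i : Fin N) : Fin N → ℤ := fun l => if l = i then 1 else 0

/-- The vector `ē_j = e_j + e_{p(j)} + ⋯ + e_{p^{O_-(j)}(j)} ∈ ℤ^N`. -/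
noncomputable def ebarZ {N : ℕ} {α : Type} (η : Fin N → α) (j : Fin N) : Fin N → ℤ :=
  fun l => if l ≤ j ∧ η l = η j then 1 else 0

/-- The interval prime elements `y_{[i, s^m(i)]}` of a symmetric CGL extension
([GYbig, Theorem 5.1]): for all `i` and `m ≥ 0` with `s^m(i) ∈ [1,N]`, the element
`yI i (s^m(i))` is the unique homogeneous prime element of the interval subalgebra
`R_{[i, s^m(i)]}` with leading term `x_i x_{s(i)} ⋯ x_{s^m(i)}`. -/
structure IntervalYSystem {N : ℕ} (E : SymCGLExt K R N) (Y : YSystem E.toCGLExt) where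
  yI : Fin N → Fin N → R
  homog : ∀ i k : Fin N, IsHomog E.toCGLExt (yI i k)
  prime : ∀ (i : Fin N) (m : ℕ) (k : Fin N), succIter Y.η m i = (k : WithTop (Fin N)) →
    IsPrimeElemIn (Rint K E.x (i : ℕ) (k : ℕ)) (yI i k)
  lt : ∀ (i : Fin N) (m : ℕ) (k : Fin N), succIter Y.η m i = (k : WithTop (Fin N)) →
    IsLeadingTerm E.toCGLExt (yI i k) 1 (chainIndN Y.η i k)

/-- `y_{[j,k]}` extended by the convention `y_{[s(i), i]} = 1`. -/
def yIext {N : ℕ} (E : SymCGLExt K R N) (Y : YSystem E.toCGLExt)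
    (YI : IntervalYSystem E Y) (j k : Fin N) : R :=
  if (k : ℕ) < (j : ℕ) then 1 else YI.yI j k

/-- The normal elements `u_{[i,s^m(i)]}` of [GYbig, Corollary 5.11]: here `j = s(i)`,
`k' = s^{m-1}(i)`, `k = s^m(i)` and
`u = y_{[i,k']} y_{[j,k]} - Ω_λ(e_i, e_{[j,k']}) y_{[j,k']} y_{[i,k]}`. -/
noncomputable def uElem {N : ℕ} (E : SymCGLExt K R N) (Y : YSystem E.toCGLExt)
    (YI : IntervalYSystem E Y) (i j k' k : Fin N) : R :=
  YI.yI i k' * YI.yI j k -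
    (omegaU E.lamM (eVecZ i) (chainIndZ Y.η j k') : K) • (yIext E Y YI j k' * YI.yI i k)

/-! ## Conditions (A) and (B) and the normalization condition -/

/-- Condition (A): a choice of square roots `ν_{kl} = √λ_{kl}` in `K` such that the
subgroup of `Kˣ` they generate contains no elements of order 2. -/
structure CondA {N : ℕ} (E : CGLExt K R N) where
  ν : Fin N → Fin N → Kˣ
  sq : ∀ k j : Fin N, (j : ℕ) < (k : ℕ) → ν k j ^ 2 = E.lamM k j
  diag : ∀ k, ν k k = 1
  skew : ∀ k j, ν j k = (ν k j)⁻¹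
  no_order_two : ∀ t ∈ Subgroup.closure {u : Kˣ | ∃ k j : Fin N, u = ν k j},
    t ^ 2 = 1 → t = 1

/-- Condition (B): positive integers `d_n`, `n ∈ η([1,N])`, with
`λ_k^{d_{η(l)}} = λ_l^{d_{η(k)}}` whenever `p(k), p(l) ≠ -∞`. -/
def CondB {N : ℕ} (E : CGLExt K R N) (η : Fin N → ℤ) (d : ℤ → ℕ) : Prop :=
  (∀ k : Fin N, 0 < d (η k)) ∧
  ∀ k l : Fin N, predIdx η k ≠ ⊥ → predIdx η l ≠ ⊥ →
    E.lam k ^ d (η l) = E.lam l ^ d (η k)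

/-- The symmetrization scalar `S_ν(f) = ∏_{j<k} ν_{jk}^{-f_j f_k}`. -/
def Snu {N : ℕ} (ν : Fin N → Fin N → Kˣ) (f : Fin N → ℤ) : Kˣ :=
  ∏ p : Fin N × Fin N,
    if (p.1 : ℕ) < (p.2 : ℕ) then ν p.1 p.2 ^ (-(f p.1 * f p.2)) else 1

/-- The normalization condition (6.6) of [GYbig]: the leading coefficient
`π_{[i,s(i)]}` of `u_{[i,s(i)]}` equals `S_ν(-e_i + f_{[i,s(i)]})` for all `i` with
`s(i) ≠ +∞`, where `f_{[i,s(i)]}` is the exponent of the leading term of `u_{[i,s(i)]}`. -/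
def NormCond {N : ℕ} (E : SymCGLExt K R N) (CA : CondA E.toCGLExt)
    (Y : YSystem E.toCGLExt) (YI : IntervalYSystem E Y) : Prop :=
  ∀ i j : Fin N, succIdx Y.η i = (j : WithTop (Fin N)) →
    ∃ f : Fin N → ℕ,
      IsLeadingTerm E.toCGLExt (uElem E Y YI i j i j)
        ((Snu CA.ν (fun l => (f l : ℤ) - eVecZ i l) : Kˣ) : K) f

/-! ## D-forms -/

variable (K)

/-- `t` is a unit of the subring `D ⊆ K`. -/
def isUnitIn (D : Subring K) (t : K) : Prop := t ∈ D ∧ t ≠ 0 ∧ t⁻¹ ∈ D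

/-- The `D`-subring of `R` generated by `D` and the generators `x i` with `P i`. -/
def Dspan (D : Subring K) {N : ℕ} (x : Fin N → R) (P : Fin N → Prop) : Subring R :=
  Subring.closure ((algebraMap K R) '' (D : Set K) ∪ {r : R | ∃ i : Fin N, P i ∧ r = x i})

/-- `(R_D)_k = D⟨x_1,…,x_k⟩` (0-indexed: indices `< k`). -/
def DRk (D : Subring K) {N : ℕ} (x : Fin N → R) (k : ℕ) : Subring R :=
  Dspan K D x (fun i => (i : ℕ) < k)

/-- `R_D = D⟨x_1,…,x_N⟩`. -/
def DRfull (D : Subring K) {N : ℕ} (x : Fin N → R) : Subring R :=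
  Dspan K D x (fun _ => True)

/-- `(R_D)_{[a,b]} = D⟨x_a,…,x_b⟩` (0-indexed, inclusive). -/
def DRint (D : Subring K) {N : ℕ} (x : Fin N → R) (a b : ℕ) : Subring R :=
  Dspan K D x (fun i => a ≤ (i : ℕ) ∧ (i : ℕ) ≤ b)

variable {K}

/-- `D⟨x_1,…,x_N⟩` is a `D`-form of the CGL presentation `E`, i.e. it is an iterated
skew polynomial extension `D[x_1][x_2;θ_2,δ_2]⋯[x_N;θ_N,δ_N]`: each `θ_k` restricts
to an automorphism of `D⟨x_1,…,x_{k-1}⟩`, and each `δ_k` maps `D⟨x_1,…,x_{k-1}⟩`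
into itself. -/
structure IsDForm (D : Subring K) {N : ℕ} (E : CGLExt K R N) : Prop where
  theta_mem : ∀ k : Fin N, ∀ a ∈ Rk K E.x (k : ℕ),
    a ∈ DRk K D E.x (k : ℕ) → E.θ k a ∈ DRk K D E.x (k : ℕ)
  thetainv_mem : ∀ k : Fin N, ∀ a ∈ Rk K E.x (k : ℕ),
    a ∈ DRk K D E.x (k : ℕ) → E.θinv k a ∈ DRk K D E.x (k : ℕ)
  delta_mem : ∀ k : Fin N, ∀ a ∈ Rk K E.x (k : ℕ),
    a ∈ DRk K D E.x (k : ℕ) → E.δ k a ∈ DRk K D E.x (k : ℕ)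

/-- `D ⊆ K` has `K` as its field of fractions. -/
def IsFractionFieldOf (D : Subring K) : Prop :=
  ∀ z : K, ∃ a ∈ D, ∃ b ∈ D, b ≠ 0 ∧ z = a / b

/-- `p` is a normal element of the subring `S` : `p S = S p`. -/
def IsNormalInSR (S : Subring R) (p : R) : Prop :=
  (∀ a ∈ S, ∃ b ∈ S, p * a = b * p) ∧ (∀ a ∈ S, ∃ b ∈ S, a * p = p * b)

/-- `T` is a denominator (two-sided Ore) set in the subring `S` of the domain `R`. -/
def IsDenomSetIn (S : Subring R) (T : Submonoid R) : Prop :=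
  ((T : Set R) ⊆ (S : Set R)) ∧ (0 : R) ∉ T ∧
  (∀ a ∈ S, ∀ s ∈ T, ∃ b ∈ S, ∃ t ∈ T, t * a = b * s) ∧
  (∀ a ∈ S, ∀ s ∈ T, ∃ b ∈ S, ∃ t ∈ T, a * t = s * b)

/-! ## The permutations `Ξ_N` and `Γ_N` -/

/-- The set `Ξ_N ⊆ S_N` of permutations `σ` such that `σ([1,k])` is an interval for
all `k`. -/
def XiN {N : ℕ} : Set (Equiv.Perm (Fin N)) :=
  {σ | ∀ k a b c : Fin N, a ≤ k → b ≤ k → σ a ≤ c → c ≤ σ b → ∃ m : Fin N, m ≤ k ∧ σ m = c}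

/-- The value at position `k` (0-indexed) of the permutation
`σ_{i,j} = [i+1, …, j, i, j+1, …, N, i-1, …, 1]` (here expressed 0-indexed). -/
def gammaVal (N i j : ℕ) (k : Fin N) : ℕ :=
  if (k : ℕ) < j - i then i + 1 + (k : ℕ)
  else if (k : ℕ) = j - i then i
  else if (k : ℕ) ≤ N - 1 - i then (k : ℕ) + i
  else N - 1 - (k : ℕ)

/-- The subset `Γ_N = {σ_{i,j} : i ≤ j} ⊆ Ξ_N`. -/
def GammaN {N : ℕ} : Set (Equiv.Perm (Fin N)) :=
  {σ | ∃ i j : ℕ, i ≤ j ∧ j < N ∧ ∀ k : Fin N, (σ k : ℕ) = gammaVal N i j k}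


/-! ### Auxiliary development -/

section RL
variable {N : ℕ}

lemma rlt_irrefl (f : Fin N → ℕ) : ¬ revLexLt f f := by
  rintro ⟨n, h, -⟩; exact lt_irrefl _ h

lemma rlt_trans {f g h : Fin N → ℕ} : revLexLt f g → revLexLt g h → revLexLt f h := by
  rintro ⟨n₁, lt₁, eq₁⟩ ⟨n₂, lt₂, eq₂⟩
  rcases lt_trichotomy n₁ n₂ with H | rfl | H
  · exact ⟨n₂, by rw [eq₁ _ H]; exact lt₂, fun m hm => (eq₁ _ (H.trans hm)).trans (eq₂ _ hm)⟩
  · exact ⟨n₁, lt₁.trans lt₂, fun m hm => (eq₁ _ hm).trans (eq₂ _ hm)⟩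
  · exact ⟨n₁, by rw [← eq₂ _ H]; exact lt₁, fun m hm => (eq₁ _ hm).trans (eq₂ _ (hm.trans' H))⟩

lemma rlt_trichotomy (f g : Fin N → ℕ) : f = g ∨ revLexLt f g ∨ revLexLt g f := by
  by_cases hfg : f = g
  · exact Or.inl hfg
  · have hne : (Finset.univ.filter (fun i : Fin N => f i ≠ g i)).Nonempty := by
      rcases Function.ne_iff.mp hfg with ⟨i, hi⟩
      exact ⟨i, by simp [hi]⟩
    obtain ⟨n, hn, hmax⟩ := Finset.exists_max_image _ (fun i : Fin N => (i : ℕ)) hne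
    have hn' : f n ≠ g n := (Finset.mem_filter.mp hn).2
    have habove : ∀ m : Fin N, n < m → f m = g m := by
      intro m hm
      by_contra hc
      have := hmax m (Finset.mem_filter.mpr ⟨Finset.mem_univ _, hc⟩)
      exact absurd (Fin.lt_def.mp hm) (not_lt.mpr this)
    rcases lt_or_gt_of_ne hn' with h | h
    · exact Or.inr (Or.inl ⟨n, h, habove⟩)
    · exact Or.inr (Or.inr ⟨n, h, fun m hm => (habove m hm).symm⟩)

lemma rlt_add_right {f g : Fin N → ℕ} (h : Fin N → ℕ) (hfg : revLexLt f g) :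
    revLexLt (f + h) (g + h) := by
  obtain ⟨n, h1, h2⟩ := hfg
  exact ⟨n, by simpa using h1, fun m hm => by simp [h2 m hm]⟩

lemma rlt_add_left {f g : Fin N → ℕ} (h : Fin N → ℕ) (hfg : revLexLt f g) :
    revLexLt (h + f) (h + g) := by
  obtain ⟨n, h1, h2⟩ := hfg
  exact ⟨n, by simpa using h1, fun m hm => by simp [h2 m hm]⟩

def rle (f g : Fin N → ℕ) : Prop := f = g ∨ revLexLt f g

lemma rle_refl (f : Fin N → ℕ) : rle f f := Or.inl rfl

lemma rle_trans {f g h : Fin N → ℕ} : rle f g → rle g h → rle f h := by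
  rintro (rfl | h1) (rfl | h2)
  · exact Or.inl rfl
  · exact Or.inr h2
  · exact Or.inr h1
  · exact Or.inr (rlt_trans h1 h2)

lemma rlt_of_rlt_of_rle {f g h : Fin N → ℕ} : revLexLt f g → rle g h → revLexLt f h := by
  rintro h1 (rfl | h2)
  · exact h1
  · exact rlt_trans h1 h2

lemma rle_add {f F g G : Fin N → ℕ} (h1 : rle f F) (h2 : rle g G) : rle (f + g) (F + G) := by
  rcases h1 with rfl | h1 <;> rcases h2 with rfl | h2
  · exact rle_refl _
  · exact Or.inr (rlt_add_left _ h2)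
  · exact Or.inr (rlt_add_right _ h1)
  · exact Or.inr (rlt_trans (rlt_add_right _ h1) (rlt_add_left _ h2))

lemma rle_add_eq {f F g G : Fin N → ℕ} (h1 : rle f F) (h2 : rle g G)
    (he : f + g = F + G) : f = F ∧ g = G := by
  rcases h1 with rfl | h1
  · rcases h2 with rfl | h2
    · exact ⟨rfl, rfl⟩
    · exact absurd (he ▸ rlt_add_left f h2) (he ▸ rlt_irrefl _)
  · have : revLexLt (f + g) (F + G) :=
      rlt_of_rlt_of_rle (rlt_add_right g h1) (rle_add (rle_refl F) h2)
    rw [he] at this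
    exact absurd this (rlt_irrefl _)

lemma exists_rle_max (s : Finset (Fin N → ℕ)) (hs : s.Nonempty) :
    ∃ F ∈ s, ∀ h ∈ s, rle h F := by
  classical
  induction s using Finset.strongInduction with
  | _ s ih =>
    obtain ⟨a, ha⟩ := hs
    rcases Finset.eq_empty_or_nonempty (s.erase a) with he | hne
    · refine ⟨a, ha, fun h hh => ?_⟩
      have : h = a := by
        by_contra hc
        exact absurd (Finset.mem_erase.mpr ⟨hc, hh⟩) (he ▸ Finset.notMem_empty h)
      exact this ▸ rle_refl a
    · obtain ⟨F, hF, hmax⟩ := ih (s.erase a) (Finset.erase_ssubset ha) hne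
      rcases rlt_trichotomy a F with heq | h | h
      · refine ⟨F, Finset.mem_of_mem_erase hF, fun x hx => ?_⟩
        by_cases hc : x = a
        · exact hc ▸ (heq ▸ rle_refl F)
        · exact hmax x (Finset.mem_erase.mpr ⟨hc, hx⟩)
      · refine ⟨F, Finset.mem_of_mem_erase hF, fun x hx => ?_⟩
        by_cases hc : x = a
        · exact hc ▸ Or.inr h
        · exact hmax x (Finset.mem_erase.mpr ⟨hc, hx⟩)
      · refine ⟨a, ha, fun x hx => ?_⟩
        by_cases hc : x = a
        · exact hc ▸ rle_refl a
        · exact rle_trans (hmax x (Finset.mem_erase.mpr ⟨hc, hx⟩)) (Or.inr h)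

def SLT (k : ℕ) (f : Fin N → ℕ) : Prop := ∀ m : Fin N, f m ≠ 0 → (m : ℕ) < k

lemma SLT_N (f : Fin N → ℕ) : SLT N f := fun m _ => m.isLt

lemma SLT_mono {k k' : ℕ} (h : k ≤ k') {f : Fin N → ℕ} (hf : SLT k f) : SLT k' f :=
  fun m hm => lt_of_lt_of_le (hf m hm) h

lemma SLT_add {k : ℕ} {f g : Fin N → ℕ} (hf : SLT k f) (hg : SLT k g) : SLT k (f + g) := by
  intro m hm
  have hm' : f m ≠ 0 ∨ g m ≠ 0 := by
    by_contra hc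
    push_neg at hc
    exact hm (by simp [hc.1, hc.2])
  rcases hm' with h | h
  · exact hf m h
  · exact hg m h

lemma rlt_SLT {k : ℕ} {f g : Fin N → ℕ} (h : revLexLt f g) (hg : SLT k g) : SLT k f := by
  obtain ⟨n, h1, h2⟩ := h
  intro m hm
  rcases lt_trichotomy n m with hc | rfl | hc
  · exact hg m (by rw [← h2 m hc]; exact hm)
  · exact hg _ (by omega)
  · exact lt_trans (by exact_mod_cast Fin.lt_def.mp hc) (hg n (by omega))

lemma rle_SLT {k : ℕ} {f g : Fin N → ℕ} (h : rle f g) (hg : SLT k g) : SLT k f := by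
  rcases h with rfl | h
  · exact hg
  · exact rlt_SLT h hg

lemma rle_coord_le {j : Fin N} {f g : Fin N → ℕ} (h : rle f g) (hg : SLT ((j:ℕ)+1) g) :
    f j ≤ g j := by
  rcases h with rfl | ⟨n, h1, h2⟩
  · exact le_refl _
  rcases lt_trichotomy n j with hc | rfl | hc
  · exact le_of_eq (h2 j hc)
  · exact le_of_lt h1
  · have hgn : g n ≠ 0 := by omega
    have h3 := hg n hgn
    have h4 : (j:ℕ) < (n:ℕ) := Fin.lt_def.mp hc
    omega

def lowF (j : Fin N) (f : Fin N → ℕ) : Fin N → ℕ := fun i => if i < j then f i else 0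
def mE (j : Fin N) (m : ℕ) : Fin N → ℕ := fun i => if i = j then m else 0
def highF (j : Fin N) (f : Fin N → ℕ) : Fin N → ℕ := fun i => if j < i then f i else 0

lemma decompF (j : Fin N) (f : Fin N → ℕ) : f = lowF j f + mE j (f j) + highF j f := by
  funext i
  rcases lt_trichotomy i j with h | rfl | h
  · simp [lowF, mE, highF, h, Fin.ne_of_lt h, not_lt_of_gt h]
  · simp [lowF, mE, highF]
  · simp [lowF, mE, highF, h, (Fin.ne_of_lt h).symm, not_lt_of_gt h]

lemma lowF_SLT (j : Fin N) (f : Fin N → ℕ) : SLT (j:ℕ) (lowF j f) := by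
  intro m hm
  by_cases h : m < j
  · exact Fin.lt_def.mp h
  · exact absurd (by simp [lowF, h]) hm

end RL

section MonoLemmas
variable {K : Type} [Field K] {R : Type} [Ring R] [Algebra K R] {N : ℕ}

lemma list_split_prod {M ι : Type*} [Monoid M] (l1 l2 : List ι) (F G H : ι → M)
    (hH : ∀ i ∈ l1 ++ l2, H i = F i * G i)
    (h2 : ∀ i ∈ l2, F i = 1) (h1 : ∀ i ∈ l1, G i = 1) :
    ((l1 ++ l2).map H).prod = ((l1 ++ l2).map F).prod * ((l1 ++ l2).map G).prod := by
  rw [List.map_append, List.map_append, List.map_append, List.prod_append, List.prod_append,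
    List.prod_append]
  have e1 : (l1.map H).prod = (l1.map F).prod := by
    apply congrArg
    apply List.map_congr_left
    intro a ha
    rw [hH a (List.mem_append.mpr (Or.inl ha)), h1 a ha, mul_one]
  have e2 : (l2.map H).prod = (l2.map G).prod := by
    apply congrArg
    apply List.map_congr_left
    intro a ha
    rw [hH a (List.mem_append.mpr (Or.inr ha)), h2 a ha, one_mul]
  have e3 : (l2.map F).prod = 1 := List.prod_eq_one (by
    intro x hx
    obtain ⟨a, ha, rfl⟩ := List.mem_map.mp hx
    exact h2 a ha)
  have e4 : (l1.map G).prod = 1 := List.prod_eq_one (by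
    intro x hx
    obtain ⟨a, ha, rfl⟩ := List.mem_map.mp hx
    exact h1 a ha)
  rw [e1, e2, e3, e4, mul_one, one_mul]

lemma mem_take_finRange {k : ℕ} {i : Fin N} (h : i ∈ (List.finRange N).take k) : (i:ℕ) < k := by
  rw [List.mem_take_iff_getElem] at h
  obtain ⟨j, hj, rfl⟩ := h
  simp [List.getElem_finRange]
  omega

lemma mem_drop_finRange {k : ℕ} {i : Fin N} (h : i ∈ (List.finRange N).drop k) : k ≤ (i:ℕ) := by
  rw [List.mem_drop_iff_getElem] at h
  obtain ⟨j, hj, rfl⟩ := h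
  simp [List.getElem_finRange]

lemma oMono_split (x : Fin N → R) (k : ℕ) (f g : Fin N → ℕ)
    (hf : ∀ i : Fin N, k ≤ (i:ℕ) → f i = 0) (hg : ∀ i : Fin N, (i:ℕ) < k → g i = 0) :
    oMono x (f + g) = oMono x f * oMono x g := by
  unfold oMono
  rw [← List.take_append_drop k (List.finRange N)]
  exact list_split_prod _ _ _ _ _ (fun i _ => by simp [Pi.add_apply, pow_add])
    (fun i hi => by rw [hf i (mem_drop_finRange hi), pow_zero])
    (fun i hi => by rw [hg i (mem_take_finRange hi), pow_zero])

lemma oMono_eq_one (x : Fin N → R) (f : Fin N → ℕ) (hf : ∀ i, f i = 0) : oMono x f = 1 := by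
  unfold oMono
  apply List.prod_eq_one
  intro z hz
  obtain ⟨a, _, rfl⟩ := List.mem_map.mp hz
  rw [hf a, pow_zero]

lemma oMono_single (x : Fin N → R) (j : Fin N) (m : ℕ) (f : Fin N → ℕ)
    (hf : ∀ i, f i = if i = j then m else 0) : oMono x f = x j ^ m := by
  unfold oMono
  have hlen : (j:ℕ) < (List.finRange N).length := by simp [j.isLt]
  rw [← List.take_append_drop (j:ℕ) (List.finRange N), List.drop_eq_getElem_cons hlen]
  rw [List.map_append, List.prod_append, List.map_cons, List.prod_cons]
  have hj : (List.finRange N)[(j:ℕ)] = j := by simp [List.getElem_finRange]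
  rw [hj]
  have e1 : ((List.take (j:ℕ) (List.finRange N)).map (fun i => x i ^ f i)).prod = 1 := by
    apply List.prod_eq_one
    intro z hz
    obtain ⟨a, ha, rfl⟩ := List.mem_map.mp hz
    have : a ≠ j := by
      have := mem_take_finRange ha
      intro hc; subst hc; omega
    rw [hf a, if_neg this, pow_zero]
  have e2 : ((List.drop ((j:ℕ)+1) (List.finRange N)).map (fun i => x i ^ f i)).prod = 1 := by
    apply List.prod_eq_one
    intro z hz
    obtain ⟨a, ha, rfl⟩ := List.mem_map.mp hz
    have : a ≠ j := by
      have := mem_drop_finRange ha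
      intro hc; subst hc; omega
    rw [hf a, if_neg this, pow_zero]
  rw [e1, e2, one_mul, mul_one, hf j, if_pos rfl]

lemma oMono_decomp (x : Fin N → R) (j : Fin N) (f : Fin N → ℕ) :
    oMono x f = oMono x (lowF j f) * x j ^ (f j) * oMono x (highF j f) := by
  conv_lhs => rw [decompF j f]
  rw [oMono_split x ((j:ℕ)+1) (lowF j f + mE j (f j)) (highF j f)
      (fun i hi => by
        have h1 : ¬ (i < j) := by rw [Fin.lt_def]; omega
        have h2 : i ≠ j := by rw [ne_eq, Fin.ext_iff]; omega
        simp [lowF, mE, Pi.add_apply, h1, h2])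
      (fun i hi => by
        have h1 : ¬ (j < i) := by rw [Fin.lt_def]; omega
        simp [highF, h1]),
    oMono_split x (j:ℕ) (lowF j f) (mE j (f j))
      (fun i hi => by
        have h1 : ¬ (i < j) := by rw [Fin.lt_def]; omega
        simp [lowF, h1])
      (fun i hi => by
        have h2 : i ≠ j := by rw [ne_eq, Fin.ext_iff]; omega
        simp [mE, h2]),
    oMono_single x j (f j) (mE j (f j)) (fun i => rfl)]

end MonoLemmas

section CoreDev
variable {K : Type} [Field K] {R : Type} [Ring R] [Algebra K R] {N : ℕ}
variable (E : CGLExt K R N) (D : Subring K)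

/-- all PBW coefficients lie in `D`. -/
def Dcoef (v : R) : Prop := ∀ h : Fin N → ℕ, E.pbw.repr v h ∈ D

/-- supports of the PBW expansion satisfy `P`. -/
def sOK (P : (Fin N → ℕ) → Prop) (v : R) : Prop := ∀ h, E.pbw.repr v h ≠ 0 → P h

variable {E D}

lemma rep_oMono (f : Fin N → ℕ) : E.pbw.repr (oMono E.x f) = Finsupp.single f 1 := by
  rw [← E.pbw_eq]; exact E.pbw.repr_self f

lemma rep_oMono_apply (f h : Fin N → ℕ) :
    E.pbw.repr (oMono E.x f) h = if h = f then 1 else 0 := by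
  rw [rep_oMono, Finsupp.single_apply]
  by_cases hc : h = f
  · simp [hc]
  · simp [hc, Ne.symm hc]

lemma sum_rep (v : R) : ∑ f ∈ (E.pbw.repr v).support, (E.pbw.repr v) f • oMono E.x f = v := by
  conv_rhs => rw [← E.pbw.linearCombination_repr v]
  rw [Finsupp.linearCombination_apply, Finsupp.sum]
  exact Finset.sum_congr rfl (fun f _ => by rw [E.pbw_eq])

lemma rep_sum {ι : Type*} (s : Finset ι) (w : ι → R) (h : Fin N → ℕ) :
    E.pbw.repr (∑ i ∈ s, w i) h = ∑ i ∈ s, E.pbw.repr (w i) h := by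
  rw [map_sum]
  exact Finset.sum_apply' h

lemma rep_smul (c : K) (v : R) (h : Fin N → ℕ) :
    E.pbw.repr (c • v) h = c * E.pbw.repr v h := by
  rw [map_smul]; rfl

lemma rep_add (u v : R) (h : Fin N → ℕ) :
    E.pbw.repr (u + v) h = E.pbw.repr u h + E.pbw.repr v h := by
  rw [map_add E.pbw.repr u v, Finsupp.add_apply]

lemma rep_sub (u v : R) (h : Fin N → ℕ) :
    E.pbw.repr (u - v) h = E.pbw.repr u h - E.pbw.repr v h := by
  rw [map_sub E.pbw.repr u v, Finsupp.sub_apply]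

lemma one_eq_oMono : (1 : R) = oMono E.x (fun _ => 0) :=
  (oMono_eq_one E.x _ (fun _ => rfl)).symm

lemma x_eq_oMono (i : Fin N) : E.x i = oMono E.x (mE i 1) := by
  rw [oMono_single E.x i 1 (mE i 1) (fun _ => rfl), pow_one]

lemma algebraMap_eq_smul_one (c : K) : algebraMap K R c = c • (1 : R) := by
  rw [Algebra.smul_def, mul_one]

/- `Dcoef` closure lemmas -/
lemma Dcoef_zero : Dcoef E D (0 : R) := by intro h; simp [Subring.zero_mem]

lemma Dcoef_add {u v : R} (hu : Dcoef E D u) (hv : Dcoef E D v) : Dcoef E D (u + v) := by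
  intro h; rw [map_add, Finsupp.add_apply]; exact D.add_mem (hu h) (hv h)

lemma Dcoef_neg {u : R} (hu : Dcoef E D u) : Dcoef E D (-u) := by
  intro h; rw [map_neg, Finsupp.neg_apply]; exact D.neg_mem (hu h)

lemma Dcoef_sub {u v : R} (hu : Dcoef E D u) (hv : Dcoef E D v) : Dcoef E D (u - v) := by
  intro h; rw [map_sub, Finsupp.sub_apply]; exact D.sub_mem (hu h) (hv h)

lemma Dcoef_smul {c : K} (hc : c ∈ D) {v : R} (hv : Dcoef E D v) : Dcoef E D (c • v) := by
  intro h; rw [rep_smul]; exact D.mul_mem hc (hv h)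

lemma Dcoef_sum {ι : Type*} {s : Finset ι} {w : ι → R} (hw : ∀ i ∈ s, Dcoef E D (w i)) :
    Dcoef E D (∑ i ∈ s, w i) := by
  intro h; rw [rep_sum]
  exact Subring.sum_mem D (fun i hi => hw i hi h)

lemma Dcoef_mono (f : Fin N → ℕ) : Dcoef E D (oMono E.x f) := by
  intro h; rw [rep_oMono_apply]
  by_cases hc : h = f <;> simp [hc, D.one_mem, D.zero_mem]

lemma Dcoef_one : Dcoef E D (1 : R) := by
  rw [show (1 : R) = oMono E.x (fun _ => 0) from one_eq_oMono]
  exact Dcoef_mono _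

/- `sOK` closure lemmas -/
lemma sOK_zero (P : (Fin N → ℕ) → Prop) : sOK E P (0 : R) := by intro h hc; simp at hc

lemma sOK_mono' {P Q : (Fin N → ℕ) → Prop} (hPQ : ∀ f, P f → Q f) {v : R}
    (hv : sOK E P v) : sOK E Q v := fun h hh => hPQ h (hv h hh)

lemma sOK_add {P : (Fin N → ℕ) → Prop} {u v : R} (hu : sOK E P u) (hv : sOK E P v) :
    sOK E P (u + v) := by
  intro h hh
  rw [map_add, Finsupp.add_apply] at hh
  by_cases hc : E.pbw.repr u h = 0
  · exact hv h (by intro hc2; rw [hc, hc2] at hh; simp at hh)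
  · exact hu h hc

lemma sOK_neg {P : (Fin N → ℕ) → Prop} {u : R} (hu : sOK E P u) : sOK E P (-u) := by
  intro h hh
  rw [map_neg, Finsupp.neg_apply, neg_ne_zero] at hh
  exact hu h hh

lemma sOK_sub {P : (Fin N → ℕ) → Prop} {u v : R} (hu : sOK E P u) (hv : sOK E P v) :
    sOK E P (u - v) := by
  rw [sub_eq_add_neg]; exact sOK_add hu (sOK_neg hv)

lemma sOK_smul {P : (Fin N → ℕ) → Prop} (c : K) {v : R} (hv : sOK E P v) : sOK E P (c • v) := by
  intro h hh
  rw [rep_smul] at hh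
  exact hv h (right_ne_zero_of_mul hh)

lemma sOK_sum {ι : Type*} {P : (Fin N → ℕ) → Prop} {s : Finset ι} {w : ι → R}
    (hw : ∀ i ∈ s, sOK E P (w i)) : sOK E P (∑ i ∈ s, w i) := by
  intro h hh
  rw [rep_sum] at hh
  obtain ⟨i, hi, hne⟩ := Finset.exists_ne_zero_of_sum_ne_zero hh
  exact hw i hi h hne

lemma sOK_mono_self {P : (Fin N → ℕ) → Prop} (f : Fin N → ℕ) (hf : P f) :
    sOK E P (oMono E.x f) := by
  intro h hh
  rw [rep_oMono_apply] at hh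
  by_cases hc : h = f
  · exact hc ▸ hf
  · simp [hc] at hh

/- membership lemmas -/
lemma algebraMap_mem_DRk {k : ℕ} {c : K} (hc : c ∈ D) :
    algebraMap K R c ∈ DRk K D E.x k :=
  Subring.subset_closure (Or.inl ⟨c, hc, rfl⟩)

lemma x_mem_DRk {k : ℕ} {i : Fin N} (hi : (i:ℕ) < k) : E.x i ∈ DRk K D E.x k :=
  Subring.subset_closure (Or.inr ⟨i, hi, rfl⟩)

lemma smul_mem_DRk {k : ℕ} {c : K} (hc : c ∈ D) {v : R} (hv : v ∈ DRk K D E.x k) :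
    c • v ∈ DRk K D E.x k := by
  rw [Algebra.smul_def]
  exact Subring.mul_mem _ (algebraMap_mem_DRk hc) hv

lemma mono_mem_DRk {k : ℕ} {f : Fin N → ℕ} (hf : SLT k f) : oMono E.x f ∈ DRk K D E.x k := by
  unfold oMono
  apply list_prod_mem
  intro z hz
  obtain ⟨i, _, rfl⟩ := List.mem_map.mp hz
  by_cases hc : f i = 0
  · rw [hc, pow_zero]; exact Subring.one_mem _
  · exact Subring.pow_mem _ (x_mem_DRk (hf i hc)) _

lemma mono_mem_Rk {k : ℕ} {f : Fin N → ℕ} (hf : SLT k f) : oMono E.x f ∈ Rk K E.x k := by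
  unfold oMono
  apply list_prod_mem
  intro z hz
  obtain ⟨i, _, rfl⟩ := List.mem_map.mp hz
  by_cases hc : f i = 0
  · rw [hc, pow_zero]; exact Subalgebra.one_mem _
  · refine Subalgebra.pow_mem _ ?_ _
    apply Algebra.subset_adjoin
    exact ⟨i, hf i hc, rfl⟩

lemma x_mem_Rk {k : ℕ} {i : Fin N} (hi : (i:ℕ) < k) : E.x i ∈ Rk K E.x k := by
  apply Algebra.subset_adjoin
  exact ⟨i, hi, rfl⟩

lemma mem_DRk_of {k : ℕ} {v : R} (h1 : sOK E (SLT k) v) (h2 : Dcoef E D v) :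
    v ∈ DRk K D E.x k := by
  rw [← sum_rep (E := E) v]
  apply Subring.sum_mem
  intro f hf
  have : SLT k f := h1 f (Finsupp.mem_support_iff.mp hf)
  exact smul_mem_DRk (h2 f) (mono_mem_DRk this)

lemma DRk_le_Rk {k : ℕ} {v : R} (hv : v ∈ DRk K D E.x k) : v ∈ Rk K E.x k := by
  induction hv using Subring.closure_induction with
  | mem y hy =>
    rcases hy with ⟨c, _, rfl⟩ | ⟨i, hi, rfl⟩
    · exact Subalgebra.algebraMap_mem _ _
    · exact x_mem_Rk hi
  | one => exact Subalgebra.one_mem _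
  | zero => exact Subalgebra.zero_mem _
  | add a b _ _ ha hb => exact Subalgebra.add_mem _ ha hb
  | neg a _ ha => exact Subalgebra.neg_mem _ ha
  | mul a b _ _ ha hb => exact Subalgebra.mul_mem _ ha hb

lemma DRk_mono {k k' : ℕ} (h : k ≤ k') : (DRk K D E.x k : Set R) ⊆ DRk K D E.x k' := by
  apply Subring.closure_mono
  intro r hr
  rcases hr with hr | ⟨i, hi, rfl⟩
  · exact Or.inl hr
  · exact Or.inr ⟨i, lt_of_lt_of_le hi h, rfl⟩

lemma DRfull_eq : DRfull K D E.x = DRk K D E.x N := by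
  unfold DRfull DRk Dspan
  congr 1
  ext r
  simp only [Set.mem_union, Set.mem_setOf_eq]
  constructor
  · rintro (h | ⟨i, -, rfl⟩)
    · exact Or.inl h
    · exact Or.inr ⟨i, i.isLt, rfl⟩
  · rintro (h | ⟨i, -, rfl⟩)
    · exact Or.inl h
    · exact Or.inr ⟨i, trivial, rfl⟩

end CoreDev

section ThetaDev
variable {K : Type} [Field K] {R : Type} [Ring R] [Algebra K R] {N : ℕ}
variable {E : CGLExt K R N} {D : Subring K}

lemma list_smul_prod {ι : Type*} (l : List ι) (c : ι → K) (w : ι → R) :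
    (l.map (fun i => c i • w i)).prod = (l.map c).prod • (l.map w).prod := by
  induction l with
  | nil => simp
  | cons a l ih =>
    rw [List.map_cons, List.prod_cons, List.map_cons, List.prod_cons, List.map_cons,
      List.prod_cons, ih, smul_mul_smul_comm]

lemma theta_zero (k : Fin N) : E.θ k (0 : R) = 0 := by
  have h0 : (0:R) ∈ Rk K E.x (k:ℕ) := Subalgebra.zero_mem _
  have h := E.θ_linear k 1 0 h0 0 h0
  rw [one_smul, add_zero, one_smul] at h
  exact (left_eq_add.mp h)

lemma theta_smul (k : Fin N) (c : K) {a : R} (ha : a ∈ Rk K E.x (k:ℕ)) :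
    E.θ k (c • a) = c • E.θ k a := by
  have h := E.θ_linear k c a ha 0 (Subalgebra.zero_mem _)
  rw [add_zero, theta_zero, add_zero] at h
  exact h

lemma theta_mono (j : Fin N) (f : Fin N → ℕ) (hf : SLT (j:ℕ) f) :
    E.θ j (oMono E.x f) = ((∏ i, E.lamM j i ^ f i : Kˣ) : K) • oMono E.x f := by
  rw [← E.hElt_theta j _ (mono_mem_Rk hf)]
  unfold oMono
  rw [map_list_prod, List.map_map]
  have key : ∀ i : Fin N,
      (E.act (E.hElt j)) (E.x i ^ f i) = ((E.lamM j i ^ f i : Kˣ) : K) • (E.x i ^ f i) := by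
    intro i
    rw [map_pow]
    by_cases hc : f i = 0
    · simp [hc]
    · rw [E.lamM_spec j i (hf i hc), smul_pow, Units.val_pow_eq_pow_val]
  have : (List.finRange N).map (⇑(E.act (E.hElt j)) ∘ fun i => E.x i ^ f i)
      = (List.finRange N).map (fun i => ((E.lamM j i ^ f i : Kˣ) : K) • (E.x i ^ f i)) :=
    List.map_congr_left (fun i _ => key i)
  rw [this, list_smul_prod]
  congr 1
  rw [show ((∏ i, E.lamM j i ^ f i : Kˣ) : K) = ∏ i, ((E.lamM j i ^ f i : Kˣ) : K) from
    map_prod (Units.coeHom K) _ _]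
  rw [Fin.prod_univ_def]

lemma theta_x (j i : Fin N) (hij : (i:ℕ) < (j:ℕ)) :
    E.θ j (E.x i) = ((E.lamM j i : Kˣ) : K) • E.x i := by
  rw [← E.hElt_theta j _ (x_mem_Rk hij)]
  exact E.lamM_spec j i hij

lemma thetainv_eigen (j : Fin N) {a : R} (ha : a ∈ Rk K E.x (j:ℕ)) (μ : Kˣ)
    (h : E.θ j a = (μ : K) • a) : E.θinv j a = ((μ⁻¹ : Kˣ) : K) • a := by
  have hsm : ((μ⁻¹ : Kˣ) : K) • a ∈ Rk K E.x (j:ℕ) := Subalgebra.smul_mem _ ha _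
  have h2 : E.θ j (((μ⁻¹ : Kˣ) : K) • a) = a := by
    rw [theta_smul _ _ ha, h, smul_smul, ← Units.val_mul, inv_mul_cancel, Units.val_one, one_smul]
  calc E.θinv j a = E.θinv j (E.θ j (((μ⁻¹ : Kˣ) : K) • a)) := by rw [h2]
    _ = ((μ⁻¹ : Kˣ) : K) • a := E.θ_left_inv j _ hsm

def Dunit (D : Subring K) (q : Kˣ) : Prop := ((q : K) ∈ D) ∧ (((q⁻¹ : Kˣ) : K) ∈ D)

lemma Dunit_one : Dunit D (1 : Kˣ) := by
  constructor <;> simp [D.one_mem]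

lemma Dunit_mul {p q : Kˣ} (hp : Dunit D p) (hq : Dunit D q) : Dunit D (p * q) := by
  constructor
  · rw [Units.val_mul]; exact D.mul_mem hp.1 hq.1
  · rw [mul_inv_rev, Units.val_mul]; exact D.mul_mem hq.2 hp.2

lemma Dunit_pow {q : Kˣ} (hq : Dunit D q) (n : ℕ) : Dunit D (q ^ n) := by
  induction n with
  | zero => simpa using Dunit_one
  | succ n ih => rw [pow_succ]; exact Dunit_mul ih hq

lemma Dunit_prod {ι : Type*} (s : Finset ι) (u : ι → Kˣ) (h : ∀ i ∈ s, Dunit D (u i)) :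
    Dunit D (∏ i ∈ s, u i) :=
  Finset.prod_induction u _ (fun _ _ => Dunit_mul) Dunit_one h

lemma Dunit_inv {q : Kˣ} (hq : Dunit D q) : Dunit D q⁻¹ := by
  exact ⟨hq.2, by simpa using hq.1⟩

lemma prodExpand (u v : R) :
    u * v = ∑ f ∈ (E.pbw.repr u).support, ∑ g ∈ (E.pbw.repr v).support,
      (E.pbw.repr u f * E.pbw.repr v g) • (oMono E.x f * oMono E.x g) := by
  conv_lhs => rw [← sum_rep (E := E) u, ← sum_rep (E := E) v]
  rw [Finset.sum_mul]
  apply Finset.sum_congr rfl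
  intro f _
  rw [Finset.mul_sum]
  apply Finset.sum_congr rfl
  intro g _
  rw [smul_mul_smul_comm]

end ThetaDev

section MainDev
variable {K : Type} [Field K] {R : Type} [Ring R] [Algebra K R] {N : ℕ}

/-- Statement B(k): straightening of products of ordered monomials. -/
def Bstat (E : CGLExt K R N) (D : Subring K) (k : ℕ) : Prop :=
  ∀ f g : Fin N → ℕ, SLT k f → SLT k g → ∃ (q : Kˣ) (err : R), Dunit D q ∧
    oMono E.x f * oMono E.x g = (q : K) • oMono E.x (f + g) + err ∧
    Dcoef E D err ∧ sOK E (fun h => revLexLt h (f + g)) err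

/-- Statement A(k): description of `(R_D)_k`. -/
def Astat (E : CGLExt K R N) (D : Subring K) (k : ℕ) : Prop :=
  ∀ v ∈ DRk K D E.x k, Dcoef E D v ∧ sOK E (SLT k) v

variable {E : CGLExt K R N} {D : Subring K}

lemma lam_Dunit (j : Fin N)
    (Hθ : ∀ a ∈ Rk K E.x (j : ℕ), a ∈ DRk K D E.x (j : ℕ) → E.θ j a ∈ DRk K D E.x (j : ℕ))
    (Hθi : ∀ a ∈ Rk K E.x (j : ℕ), a ∈ DRk K D E.x (j : ℕ) → E.θinv j a ∈ DRk K D E.x (j : ℕ))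
    (Aj : Astat E D (j:ℕ)) (i : Fin N) (hij : (i:ℕ) < (j:ℕ)) : Dunit D (E.lamM j i) := by
  have hxRk : E.x i ∈ Rk K E.x (j:ℕ) := x_mem_Rk hij
  have hxD : E.x i ∈ DRk K D E.x (j:ℕ) := x_mem_DRk hij
  have h1 : E.θ j (E.x i) = ((E.lamM j i : Kˣ) : K) • E.x i := theta_x j i hij
  have h2 : E.θinv j (E.x i) = (((E.lamM j i)⁻¹ : Kˣ) : K) • E.x i :=
    thetainv_eigen j hxRk _ h1
  have hco : ∀ c : K, E.pbw.repr (c • E.x i) (mE i 1) = c := by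
    intro c
    rw [rep_smul, show E.x i = oMono E.x (mE i 1) from x_eq_oMono i, rep_oMono_apply,
      if_pos rfl, mul_one]
  constructor
  · have hmem := Hθ _ hxRk hxD
    rw [h1] at hmem
    have := (Aj _ hmem).1 (mE i 1)
    rwa [hco] at this
  · have hmem := Hθi _ hxRk hxD
    rw [h2] at hmem
    have := (Aj _ hmem).1 (mE i 1)
    rwa [hco] at this

lemma Bprod {k : ℕ} (hB : Bstat E D k) {f g : Fin N → ℕ} (hf : SLT k f) (hg : SLT k g) :
    Dcoef E D (oMono E.x f * oMono E.x g) ∧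
      sOK E (fun w => rle w (f + g)) (oMono E.x f * oMono E.x g) := by
  obtain ⟨q, err, hq, heq, hDc, hsok⟩ := hB f g hf hg
  rw [heq]
  constructor
  · exact Dcoef_add (Dcoef_smul hq.1 (Dcoef_mono _)) hDc
  · apply sOK_add
    · exact sOK_smul _ (sOK_mono_self _ (rle_refl _))
    · exact sOK_mono' (fun w hw => Or.inr hw) hsok

lemma mul_AOK {k : ℕ} (hB : Bstat E D k) {a b : R}
    (ha : Dcoef E D a ∧ sOK E (SLT k) a) (hb : Dcoef E D b ∧ sOK E (SLT k) b) :
    Dcoef E D (a * b) ∧ sOK E (SLT k) (a * b) := by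
  rw [prodExpand (E := E) a b]
  constructor
  · apply Dcoef_sum
    intro f hf
    apply Dcoef_sum
    intro g hg
    have hp := Bprod hB (ha.2 f (Finsupp.mem_support_iff.mp hf))
      (hb.2 g (Finsupp.mem_support_iff.mp hg))
    exact Dcoef_smul (D.mul_mem (ha.1 f) (hb.1 g)) hp.1
  · apply sOK_sum
    intro f hf
    apply sOK_sum
    intro g hg
    have hsf := ha.2 f (Finsupp.mem_support_iff.mp hf)
    have hsg := hb.2 g (Finsupp.mem_support_iff.mp hg)
    have hp := Bprod hB hsf hsg
    apply sOK_smul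
    exact sOK_mono' (fun w hw => rle_SLT hw (SLT_add hsf hsg)) hp.2

lemma mul_sOK {k : ℕ} (hB : Bstat E D k) {a b : R}
    (ha : sOK E (SLT k) a) (hb : sOK E (SLT k) b) : sOK E (SLT k) (a * b) := by
  rw [prodExpand (E := E) a b]
  apply sOK_sum
  intro f hf
  apply sOK_sum
  intro g hg
  have hsf := ha f (Finsupp.mem_support_iff.mp hf)
  have hsg := hb g (Finsupp.mem_support_iff.mp hg)
  have hp := Bprod hB hsf hsg
  apply sOK_smul
  exact sOK_mono' (fun w hw => rle_SLT hw (SLT_add hsf hsg)) hp.2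

lemma core (j : Fin N)
    (Hθ : ∀ a ∈ Rk K E.x (j : ℕ), a ∈ DRk K D E.x (j : ℕ) → E.θ j a ∈ DRk K D E.x (j : ℕ))
    (Hθi : ∀ a ∈ Rk K E.x (j : ℕ), a ∈ DRk K D E.x (j : ℕ) → E.θinv j a ∈ DRk K D E.x (j : ℕ))
    (Hδ : ∀ a ∈ Rk K E.x (j : ℕ), a ∈ DRk K D E.x (j : ℕ) → E.δ j a ∈ DRk K D E.x (j : ℕ))
    (Aj : Astat E D (j:ℕ)) (g : Fin N → ℕ) :
    ∃ (q : Kˣ) (err : R), Dunit D q ∧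
      E.x j * oMono E.x g = (q : K) • oMono E.x (g + mE j 1) + err ∧
      Dcoef E D err ∧ sOK E (fun h => revLexLt h (g + mE j 1)) err := by
  have hgl : SLT (j:ℕ) (lowF j g) := lowF_SLT j g
  have haRk : oMono E.x (lowF j g) ∈ Rk K E.x (j:ℕ) := mono_mem_Rk hgl
  have haD : oMono E.x (lowF j g) ∈ DRk K D E.x (j:ℕ) := mono_mem_DRk hgl
  have hore := E.ore j _ haRk
  have hθm := theta_mono (E := E) j (lowF j g) hgl
  set q : Kˣ := ∏ i, E.lamM j i ^ (lowF j g) i with hqdef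
  have hq : Dunit D q := by
    apply Dunit_prod
    intro i _
    by_cases hc : lowF j g i = 0
    · rw [hc, pow_zero]; exact Dunit_one
    · exact Dunit_pow (lam_Dunit j Hθ Hθi Aj i (hgl i hc)) _
  set dl := E.δ j (oMono E.x (lowF j g)) with hdldef
  have hdlD : dl ∈ DRk K D E.x (j:ℕ) := Hδ _ haRk haD
  have hdlDc : Dcoef E D dl := (Aj _ hdlD).1
  have hdls : sOK E (SLT (j:ℕ)) dl := (Aj _ hdlD).2
  set u : Fin N → ℕ := mE j (g j) + highF j g with hudef
  have humono : oMono E.x u = E.x j ^ (g j) * oMono E.x (highF j g) := by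
    rw [oMono_split E.x ((j:ℕ)+1) (mE j (g j)) (highF j g)
      (fun i hi => by
        have h2 : i ≠ j := by rw [ne_eq, Fin.ext_iff]; omega
        simp [mE, h2])
      (fun i hi => by
        have h1 : ¬ (j < i) := by rw [Fin.lt_def]; omega
        simp [highF, h1]),
      oMono_single E.x j (g j) (mE j (g j)) (fun _ => rfl)]
  -- the target monomial
  have htarget : oMono E.x (g + mE j 1)
      = oMono E.x (lowF j g) * E.x j ^ (g j + 1) * oMono E.x (highF j g) := by
    have hl : lowF j (g + mE j 1) = lowF j g := by
      funext i
      by_cases h : i < j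
      · have : i ≠ j := Fin.ne_of_lt h
        simp [lowF, h, mE, this]
      · simp [lowF, h]
    have hh : highF j (g + mE j 1) = highF j g := by
      funext i
      by_cases h : j < i
      · have : i ≠ j := (Fin.ne_of_lt h).symm
        simp [highF, h, mE, this]
      · simp [highF, h]
    have hj : (g + mE j 1) j = g j + 1 := by simp [mE]
    rw [oMono_decomp E.x j (g + mE j 1), hl, hh, hj]
  refine ⟨q, dl * oMono E.x u, hq, ?_, ?_, ?_⟩
  · -- main equation
    rw [oMono_decomp E.x j g, htarget]
    have h1 : E.x j * (oMono E.x (lowF j g) * E.x j ^ (g j) * oMono E.x (highF j g))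
        = (E.x j * oMono E.x (lowF j g)) * (E.x j ^ (g j) * oMono E.x (highF j g)) := by
      noncomm_ring
    rw [h1, hore, hθm, add_mul, humono]
    congr 1
    rw [smul_mul_assoc, smul_mul_assoc]
    congr 1
    have : E.x j ^ (g j + 1) = E.x j * E.x j ^ (g j) := by rw [pow_succ']
    rw [this]
    noncomm_ring
  · -- Dcoef of err
    have herr : dl * oMono E.x u
        = ∑ h ∈ (E.pbw.repr dl).support, (E.pbw.repr dl) h • oMono E.x (h + u) := by
      conv_lhs => rw [← sum_rep (E := E) dl]
      rw [Finset.sum_mul]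
      apply Finset.sum_congr rfl
      intro h hh
      rw [smul_mul_assoc, oMono_split E.x (j:ℕ) h u
        (fun i hi => by
          by_contra hc
          exact absurd (hdls h (Finsupp.mem_support_iff.mp hh) i hc) (by omega))
        (fun i hi => by
          have h2 : i ≠ j := by rw [ne_eq, Fin.ext_iff]; omega
          have h1 : ¬ (j < i) := by rw [Fin.lt_def]; omega
          simp [hudef, mE, highF, h1, h2, Pi.add_apply])]
    rw [herr]
    apply Dcoef_sum
    intro h _
    exact Dcoef_smul (hdlDc h) (Dcoef_mono _)
  · -- sOK of err
    have herr : dl * oMono E.x u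
        = ∑ h ∈ (E.pbw.repr dl).support, (E.pbw.repr dl) h • oMono E.x (h + u) := by
      conv_lhs => rw [← sum_rep (E := E) dl]
      rw [Finset.sum_mul]
      apply Finset.sum_congr rfl
      intro h hh
      rw [smul_mul_assoc, oMono_split E.x (j:ℕ) h u
        (fun i hi => by
          by_contra hc
          exact absurd (hdls h (Finsupp.mem_support_iff.mp hh) i hc) (by omega))
        (fun i hi => by
          have h2 : i ≠ j := by rw [ne_eq, Fin.ext_iff]; omega
          have h1 : ¬ (j < i) := by rw [Fin.lt_def]; omega
          simp [hudef, mE, highF, h1, h2, Pi.add_apply])]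
    rw [herr]
    apply sOK_sum
    intro h hh
    apply sOK_smul
    apply sOK_mono_self
    -- revLexLt (h + u) (g + mE j 1)
    have hhs : SLT (j:ℕ) h := hdls h (Finsupp.mem_support_iff.mp hh)
    refine ⟨j, ?_, ?_⟩
    · have h1 : h j = 0 := by
        by_contra hc
        exact absurd (hhs j hc) (by omega)
      have h2 : highF j g j = 0 := by simp [highF]
      simp [hudef, Pi.add_apply, mE, h1, h2]
    · intro m hm
      have h1 : h m = 0 := by
        by_contra hc
        have := hhs m hc
        have := Fin.lt_def.mp hm
        omega
      have h2 : m ≠ j := (Fin.ne_of_lt hm).symm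
      have h3 : j < m := hm
      simp [hudef, Pi.add_apply, mE, highF, h1, h2, h3]

end MainDev

section MainInd
variable {K : Type} [Field K] {R : Type} [Ring R] [Algebra K R] {N : ℕ}
variable {E : CGLExt K R N} {D : Subring K}

lemma rlt_of_rle_of_rlt {N' : ℕ} {f g h : Fin N' → ℕ} :
    rle f g → revLexLt g h → revLexLt f h := by
  rintro (rfl | h1) h2
  · exact h2
  · exact rlt_trans h1 h2

theorem mainAB
    (Hθ : ∀ k : Fin N, ∀ a ∈ Rk K E.x (k : ℕ), a ∈ DRk K D E.x (k : ℕ) →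
      E.θ k a ∈ DRk K D E.x (k : ℕ))
    (Hθi : ∀ k : Fin N, ∀ a ∈ Rk K E.x (k : ℕ), a ∈ DRk K D E.x (k : ℕ) →
      E.θinv k a ∈ DRk K D E.x (k : ℕ))
    (Hδ : ∀ k : Fin N, ∀ a ∈ Rk K E.x (k : ℕ), a ∈ DRk K D E.x (k : ℕ) →
      E.δ k a ∈ DRk K D E.x (k : ℕ)) :
    ∀ k : ℕ, Astat E D k ∧ Bstat E D k := by
  intro k
  induction k using Nat.strong_induction_on with
  | _ k IH =>
  have hB : Bstat E D k := by
    have Bmain : ∀ n : ℕ, ∀ f g : Fin N → ℕ, (∑ i, f i) = n → SLT k f → SLT k g →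
        ∃ (q : Kˣ) (err : R), Dunit D q ∧
          oMono E.x f * oMono E.x g = (q : K) • oMono E.x (f + g) + err ∧
          Dcoef E D err ∧ sOK E (fun h => revLexLt h (f + g)) err := by
      intro n
      induction n using Nat.strong_induction_on with
      | _ n IHn =>
      intro f g hsum hf hg
      rcases Nat.eq_zero_or_pos n with hn0 | hnpos
      · have hf0 : ∀ i, f i = 0 := by
          intro i
          exact Finset.sum_eq_zero_iff.mp (hsum.trans hn0) i (Finset.mem_univ i)
        have hfg : f + g = g := funext fun i => by rw [Pi.add_apply, hf0, zero_add]
        refine ⟨1, 0, Dunit_one, ?_, Dcoef_zero, sOK_zero _⟩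
        rw [oMono_eq_one E.x f hf0, one_mul, hfg, Units.val_one, one_smul, add_zero]
      · have hne : (Finset.univ.filter (fun i : Fin N => f i ≠ 0)).Nonempty := by
          by_contra hc
          rw [Finset.not_nonempty_iff_eq_empty] at hc
          have hall : ∀ i ∈ Finset.univ, f i = 0 := by
            intro i _
            by_contra hci
            exact absurd (Finset.mem_filter.mpr ⟨Finset.mem_univ i, hci⟩)
              (hc ▸ Finset.notMem_empty i)
          have : (∑ i, f i) = 0 := Finset.sum_eq_zero hall
          omega
        obtain ⟨j, hjmem, hjmax⟩ := Finset.exists_max_image _ (fun i : Fin N => (i:ℕ)) hne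
        have hfj : f j ≠ 0 := (Finset.mem_filter.mp hjmem).2
        have htop : ∀ i, f i ≠ 0 → (i:ℕ) ≤ (j:ℕ) := fun i hi =>
          hjmax i (Finset.mem_filter.mpr ⟨Finset.mem_univ i, hi⟩)
        have hjk : (j:ℕ) < k := hf j hfj
        have hSLTe : SLT k (mE j 1) := by
          intro m hm
          have : m = j := by
            by_contra hc
            simp [mE, hc] at hm
          exact this ▸ hjk
        set f' : Fin N → ℕ := fun i => if i = j then f j - 1 else f i with hf'def
        have hf'1 : f = f' + mE j 1 := by
          funext i
          by_cases hc : i = j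
          · subst hc; simp [hf'def, mE]; omega
          · simp [hf'def, mE, hc]
        have hf's : SLT k f' := by
          intro i hi
          by_cases hc : i = j
          · subst hc; exact hjk
          · exact hf i (by simpa [hf'def, hc] using hi)
        have hsum' : (∑ i, f' i) < n := by
          have h2 : (∑ i, mE j 1 i) = 1 := by simp [mE]
          have h1 : n = (∑ i, f' i) + 1 := by
            rw [← hsum, hf'1]
            rw [show (∑ i, (f' + mE j 1) i) = (∑ i, (f' i + mE j 1 i)) from rfl]
            rw [Finset.sum_add_distrib, h2]
          omega
        have hhigh0 : ∀ i, highF j f i = 0 := by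
          intro i
          by_cases hc : j < i
          · have hfi : f i = 0 := by
              by_contra hcc
              have h5 := htop i hcc
              have h6 := Fin.lt_def.mp hc
              omega
            simp [highF, hc, hfi]
          · simp [highF, hc]
        have hhigh0' : ∀ i, highF j f' i = 0 := by
          intro i
          by_cases hc : j < i
          · have hij : i ≠ j := (Fin.ne_of_lt hc).symm
            have hfi : f i = 0 := by
              by_contra hcc
              have h5 := htop i hcc
              have h6 := Fin.lt_def.mp hc
              omega
            simp [highF, hc, hf'def, hij, hfi]
          · simp [highF, hc]
        have hlow : lowF j f' = lowF j f := by
          funext i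
          by_cases hc : i < j
          · have : i ≠ j := Fin.ne_of_lt hc
            simp [lowF, hc, hf'def, this]
          · simp [lowF, hc]
        have hf'j : f' j = f j - 1 := by simp [hf'def]
        have hmono : oMono E.x f = oMono E.x f' * E.x j := by
          rw [oMono_decomp E.x j f, oMono_decomp E.x j f',
            oMono_eq_one E.x _ hhigh0, oMono_eq_one E.x _ hhigh0', hlow, hf'j,
            mul_one, mul_one, mul_assoc, ← pow_succ]
          congr 2
          omega
        obtain ⟨q1, err1, hq1, hcore, hDc1, hsok1⟩ :=
          core j (Hθ j) (Hθi j) (Hδ j) (IH (j:ℕ) hjk).1 g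
        have hstep1 : oMono E.x f * oMono E.x g
            = (q1:K) • (oMono E.x f' * oMono E.x (g + mE j 1)) + oMono E.x f' * err1 := by
          rw [hmono, mul_assoc, hcore, mul_add, mul_smul_comm]
        obtain ⟨q2, err2, hq2, heq2, hDc2, hsok2⟩ :=
          IHn _ hsum' f' (g + mE j 1) rfl hf's (SLT_add hg hSLTe)
        have hexp : f' + (g + mE j 1) = f + g := by
          rw [hf'1]
          funext i
          simp only [Pi.add_apply]
          omega
        rw [hexp] at heq2 hsok2
        have herr1exp : oMono E.x f' * err1
            = ∑ h ∈ (E.pbw.repr err1).support,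
                (E.pbw.repr err1) h • (oMono E.x f' * oMono E.x h) := by
          conv_lhs => rw [← sum_rep (E := E) err1]
          rw [Finset.mul_sum]
          exact Finset.sum_congr rfl (fun h _ => mul_smul_comm _ _ _)
        have hterm : ∀ h ∈ (E.pbw.repr err1).support,
            Dcoef E D (oMono E.x f' * oMono E.x h) ∧
              sOK E (fun w => rle w (f' + h)) (oMono E.x f' * oMono E.x h) := by
          intro h hh
          have hrh : revLexLt h (g + mE j 1) := hsok1 h (Finsupp.mem_support_iff.mp hh)
          have hsh : SLT k h := rlt_SLT hrh (SLT_add hg hSLTe)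
          obtain ⟨q3, err3, hq3, heq3, hDc3, hsok3⟩ := IHn _ hsum' f' h rfl hf's hsh
          rw [heq3]
          exact ⟨Dcoef_add (Dcoef_smul hq3.1 (Dcoef_mono _)) hDc3,
            sOK_add (sOK_smul _ (sOK_mono_self _ (rle_refl _)))
              (sOK_mono' (fun w hw => Or.inr hw) hsok3)⟩
        refine ⟨q1 * q2, (q1:K) • err2 + oMono E.x f' * err1, Dunit_mul hq1 hq2, ?_, ?_, ?_⟩
        · rw [hstep1, heq2, smul_add, smul_smul, ← Units.val_mul, add_assoc]
        · refine Dcoef_add (Dcoef_smul hq1.1 hDc2) ?_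
          rw [herr1exp]
          exact Dcoef_sum (fun h hh => Dcoef_smul (hDc1 h) (hterm h hh).1)
        · apply sOK_add
          · exact sOK_smul _ hsok2
          · rw [herr1exp]
            apply sOK_sum
            intro h hh
            apply sOK_smul
            have hrh : revLexLt h (g + mE j 1) := hsok1 h (Finsupp.mem_support_iff.mp hh)
            have hlt : revLexLt (f' + h) (f + g) := by
              rw [← hexp]
              exact rlt_add_left _ hrh
            exact sOK_mono' (fun w hw => rlt_of_rle_of_rlt hw hlt) (hterm h hh).2
    intro f g hf hg
    exact Bmain _ f g rfl hf hg
  refine ⟨?_, hB⟩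
  intro v hv
  induction hv using Subring.closure_induction with
  | mem y hy =>
    rcases hy with ⟨c, hc, rfl⟩ | ⟨i, hi, rfl⟩
    · rw [algebraMap_eq_smul_one (R := R) c,
        show (1:R) = oMono E.x (fun _ => 0) from one_eq_oMono]
      exact ⟨Dcoef_smul hc (Dcoef_mono _), sOK_smul _ (sOK_mono_self _ (fun m hm => by
        simp at hm))⟩
    · rw [show E.x i = oMono E.x (mE i 1) from x_eq_oMono i]
      refine ⟨Dcoef_mono _, sOK_mono_self _ ?_⟩
      intro m hm
      have : m = i := by
        by_contra hc
        simp [mE, hc] at hm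
      exact this ▸ hi
  | one =>
    rw [show (1:R) = oMono E.x (fun _ => 0) from one_eq_oMono]
    exact ⟨Dcoef_mono _, sOK_mono_self _ (fun m hm => by simp at hm)⟩
  | zero => exact ⟨Dcoef_zero, sOK_zero _⟩
  | add a b _ _ ha hb => exact ⟨Dcoef_add ha.1 hb.1, sOK_add ha.2 hb.2⟩
  | neg a _ ha => exact ⟨Dcoef_neg ha.1, sOK_neg ha.2⟩
  | mul a b _ _ ha hb => exact mul_AOK hB ha hb

end MainInd

section Conseq
variable {K : Type} [Field K] {R : Type} [Ring R] [Algebra K R] {N : ℕ}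
variable {E : CGLExt K R N} {D : Subring K}

lemma rle_antisymm {N' : ℕ} {f g : Fin N' → ℕ} (h1 : rle f g) (h2 : rle g f) : f = g := by
  rcases h1 with rfl | h1
  · rfl
  rcases h2 with rfl | h2
  · rfl
  · exact absurd (rlt_trans h1 h2) (rlt_irrefl f)

lemma Rk_sOK {k : ℕ} (hBk : Bstat E D k) {v : R} (hv : v ∈ Rk K E.x k) :
    sOK E (SLT k) v := by
  induction hv using Algebra.adjoin_induction with
  | mem y hy =>
    obtain ⟨i, hi, rfl⟩ := hy
    rw [show E.x i = oMono E.x (mE i 1) from x_eq_oMono i]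
    apply sOK_mono_self
    intro m hm
    have : m = i := by
      by_contra hc
      simp [mE, hc] at hm
    exact this ▸ hi
  | algebraMap c =>
    rw [algebraMap_eq_smul_one (R := R) c,
      show (1:R) = oMono E.x (fun _ => 0) from one_eq_oMono]
    exact sOK_smul _ (sOK_mono_self _ (fun m hm => by simp at hm))
  | add a b _ _ ha hb => exact sOK_add ha hb
  | mul a b _ _ ha hb => exact mul_sOK hBk ha hb

lemma mono_mul_supp (hBN : Bstat E D N) (f g : Fin N → ℕ) :
    ∀ h, E.pbw.repr (oMono E.x f * oMono E.x g) h ≠ 0 → rle h (f + g) := by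
  obtain ⟨q, err, hq, heq, hDc, hsok⟩ := hBN f g (SLT_N f) (SLT_N g)
  intro h hh
  rw [heq, rep_add, rep_smul, rep_oMono_apply] at hh
  by_cases hc : h = f + g
  · exact Or.inl hc
  · rw [if_neg hc, mul_zero, zero_add] at hh
    exact Or.inr (hsok h hh)

lemma mono_mul_lc (hBN : Bstat E D N) (f g : Fin N → ℕ) :
    ∃ q : Kˣ, Dunit D q ∧ E.pbw.repr (oMono E.x f * oMono E.x g) (f + g) = (q : K) := by
  obtain ⟨q, err, hq, heq, hDc, hsok⟩ := hBN f g (SLT_N f) (SLT_N g)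
  refine ⟨q, hq, ?_⟩
  rw [heq, rep_add, rep_smul, rep_oMono_apply, if_pos rfl, mul_one]
  have herr : E.pbw.repr err (f + g) = 0 := by
    by_contra hc
    exact absurd (hsok _ hc) (rlt_irrefl _)
  rw [herr, add_zero]

lemma lc_mul (hBN : Bstat E D N) (u v : R) (F G : Fin N → ℕ)
    (hu : ∀ h, E.pbw.repr u h ≠ 0 → rle h F) (hv : ∀ h, E.pbw.repr v h ≠ 0 → rle h G) :
    (∃ q : Kˣ, Dunit D q ∧
      E.pbw.repr (u * v) (F + G) = (q : K) * (E.pbw.repr u F * E.pbw.repr v G)) ∧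
    (∀ h, E.pbw.repr (u * v) h ≠ 0 → rle h (F + G)) := by
  have hrep : ∀ h, E.pbw.repr (u * v) h
      = ∑ f ∈ (E.pbw.repr u).support, ∑ g ∈ (E.pbw.repr v).support,
          (E.pbw.repr u f * E.pbw.repr v g) * E.pbw.repr (oMono E.x f * oMono E.x g) h := by
    intro h
    rw [show u * v = _ from prodExpand (E := E) u v, rep_sum]
    apply Finset.sum_congr rfl
    intro f _
    rw [rep_sum]
    apply Finset.sum_congr rfl
    intro g _
    rw [rep_smul]
  constructor
  · obtain ⟨q, hq, hqval⟩ := mono_mul_lc hBN F G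
    refine ⟨q, hq, ?_⟩
    rw [hrep]
    have hinner : ∀ f ∈ (E.pbw.repr u).support,
        (∑ g ∈ (E.pbw.repr v).support,
          (E.pbw.repr u f * E.pbw.repr v g) * E.pbw.repr (oMono E.x f * oMono E.x g) (F + G))
        = if f = F then (E.pbw.repr u F * E.pbw.repr v G) *
            E.pbw.repr (oMono E.x F * oMono E.x G) (F + G) else 0 := by
      intro f hf
      have hrlef : rle f F := hu f (Finsupp.mem_support_iff.mp hf)
      have hz0 : ∀ f' g', rle f' F → rle g' G → (f' ≠ F ∨ g' ≠ G) →
          E.pbw.repr (oMono E.x f' * oMono E.x g') (F + G) = 0 := by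
        intro f' g' hrlef' hrleg' hne
        by_contra hc
        have h1 := mono_mul_supp hBN f' g' _ hc
        have h2 : rle (f' + g') (F + G) := rle_add hrlef' hrleg'
        have h3 : f' + g' = F + G := rle_antisymm h2 (by
          rcases h1 with he | h1
          · exact he ▸ rle_refl _
          · exact absurd (rlt_of_rlt_of_rle h1 h2) (rlt_irrefl _))
        obtain ⟨he1, he2⟩ := rle_add_eq hrlef' hrleg' h3
        rcases hne with hne | hne
        · exact hne he1
        · exact hne he2
      by_cases hfF : f = F
      · rw [if_pos hfF, hfF]
        apply Finset.sum_eq_single G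
        · intro g hg hgG
          rw [hz0 F g (rle_refl F) (hv g (Finsupp.mem_support_iff.mp hg)) (Or.inr hgG),
            mul_zero]
        · intro hG
          rw [Finsupp.notMem_support_iff.mp hG, mul_zero, zero_mul]
      · rw [if_neg hfF]
        apply Finset.sum_eq_zero
        intro g hg
        rw [hz0 f g hrlef (hv g (Finsupp.mem_support_iff.mp hg)) (Or.inl hfF), mul_zero]
    rw [Finset.sum_congr rfl hinner, Finset.sum_ite_eq' (E.pbw.repr u).support F _]
    by_cases hF : F ∈ (E.pbw.repr u).support
    · rw [if_pos hF, hqval]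
      ring
    · rw [if_neg hF, Finsupp.notMem_support_iff.mp hF]
      ring
  · intro h hh
    rw [hrep] at hh
    obtain ⟨f, hf, hne⟩ := Finset.exists_ne_zero_of_sum_ne_zero hh
    obtain ⟨g, hg, hne2⟩ := Finset.exists_ne_zero_of_sum_ne_zero hne
    have h1 : E.pbw.repr (oMono E.x f * oMono E.x g) h ≠ 0 := by
      intro hc
      rw [hc, mul_zero] at hne2
      exact hne2 rfl
    exact rle_trans (mono_mul_supp hBN f g _ h1)
      (rle_add (hu f (Finsupp.mem_support_iff.mp hf)) (hv g (Finsupp.mem_support_iff.mp hg)))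

lemma maxRep (u : R) (hu : u ≠ 0) :
    ∃ F, E.pbw.repr u F ≠ 0 ∧ ∀ h, E.pbw.repr u h ≠ 0 → rle h F := by
  have hne : (E.pbw.repr u).support.Nonempty := by
    rw [Finsupp.support_nonempty_iff]
    intro hc
    exact hu ((LinearEquiv.map_eq_zero_iff E.pbw.repr).mp hc)
  obtain ⟨F, hF, hmax⟩ := exists_rle_max _ hne
  exact ⟨F, Finsupp.mem_support_iff.mp hF, fun h hh => hmax h (Finsupp.mem_support_iff.mpr hh)⟩

lemma dom (hBN : Bstat E D N) {u v : R} (hu : u ≠ 0) (hv : v ≠ 0) : u * v ≠ 0 := by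
  obtain ⟨F, hF, hFm⟩ := maxRep (E := E) u hu
  obtain ⟨G, hG, hGm⟩ := maxRep (E := E) v hv
  obtain ⟨⟨q, hq, hco⟩, -⟩ := lc_mul hBN u v F G hFm hGm
  intro hc
  rw [hc, map_zero, Finsupp.coe_zero, Pi.zero_apply] at hco
  exact (mul_ne_zero (Units.ne_zero q) (mul_ne_zero hF hG)) hco.symm

end Conseq

section YDev
variable {K : Type} [Field K] {R : Type} [Ring R] [Algebra K R] {N : ℕ}
variable {E : CGLExt K R N} {D : Subring K} {Y : YSystem E}

lemma ypk (k : Fin N) : IsPrimeElemIn (Rk K E.x ((k:ℕ)+1)) (Y.y k) := by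
  apply Y.y_prime k k (le_refl _)
  intro l hl
  have hmem := Finset.mem_of_min hl
  simp only [Finset.mem_filter] at hmem
  exact hmem.2.1

lemma y_ne (k : Fin N) : Y.y k ≠ 0 := (ypk (Y := Y) k).1

lemma y_memRk (k : Fin N) : Y.y k ∈ Rk K E.x ((k:ℕ)+1) := (ypk (Y := Y) k).2.1

lemma y_normK (k : Fin N) : IsNormalIn (Rk K E.x ((k:ℕ)+1)) (Y.y k) :=
  (ypk (Y := Y) k).2.2.1

lemma y_sOK (HB : ∀ m : ℕ, Bstat E D m) (k : Fin N) :
    sOK E (SLT ((k:ℕ)+1)) (Y.y k) := Rk_sOK (HB _) (y_memRk k)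

lemma addE_inj {k : Fin N} {a b : Fin N → ℕ} (hab : a + mE k 1 = b + mE k 1) : a = b := by
  funext i
  have h2 := congrFun hab i
  simp only [Pi.add_apply] at h2
  omega

lemma lty (HB : ∀ m : ℕ, Bstat E D m) :
    ∀ k : Fin N, ∃ F : Fin N → ℕ, E.pbw.repr (Y.y k) F = 1 ∧
      (∀ h, E.pbw.repr (Y.y k) h ≠ 0 → rle h F) := by
  suffices hmain : ∀ n : ℕ, ∀ k : Fin N, (k:ℕ) < n → ∃ F : Fin N → ℕ,
      E.pbw.repr (Y.y k) F = 1 ∧ (∀ h, E.pbw.repr (Y.y k) h ≠ 0 → rle h F) by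
    intro k
    exact hmain ((k:ℕ)+1) k (by omega)
  intro n
  induction n with
  | zero => intro k hk; omega
  | succ n IHn =>
    intro k hk
    rcases Nat.lt_or_ge (k:ℕ) n with hlt | hge
    · exact IHn k hlt
    rcases hpred : predIdx Y.η k with - | j
    · -- base case : y k = x k
      have hyb := Y.y_base k hpred
      refine ⟨mE k 1, ?_, ?_⟩
      · rw [hyb, show E.x k = oMono E.x (mE k 1) from x_eq_oMono k, rep_oMono_apply,
          if_pos rfl]
      · intro h hh
        rw [hyb, show E.x k = oMono E.x (mE k 1) from x_eq_oMono k, rep_oMono_apply] at hh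
        by_cases hc : h = mE k 1
        · exact hc ▸ rle_refl _
        · rw [if_neg hc] at hh; exact absurd rfl hh
    · -- recursive case : y k = y j * x k - c k
      have hyrec : Y.y k = Y.y j * E.x k - Y.c k := Y.y_rec k j hpred
      have hjmem := Finset.mem_of_max hpred
      simp only [Finset.mem_filter] at hjmem
      have hjk : (j:ℕ) < (k:ℕ) := Fin.lt_def.mp hjmem.2.1
      obtain ⟨Fj, hFj1, hFjmax⟩ := IHn j (by omega)
      have hsj : sOK E (SLT ((j:ℕ)+1)) (Y.y j) := Rk_sOK (HB _) (y_memRk j)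
      have hsc : sOK E (SLT (k:ℕ)) (Y.c k) := Rk_sOK (HB _) (Y.c_mem k)
      have hFjk : Fj k = 0 := by
        by_contra hc
        have h1 := hsj Fj (by rw [hFj1]; exact one_ne_zero) k hc
        omega
      have hwexp : Y.y j * E.x k = ∑ h ∈ (E.pbw.repr (Y.y j)).support,
          (E.pbw.repr (Y.y j)) h • oMono E.x (h + mE k 1) := by
        conv_lhs => rw [← sum_rep (E := E) (Y.y j)]
        rw [Finset.sum_mul]
        apply Finset.sum_congr rfl
        intro h hh
        rw [smul_mul_assoc, show E.x k = oMono E.x (mE k 1) from x_eq_oMono k,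
          ← oMono_split E.x (k:ℕ) h (mE k 1)
            (fun i hi => by
              by_contra hc
              have := hsj h (Finsupp.mem_support_iff.mp hh) i hc
              omega)
            (fun i hi => by
              have : i ≠ k := by rw [ne_eq, Fin.ext_iff]; omega
              simp [mE, this])]
      have hrepw : ∀ h', E.pbw.repr (Y.y j * E.x k) h'
          = ∑ h ∈ (E.pbw.repr (Y.y j)).support,
              (E.pbw.repr (Y.y j)) h * (if h' = h + mE k 1 then 1 else 0) := by
        intro h'
        rw [hwexp, rep_sum]
        apply Finset.sum_congr rfl
        intro h _
        rw [rep_smul, rep_oMono_apply]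
      refine ⟨Fj + mE k 1, ?_, ?_⟩
      · rw [hyrec, rep_sub]
        have hc0 : E.pbw.repr (Y.c k) (Fj + mE k 1) = 0 := by
          by_contra hc
          have h1 := hsc _ hc k (by simp [Pi.add_apply, mE, hFjk])
          omega
        have hw1 : E.pbw.repr (Y.y j * E.x k) (Fj + mE k 1) = 1 := by
          rw [hrepw]
          rw [Finset.sum_eq_single Fj]
          · rw [if_pos rfl, hFj1, mul_one]
          · intro h hh hne
            rw [if_neg (fun hc => hne (addE_inj hc).symm), mul_zero]
          · intro hne
            rw [Finsupp.notMem_support_iff.mp hne, zero_mul]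
        rw [hw1, hc0, sub_zero]
      · intro h hh
        rw [hyrec, rep_sub] at hh
        have hor : E.pbw.repr (Y.y j * E.x k) h ≠ 0 ∨ E.pbw.repr (Y.c k) h ≠ 0 := by
          by_contra hc
          push_neg at hc
          rw [hc.1, hc.2, sub_zero] at hh
          exact hh rfl
        rcases hor with hcase | hcase
        · rw [hrepw] at hcase
          obtain ⟨h0, hh0, hne0⟩ := Finset.exists_ne_zero_of_sum_ne_zero hcase
          have heq : h = h0 + mE k 1 := by
            by_contra hc
            rw [if_neg hc, mul_zero] at hne0
            exact hne0 rfl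
          have hrle : rle h0 Fj := hFjmax h0 (Finsupp.mem_support_iff.mp hh0)
          exact heq ▸ rle_add hrle (rle_refl (mE k 1))
        · have hsh := hsc h hcase
          refine Or.inr ⟨k, ?_, ?_⟩
          · have h1 : h k = 0 := by
              by_contra hc
              have := hsh k hc
              omega
            simp [h1, Pi.add_apply, mE, hFjk]
          · intro m hm
            have hmk : (k:ℕ) < (m:ℕ) := Fin.lt_def.mp hm
            have h1 : h m = 0 := by
              by_contra hc
              have := hsh m hc
              omega
            have h2 : Fj m = 0 := by
              by_contra hc
              have := hsj Fj (by rw [hFj1]; exact one_ne_zero) m hc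
              omega
            have h3 : m ≠ k := by rw [ne_eq, Fin.ext_iff]; omega
            simp [h1, h2, Pi.add_apply, mE, h3]

lemma y_Dcoef (HAN : Astat E D N) (k : Fin N) (hyk : Y.y k ∈ DRfull K D E.x) :
    Dcoef E D (Y.y k) := by
  apply (HAN _ _).1
  rw [← DRfull_eq (E := E) (D := D)]
  exact hyk

lemma y_memDRk (HB : ∀ m : ℕ, Bstat E D m) (HAN : Astat E D N) (k : Fin N)
    (hyk : Y.y k ∈ DRfull K D E.x) : Y.y k ∈ DRk K D E.x ((k:ℕ)+1) :=
  mem_DRk_of (y_sOK HB k) (y_Dcoef HAN k hyk)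

end YDev

section SatDev
variable {K : Type} [Field K] {R : Type} [Ring R] [Algebra K R] {N : ℕ}
variable {E : CGLExt K R N} {D : Subring K} {Y : YSystem E}

lemma Dcoef_mul (hBN : Bstat E D N) {u v : R} (hu : Dcoef E D u) (hv : Dcoef E D v) :
    Dcoef E D (u * v) := by
  rw [prodExpand (E := E) u v]
  apply Dcoef_sum
  intro f _
  apply Dcoef_sum
  intro g _
  exact Dcoef_smul (D.mul_mem (hu f) (hv g)) (Bprod hBN (SLT_N f) (SLT_N g)).1

lemma unit_cancel {q : Kˣ} {c : K} (h : (q:K) * c ∈ D) (hq : Dunit D q) :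
    c ∈ D := by
  have h2 : c = ((q⁻¹:Kˣ):K) * ((q:K) * c) := by
    rw [← mul_assoc, ← Units.val_mul, inv_mul_cancel, Units.val_one, one_mul]
  rw [h2]
  exact D.mul_mem hq.2 h

lemma sat_right (HB : ∀ m : ℕ, Bstat E D m) (HAN : Astat E D N)
    (k : Fin N) (hyk : Y.y k ∈ DRfull K D E.x) :
    ∀ b : R, Dcoef E D (b * Y.y k) → Dcoef E D b := by
  obtain ⟨Fk, hFk1, hFkmax⟩ := lty HB k
  suffices hmain : ∀ n : ℕ, ∀ b : R, (E.pbw.repr b).support.card ≤ n →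
      Dcoef E D (b * Y.y k) → Dcoef E D b by
    intro b hb
    exact hmain _ b (le_refl _) hb
  intro n
  induction n with
  | zero =>
    intro b hcard _
    have h0 : E.pbw.repr b = 0 := by
      rw [← Finsupp.support_eq_empty]
      exact Finset.card_eq_zero.mp (Nat.le_zero.mp hcard)
    rw [(LinearEquiv.map_eq_zero_iff E.pbw.repr).mp h0]
    exact Dcoef_zero
  | succ n IHn =>
    intro b hcard hby
    by_cases hb0 : b = 0
    · rw [hb0]; exact Dcoef_zero
    obtain ⟨F, hF, hFmax⟩ := maxRep (E := E) b hb0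
    obtain ⟨⟨q, hq, hco⟩, -⟩ := lc_mul (HB N) b (Y.y k) F Fk hFmax hFkmax
    rw [hFk1, mul_one] at hco
    have hβD : E.pbw.repr b F ∈ D := unit_cancel (hco ▸ hby (F + Fk)) hq
    set b' := b - E.pbw.repr b F • oMono E.x F with hb'def
    have hb'rep : ∀ h, E.pbw.repr b' h = if h = F then 0 else E.pbw.repr b h := by
      intro h
      rw [hb'def, rep_sub, rep_smul, rep_oMono_apply]
      by_cases hc : h = F
      · rw [if_pos hc, if_pos hc, mul_one, hc, sub_self]
      · rw [if_neg hc, if_neg hc, mul_zero, sub_zero]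
    have hb'card : (E.pbw.repr b').support.card ≤ n := by
      have hsub : (E.pbw.repr b').support ⊆ (E.pbw.repr b).support.erase F := by
        intro h hh
        rw [Finsupp.mem_support_iff, hb'rep] at hh
        by_cases hc : h = F
        · rw [if_pos hc] at hh; exact absurd rfl hh
        · rw [if_neg hc] at hh
          exact Finset.mem_erase.mpr ⟨hc, Finsupp.mem_support_iff.mpr hh⟩
      have h1 := Finset.card_le_card hsub
      have h2 := Finset.card_erase_lt_of_mem (Finsupp.mem_support_iff.mpr hF)
      omega
    have hb'by : Dcoef E D (b' * Y.y k) := by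
      have hsplit : b' * Y.y k = b * Y.y k - E.pbw.repr b F • (oMono E.x F * Y.y k) := by
        rw [hb'def, sub_mul, smul_mul_assoc]
      rw [hsplit]
      exact Dcoef_sub hby (Dcoef_smul hβD (Dcoef_mul (HB N) (Dcoef_mono F)
        (y_Dcoef HAN k hyk)))
    have hb'D : Dcoef E D b' := IHn b' hb'card hb'by
    intro h
    by_cases hc : h = F
    · rw [hc]; exact hβD
    · have := hb'D h
      rw [hb'rep, if_neg hc] at this
      exact this

lemma sat_left (HB : ∀ m : ℕ, Bstat E D m) (HAN : Astat E D N)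
    (k : Fin N) (hyk : Y.y k ∈ DRfull K D E.x) :
    ∀ b : R, Dcoef E D (Y.y k * b) → Dcoef E D b := by
  obtain ⟨Fk, hFk1, hFkmax⟩ := lty HB k
  suffices hmain : ∀ n : ℕ, ∀ b : R, (E.pbw.repr b).support.card ≤ n →
      Dcoef E D (Y.y k * b) → Dcoef E D b by
    intro b hb
    exact hmain _ b (le_refl _) hb
  intro n
  induction n with
  | zero =>
    intro b hcard _
    have h0 : E.pbw.repr b = 0 := by
      rw [← Finsupp.support_eq_empty]
      exact Finset.card_eq_zero.mp (Nat.le_zero.mp hcard)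
    rw [(LinearEquiv.map_eq_zero_iff E.pbw.repr).mp h0]
    exact Dcoef_zero
  | succ n IHn =>
    intro b hcard hby
    by_cases hb0 : b = 0
    · rw [hb0]; exact Dcoef_zero
    obtain ⟨F, hF, hFmax⟩ := maxRep (E := E) b hb0
    obtain ⟨⟨q, hq, hco⟩, -⟩ := lc_mul (HB N) (Y.y k) b Fk F hFkmax hFmax
    rw [hFk1, one_mul] at hco
    have hβD : E.pbw.repr b F ∈ D := unit_cancel (hco ▸ hby (Fk + F)) hq
    set b' := b - E.pbw.repr b F • oMono E.x F with hb'def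
    have hb'rep : ∀ h, E.pbw.repr b' h = if h = F then 0 else E.pbw.repr b h := by
      intro h
      rw [hb'def, rep_sub, rep_smul, rep_oMono_apply]
      by_cases hc : h = F
      · rw [if_pos hc, if_pos hc, mul_one, hc, sub_self]
      · rw [if_neg hc, if_neg hc, mul_zero, sub_zero]
    have hb'card : (E.pbw.repr b').support.card ≤ n := by
      have hsub : (E.pbw.repr b').support ⊆ (E.pbw.repr b).support.erase F := by
        intro h hh
        rw [Finsupp.mem_support_iff, hb'rep] at hh
        by_cases hc : h = F
        · rw [if_pos hc] at hh; exact absurd rfl hh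
        · rw [if_neg hc] at hh
          exact Finset.mem_erase.mpr ⟨hc, Finsupp.mem_support_iff.mpr hh⟩
      have h1 := Finset.card_le_card hsub
      have h2 := Finset.card_erase_lt_of_mem (Finsupp.mem_support_iff.mpr hF)
      omega
    have hb'by : Dcoef E D (Y.y k * b') := by
      have hsplit : Y.y k * b' = Y.y k * b - E.pbw.repr b F • (Y.y k * oMono E.x F) := by
        rw [hb'def, mul_sub, mul_smul_comm]
      rw [hsplit]
      exact Dcoef_sub hby (Dcoef_smul hβD (Dcoef_mul (HB N)
        (y_Dcoef HAN k hyk) (Dcoef_mono F)))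
    have hb'D : Dcoef E D b' := IHn b' hb'card hb'by
    intro h
    by_cases hc : h = F
    · rw [hc]; exact hβD
    · have := hb'D h
      rw [hb'rep, if_neg hc] at this
      exact this

lemma y_normal (HB : ∀ m : ℕ, Bstat E D m) (HA : ∀ m : ℕ, Astat E D m)
    (k : Fin N) (hyk : Y.y k ∈ DRfull K D E.x) :
    IsNormalInSR (DRk K D E.x ((k:ℕ)+1)) (Y.y k) := by
  constructor
  · intro a ha
    have haR : a ∈ Rk K E.x ((k:ℕ)+1) := DRk_le_Rk ha
    obtain ⟨b, hbR, hbe⟩ := (y_normK (Y := Y) k).1 a haR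
    have hbs : sOK E (SLT ((k:ℕ)+1)) b := Rk_sOK (HB _) hbR
    have hbyD : Dcoef E D (b * Y.y k) := by
      rw [← hbe]
      exact Dcoef_mul (HB N) (y_Dcoef (HA N) k hyk) ((HA _) a ha).1
    have hbD : Dcoef E D b := sat_right HB (HA N) k hyk b hbyD
    exact ⟨b, mem_DRk_of hbs hbD, hbe⟩
  · intro a ha
    have haR : a ∈ Rk K E.x ((k:ℕ)+1) := DRk_le_Rk ha
    obtain ⟨b, hbR, hbe⟩ := (y_normK (Y := Y) k).2 a haR
    have hbs : sOK E (SLT ((k:ℕ)+1)) b := Rk_sOK (HB _) hbR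
    have hbyD : Dcoef E D (Y.y k * b) := by
      rw [← hbe]
      exact Dcoef_mul (HB N) ((HA _) a ha).1 (y_Dcoef (HA N) k hyk)
    have hbD : Dcoef E D b := sat_left HB (HA N) k hyk b hbyD
    exact ⟨b, mem_DRk_of hbs hbD, hbe⟩

end SatDev

section DegDev
variable {K : Type} [Field K] {R : Type} [Ring R] [Algebra K R] {N : ℕ}
variable {E : CGLExt K R N} {D : Subring K} {Y : YSystem E}

/-- the `x_j`-degree of an element -/
noncomputable def degj (E : CGLExt K R N) (j : Fin N) (v : R) : ℕ :=
  (E.pbw.repr v).support.sup (fun f => f j)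

lemma degj_coord {j : Fin N} {v : R} {f : Fin N → ℕ} (hf : E.pbw.repr v f ≠ 0) :
    f j ≤ degj E j v :=
  Finset.le_sup (f := fun f => f j) (Finsupp.mem_support_iff.mpr hf)

lemma degj_le_of {j : Fin N} {v : R} {m : ℕ} (h : ∀ f, E.pbw.repr v f ≠ 0 → f j ≤ m) :
    degj E j v ≤ m :=
  Finset.sup_le (fun f hf => h f (Finsupp.mem_support_iff.mp hf))

lemma degj_add_le {j : Fin N} {u v : R} {m : ℕ} (hu : degj E j u ≤ m) (hv : degj E j v ≤ m) :
    degj E j (u + v) ≤ m := by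
  apply degj_le_of
  intro f hf
  rw [rep_add] at hf
  by_cases hc : E.pbw.repr u f = 0
  · have : E.pbw.repr v f ≠ 0 := by
      intro hc2; rw [hc, hc2] at hf; simp at hf
    exact le_trans (degj_coord this) hv
  · exact le_trans (degj_coord hc) hu

lemma degj_sub_le {j : Fin N} {u v : R} {m : ℕ} (hu : degj E j u ≤ m) (hv : degj E j v ≤ m) :
    degj E j (u - v) ≤ m := by
  apply degj_le_of
  intro f hf
  rw [rep_sub] at hf
  by_cases hc : E.pbw.repr u f = 0
  · have : E.pbw.repr v f ≠ 0 := by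
      intro hc2; rw [hc, hc2] at hf; simp at hf
    exact le_trans (degj_coord this) hv
  · exact le_trans (degj_coord hc) hu

lemma degj_smul_le {j : Fin N} {c : K} {v : R} {m : ℕ} (hv : degj E j v ≤ m) :
    degj E j (c • v) ≤ m := by
  apply degj_le_of
  intro f hf
  rw [rep_smul] at hf
  exact le_trans (degj_coord (right_ne_zero_of_mul hf)) hv

lemma degj_sOKj {j : Fin N} {v : R} (hv : sOK E (SLT (j:ℕ)) v) : degj E j v = 0 := by
  apply Nat.le_zero.mp
  apply degj_le_of
  intro f hf
  by_contra hc
  have := hv f hf j (by omega)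
  omega

lemma xpow_eq_oMono (j : Fin N) (m : ℕ) : E.x j ^ m = oMono E.x (mE j m) :=
  (oMono_single E.x j m (mE j m) (fun _ => rfl)).symm

lemma sOK_xpow (j : Fin N) (m : ℕ) : sOK E (SLT ((j:ℕ)+1)) (E.x j ^ m) := by
  rw [xpow_eq_oMono]
  apply sOK_mono_self
  intro i hi
  have : i = j := by
    by_contra hc
    simp [mE, hc] at hi
  rw [this]
  omega

lemma Dcoef_xpow (j : Fin N) (m : ℕ) : Dcoef E D (E.x j ^ m) := by
  rw [xpow_eq_oMono]; exact Dcoef_mono _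

lemma degj_xpow_le (j : Fin N) (m : ℕ) : degj E j (E.x j ^ m) ≤ m := by
  apply degj_le_of
  intro f hf
  rw [xpow_eq_oMono, rep_oMono_apply] at hf
  by_cases hc : f = mE j m
  · rw [hc]; simp [mE]
  · rw [if_neg hc] at hf; exact absurd rfl hf

lemma sOK_x (j : Fin N) : sOK E (SLT ((j:ℕ)+1)) (E.x j) := by
  have h := sOK_xpow (E := E) j 1
  rwa [pow_one] at h

lemma Dcoef_x (j : Fin N) : Dcoef E D (E.x j) := by
  have h := Dcoef_xpow (E := E) (D := D) j 1
  rwa [pow_one] at h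

lemma degj_x_le (j : Fin N) : degj E j (E.x j) ≤ 1 := by
  have h := degj_xpow_le (E := E) j 1
  rwa [pow_one] at h

lemma degj_mul_le (hBN : Bstat E D N) {j : Fin N} {u v : R}
    (hu : sOK E (SLT ((j:ℕ)+1)) u) (hv : sOK E (SLT ((j:ℕ)+1)) v) :
    degj E j (u * v) ≤ degj E j u + degj E j v := by
  by_cases hu0 : u = 0
  · rw [hu0, zero_mul]
    apply degj_le_of
    intro f hf
    rw [map_zero] at hf
    simp at hf
  by_cases hv0 : v = 0
  · rw [hv0, mul_zero]
    apply degj_le_of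
    intro f hf
    rw [map_zero] at hf
    simp at hf
  obtain ⟨F, hF, hFm⟩ := maxRep (E := E) u hu0
  obtain ⟨G, hG, hGm⟩ := maxRep (E := E) v hv0
  obtain ⟨-, hsupp⟩ := lc_mul hBN u v F G hFm hGm
  apply degj_le_of
  intro f hf
  have h1 : rle f (F + G) := hsupp f hf
  have h2 : SLT ((j:ℕ)+1) (F + G) := SLT_add (hu F hF) (hv G hG)
  have h3 : f j ≤ (F + G) j := rle_coord_le h1 h2
  have h4 : F j ≤ degj E j u := degj_coord hF
  have h5 : G j ≤ degj E j v := degj_coord hG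
  have : (F + G) j = F j + G j := rfl
  omega

lemma decompL (HB : ∀ m : ℕ, Bstat E D m) (j : Fin N) (m : ℕ) (a : R)
    (has : sOK E (SLT ((j:ℕ)+1)) a) (haD : Dcoef E D a) (hd : degj E j a ≤ m+1) :
    ∃ c r : R, sOK E (SLT (j:ℕ)) c ∧ Dcoef E D c ∧ sOK E (SLT ((j:ℕ)+1)) r ∧ Dcoef E D r ∧
      degj E j r ≤ m ∧ a = c * E.x j ^ (m+1) + r := by
  classical
  refine ⟨∑ f ∈ (E.pbw.repr a).support.filter (fun f => f j = m+1),
      E.pbw.repr a f • oMono E.x (lowF j f),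
    ∑ f ∈ (E.pbw.repr a).support.filter (fun f => ¬ f j = m+1),
      E.pbw.repr a f • oMono E.x f, ?_, ?_, ?_, ?_, ?_, ?_⟩
  · apply sOK_sum
    intro f _
    exact sOK_smul _ (sOK_mono_self _ (lowF_SLT j f))
  · apply Dcoef_sum
    intro f _
    exact Dcoef_smul (haD f) (Dcoef_mono _)
  · apply sOK_sum
    intro f hf
    exact sOK_smul _ (sOK_mono_self _ (has f
      (Finsupp.mem_support_iff.mp (Finset.mem_filter.mp hf).1)))
  · apply Dcoef_sum
    intro f _
    exact Dcoef_smul (haD f) (Dcoef_mono _)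
  · apply degj_le_of
    intro h hh
    rw [rep_sum] at hh
    obtain ⟨f, hf, hne⟩ := Finset.exists_ne_zero_of_sum_ne_zero hh
    rw [rep_smul, rep_oMono_apply] at hne
    have heq : h = f := by
      by_contra hc
      rw [if_neg hc, mul_zero] at hne
      exact hne rfl
    obtain ⟨hf1, hf2⟩ := Finset.mem_filter.mp hf
    have h1 : f j ≤ m + 1 := le_trans (degj_coord (Finsupp.mem_support_iff.mp hf1)) hd
    rw [heq]
    omega
  · have hdecf : ∀ f ∈ (E.pbw.repr a).support.filter (fun f => f j = m+1),
        (E.pbw.repr a f • oMono E.x (lowF j f)) * E.x j ^ (m+1)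
          = E.pbw.repr a f • oMono E.x f := by
      intro f hf
      obtain ⟨hf1, hfj⟩ := Finset.mem_filter.mp hf
      have hfs : SLT ((j:ℕ)+1) f := has f (Finsupp.mem_support_iff.mp hf1)
      have hhigh : ∀ i, highF j f i = 0 := by
        intro i
        by_cases hji : j < i
        · have hfi : f i = 0 := by
            by_contra hcc
            have h5 := hfs i hcc
            have h6 := Fin.lt_def.mp hji
            omega
          simp [highF, hji, hfi]
        · simp [highF, hji]
      rw [smul_mul_assoc]
      congr 1
      rw [oMono_decomp E.x j f, oMono_eq_one E.x _ hhigh, mul_one, hfj]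
    rw [Finset.sum_mul, Finset.sum_congr rfl hdecf, Finset.sum_filter_add_sum_filter_not]
    exact (sum_rep (E := E) a).symm

lemma moveR (HA : ∀ m : ℕ, Astat E D m) (HB : ∀ m : ℕ, Bstat E D m) (j : Fin N)
    (Hθi : ∀ a ∈ Rk K E.x (j : ℕ), a ∈ DRk K D E.x (j : ℕ) →
      E.θinv j a ∈ DRk K D E.x (j : ℕ))
    (Hδ : ∀ a ∈ Rk K E.x (j : ℕ), a ∈ DRk K D E.x (j : ℕ) →
      E.δ j a ∈ DRk K D E.x (j : ℕ)) :
    ∀ (n : ℕ) (c : R), c ∈ Rk K E.x (j:ℕ) → c ∈ DRk K D E.x (j:ℕ) →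
      ∃ c' e : R, c' ∈ Rk K E.x (j:ℕ) ∧ c' ∈ DRk K D E.x (j:ℕ) ∧
        sOK E (SLT ((j:ℕ)+1)) e ∧ Dcoef E D e ∧ degj E j e ≤ n ∧
        c * E.x j ^ (n+1) = E.x j ^ (n+1) * c' + e := by
  have key : ∀ c : R, c ∈ Rk K E.x (j:ℕ) → c ∈ DRk K D E.x (j:ℕ) →
      c * E.x j = E.x j * E.θinv j c - E.δ j (E.θinv j c) := by
    intro c hcR hcD
    have hwR : E.θinv j c ∈ Rk K E.x (j:ℕ) := E.θinv_mem j c hcR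
    have hore := E.ore j _ hwR
    rw [E.θ_right_inv j c hcR] at hore
    rw [eq_sub_iff_add_eq]
    exact hore.symm
  intro n
  induction n with
  | zero =>
    intro c hcR hcD
    have hwR : E.θinv j c ∈ Rk K E.x (j:ℕ) := E.θinv_mem j c hcR
    have hwD : E.θinv j c ∈ DRk K D E.x (j:ℕ) := Hθi c hcR hcD
    have hδD : E.δ j (E.θinv j c) ∈ DRk K D E.x (j:ℕ) := Hδ _ hwR hwD
    refine ⟨E.θinv j c, -(E.δ j (E.θinv j c)), hwR, hwD,
      sOK_neg (sOK_mono' (fun f hf => SLT_mono (Nat.le_succ _) hf) ((HA _ _ hδD).2)),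
      Dcoef_neg ((HA _ _ hδD).1), ?_, ?_⟩
    · apply degj_le_of
      intro f hf
      rw [map_neg, Finsupp.neg_apply, neg_ne_zero] at hf
      have := (HA _ _ hδD).2 f hf
      by_contra hc
      have := this j (by omega)
      omega
    · rw [pow_one, key c hcR hcD, sub_eq_add_neg]
  | succ n IHn =>
    intro c hcR hcD
    have hwR : E.θinv j c ∈ Rk K E.x (j:ℕ) := E.θinv_mem j c hcR
    have hwD : E.θinv j c ∈ DRk K D E.x (j:ℕ) := Hθi c hcR hcD
    have hδR : E.δ j (E.θinv j c) ∈ Rk K E.x (j:ℕ) := E.δ_mem j _ hwR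
    have hδD : E.δ j (E.θinv j c) ∈ DRk K D E.x (j:ℕ) := Hδ _ hwR hwD
    obtain ⟨c', e', hc'R, hc'D, he's, he'D, he'deg, he'eq⟩ := IHn (E.θinv j c) hwR hwD
    have hδs : sOK E (SLT ((j:ℕ)+1)) (E.δ j (E.θinv j c)) :=
      sOK_mono' (fun f hf => SLT_mono (Nat.le_succ _) hf) ((HA _ _ hδD).2)
    have hδDc : Dcoef E D (E.δ j (E.θinv j c)) := (HA _ _ hδD).1
    have hδs0 : sOK E (SLT (j:ℕ)) (E.δ j (E.θinv j c)) := (HA _ _ hδD).2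
    refine ⟨c', E.x j * e' - E.δ j (E.θinv j c) * E.x j ^ (n+1), hc'R, hc'D, ?_, ?_, ?_, ?_⟩
    · exact sOK_sub (mul_sOK (HB _) (sOK_x j) he's) (mul_sOK (HB _) hδs (sOK_xpow j (n+1)))
    · exact Dcoef_sub (Dcoef_mul (HB N) (Dcoef_x j) he'D)
        (Dcoef_mul (HB N) hδDc (Dcoef_xpow j (n+1)))
    · apply degj_sub_le
      · have h1 := degj_mul_le (HB N) (sOK_x (E := E) j) he's
        have h2 := degj_x_le (E := E) j
        omega
      · have h1 := degj_mul_le (HB N) hδs (sOK_xpow (E := E) j (n+1))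
        have h2 := degj_sOKj hδs0
        have h3 := degj_xpow_le (E := E) j (n+1)
        omega
    · calc c * E.x j ^ (n+1+1)
          = (c * E.x j) * E.x j ^ (n+1) := by rw [mul_assoc, ← pow_succ']
        _ = (E.x j * E.θinv j c - E.δ j (E.θinv j c)) * E.x j ^ (n+1) := by
            rw [key c hcR hcD]
        _ = E.x j * (E.θinv j c * E.x j ^ (n+1)) - E.δ j (E.θinv j c) * E.x j ^ (n+1) := by
            rw [sub_mul, mul_assoc]
        _ = E.x j * (E.x j ^ (n+1) * c' + e') - E.δ j (E.θinv j c) * E.x j ^ (n+1) := by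
            rw [he'eq]
        _ = E.x j ^ (n+1+1) * c' + (E.x j * e' - E.δ j (E.θinv j c) * E.x j ^ (n+1)) := by
            rw [mul_add, ← mul_assoc, ← pow_succ', add_sub_assoc]

end DegDev

section OrePrep
variable {K : Type} [Field K] {R : Type} [Ring R] [Algebra K R] {N : ℕ}
variable {E : CGLExt K R N} {D : Subring K} {Y : YSystem E}

lemma Rk_mono {k k' : ℕ} (h : k ≤ k') {v : R} (hv : v ∈ Rk K E.x k) : v ∈ Rk K E.x k' := by
  apply Algebra.adjoin_mono (s := {r : R | ∃ i : Fin N, (i:ℕ) < k ∧ r = E.x i})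
  · rintro r ⟨i, hi, rfl⟩
    exact ⟨i, lt_of_lt_of_le hi h, rfl⟩
  · exact hv

lemma decompR (HA : ∀ m : ℕ, Astat E D m) (HB : ∀ m : ℕ, Bstat E D m) (j : Fin N)
    (Hθi : ∀ a ∈ Rk K E.x (j : ℕ), a ∈ DRk K D E.x (j : ℕ) →
      E.θinv j a ∈ DRk K D E.x (j : ℕ))
    (Hδ : ∀ a ∈ Rk K E.x (j : ℕ), a ∈ DRk K D E.x (j : ℕ) →
      E.δ j a ∈ DRk K D E.x (j : ℕ))
    (m : ℕ) (a : R)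
    (has : sOK E (SLT ((j:ℕ)+1)) a) (haD : Dcoef E D a) (hd : degj E j a ≤ m+1) :
    ∃ c r : R, c ∈ Rk K E.x (j:ℕ) ∧ c ∈ DRk K D E.x (j:ℕ) ∧
      sOK E (SLT ((j:ℕ)+1)) r ∧ Dcoef E D r ∧ degj E j r ≤ m ∧
      a = E.x j ^ (m+1) * c + r := by
  obtain ⟨c0, r0, hc0s, hc0D, hr0s, hr0D, hr0deg, heq0⟩ := decompL HB j m a has haD hd
  have hc0mem : c0 ∈ DRk K D E.x (j:ℕ) := mem_DRk_of hc0s hc0D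
  have hc0Rk : c0 ∈ Rk K E.x (j:ℕ) := DRk_le_Rk hc0mem
  obtain ⟨c', e, hc'R, hc'D, hes, heD, hedeg, heeq⟩ := moveR HA HB j Hθi Hδ m c0 hc0Rk hc0mem
  refine ⟨c', e + r0, hc'R, hc'D, sOK_add hes hr0s, Dcoef_add heD hr0D, ?_, ?_⟩
  · exact degj_add_le hedeg hr0deg
  · rw [heq0, heeq, add_assoc]

lemma y_mu (HA : ∀ m : ℕ, Astat E D m) (HB : ∀ m : ℕ, Bstat E D m) (j i : Fin N)
    (hij : (i:ℕ) < (j:ℕ)) (hyi : Y.y i ∈ DRfull K D E.x)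
    (Hθ : ∀ a ∈ Rk K E.x (j : ℕ), a ∈ DRk K D E.x (j : ℕ) →
      E.θ j a ∈ DRk K D E.x (j : ℕ))
    (Hθi : ∀ a ∈ Rk K E.x (j : ℕ), a ∈ DRk K D E.x (j : ℕ) →
      E.θinv j a ∈ DRk K D E.x (j : ℕ)) :
    ∃ μ : Kˣ, Dunit D μ ∧
      E.x j * Y.y i = (μ:K) • (Y.y i * E.x j) + E.δ j (Y.y i) := by
  have hyRk : Y.y i ∈ Rk K E.x (j:ℕ) := Rk_mono (by omega) (y_memRk i)
  have hyD : Y.y i ∈ DRk K D E.x (j:ℕ) :=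
    DRk_mono (by omega) (y_memDRk HB (HA N) i hyi)
  obtain ⟨mchar, hchar⟩ := Y.y_homog i
  refine ⟨charEval (E.hElt j) mchar, ?_, ?_⟩
  · obtain ⟨Fi, hFi1, -⟩ := lty (Y := Y) HB i
    have hθy : E.θ j (Y.y i) = ((charEval (E.hElt j) mchar : Kˣ):K) • Y.y i := by
      rw [← E.hElt_theta j _ hyRk]; exact hchar (E.hElt j)
    constructor
    · have hmem := Hθ _ hyRk hyD
      rw [hθy] at hmem
      have h1 := (HA (j:ℕ) _ hmem).1 Fi
      rwa [rep_smul, hFi1, mul_one] at h1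
    · have hθinv := thetainv_eigen j hyRk _ hθy
      have hmem := Hθi _ hyRk hyD
      rw [hθinv] at hmem
      have h1 := (HA (j:ℕ) _ hmem).1 Fi
      rwa [rep_smul, hFi1, mul_one] at h1
  · have hore := E.ore j _ hyRk
    have hθy : E.θ j (Y.y i) = ((charEval (E.hElt j) mchar : Kˣ):K) • Y.y i := by
      rw [← E.hElt_theta j _ hyRk]; exact hchar (E.hElt j)
    rw [hore, hθy, smul_mul_assoc]

lemma ypow (HB : ∀ m : ℕ, Bstat E D m) (j i : Fin N)
    (μ : Kˣ) (hμ : Dunit D μ) (d : R)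
    (hds : sOK E (SLT (j:ℕ)) d) (hdD : Dcoef E D d)
    (hcomm : E.x j * Y.y i = (μ:K) • (Y.y i * E.x j) + d)
    (hys : sOK E (SLT ((j:ℕ)+1)) (Y.y i)) (hyD : Dcoef E D (Y.y i)) :
    ∀ n : ℕ, ∃ e : R, sOK E (SLT ((j:ℕ)+1)) e ∧ Dcoef E D e ∧ degj E j e ≤ n ∧
      E.x j ^ (n+1) * Y.y i = ((μ:K)^(n+1)) • (Y.y i * E.x j ^ (n+1)) + e := by
  intro n
  induction n with
  | zero =>
    refine ⟨d, sOK_mono' (fun f hf => SLT_mono (Nat.le_succ _) hf) hds, hdD, ?_, ?_⟩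
    · rw [degj_sOKj hds]
    · rw [pow_one, pow_one, hcomm]
  | succ n IHn =>
    obtain ⟨e, hes, heD, hedeg, heq⟩ := IHn
    refine ⟨(μ:K)^(n+1) • (d * E.x j ^ (n+1)) + E.x j * e, ?_, ?_, ?_, ?_⟩
    · apply sOK_add
      · exact sOK_smul _ (mul_sOK (HB _)
          (sOK_mono' (fun f hf => SLT_mono (Nat.le_succ _) hf) hds) (sOK_xpow j (n+1)))
      · exact mul_sOK (HB _) (sOK_x j) hes
    · apply Dcoef_add
      · exact Dcoef_smul (D.pow_mem hμ.1 _) (Dcoef_mul (HB N) hdD (Dcoef_xpow j (n+1)))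
      · exact Dcoef_mul (HB N) (Dcoef_x j) heD
    · apply degj_add_le
      · apply degj_smul_le
        have h1 := degj_mul_le (HB N)
          (sOK_mono' (fun f hf => SLT_mono (Nat.le_succ _) hf) hds) (sOK_xpow (E := E) j (n+1))
        have h2 := degj_sOKj hds
        have h3 := degj_xpow_le (E := E) j (n+1)
        omega
      · have h1 := degj_mul_le (HB N) (sOK_x (E := E) j) hes
        have h2 := degj_x_le (E := E) j
        omega
    · calc E.x j ^ (n+1+1) * Y.y i
          = E.x j * (E.x j ^ (n+1) * Y.y i) := by rw [← mul_assoc, ← pow_succ']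
        _ = E.x j * (((μ:K)^(n+1)) • (Y.y i * E.x j ^ (n+1)) + e) := by rw [heq]
        _ = ((μ:K)^(n+1)) • (E.x j * (Y.y i * E.x j ^ (n+1))) + E.x j * e := by
            rw [mul_add, mul_smul_comm]
        _ = ((μ:K)^(n+1)) • ((E.x j * Y.y i) * E.x j ^ (n+1)) + E.x j * e := by
            rw [mul_assoc]
        _ = ((μ:K)^(n+1)) • (((μ:K) • (Y.y i * E.x j) + d) * E.x j ^ (n+1)) + E.x j * e := by
            rw [hcomm]
        _ = ((μ:K)^(n+1+1)) • (Y.y i * E.x j ^ (n+1+1))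
            + (((μ:K)^(n+1)) • (d * E.x j ^ (n+1)) + E.x j * e) := by
            rw [add_mul, smul_mul_assoc, smul_add, smul_smul, mul_assoc, ← pow_succ',
              ← pow_succ, add_assoc]

/-- the multiplicative set generated by `D`-units and the `y_i`, `i ∈ I`, `i < j`. -/
def Tset (Y : YSystem E) (D : Subring K) (I : Set (Fin N)) (j : ℕ) : Submonoid R :=
  Submonoid.closure ({r : R | ∃ t : K, isUnitIn K D t ∧ r = algebraMap K R t} ∪
    {r : R | ∃ i ∈ I, (i:ℕ) < j ∧ r = Y.y i})

lemma Tset_mono {I : Set (Fin N)} {j j' : ℕ} (h : j ≤ j') :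
    (Tset Y D I j : Set R) ⊆ Tset Y D I j' := by
  apply Submonoid.closure_mono
  rintro r (hr | ⟨i, hiI, hij, rfl⟩)
  · exact Or.inl hr
  · exact Or.inr ⟨i, hiI, lt_of_lt_of_le hij h, rfl⟩

lemma Tset_le_DRk (HA : ∀ m : ℕ, Astat E D m) (HB : ∀ m : ℕ, Bstat E D m)
    (hy : ∀ k : Fin N, Y.y k ∈ DRfull K D E.x) {I : Set (Fin N)} {j : ℕ}
    {t : R} (ht : t ∈ Tset Y D I j) : t ∈ DRk K D E.x j := by
  induction ht using Submonoid.closure_induction with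
  | mem g hg =>
    rcases hg with ⟨c, hc, rfl⟩ | ⟨i, _, hij, rfl⟩
    · exact algebraMap_mem_DRk hc.1
    · exact DRk_mono (by omega) (y_memDRk HB (HA N) i (hy i))
  | one => exact Subring.one_mem _
  | mul a b _ _ ha hb => exact Subring.mul_mem _ ha hb

end OrePrep

section OreMain
variable {K : Type} [Field K] {R : Type} [Ring R] [Algebra K R] {N : ℕ}
variable {E : CGLExt K R N} {D : Subring K} {Y : YSystem E}

lemma oreLevel (HA : ∀ m : ℕ, Astat E D m) (HB : ∀ m : ℕ, Bstat E D m)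
    (Hθ : ∀ k : Fin N, ∀ a ∈ Rk K E.x (k : ℕ), a ∈ DRk K D E.x (k : ℕ) →
      E.θ k a ∈ DRk K D E.x (k : ℕ))
    (Hθi : ∀ k : Fin N, ∀ a ∈ Rk K E.x (k : ℕ), a ∈ DRk K D E.x (k : ℕ) →
      E.θinv k a ∈ DRk K D E.x (k : ℕ))
    (Hδ : ∀ k : Fin N, ∀ a ∈ Rk K E.x (k : ℕ), a ∈ DRk K D E.x (k : ℕ) →
      E.δ k a ∈ DRk K D E.x (k : ℕ))
    (hy : ∀ k : Fin N, Y.y k ∈ DRfull K D E.x) (I : Set (Fin N)) :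
    ∀ j : ℕ, j ≤ N →
      (∀ s ∈ Tset Y D I j, ∀ a ∈ DRk K D E.x j,
        ∃ b ∈ DRk K D E.x j, ∃ t ∈ Tset Y D I j, t * a = b * s) ∧
      (∀ s ∈ Tset Y D I j, ∀ a ∈ DRk K D E.x j,
        ∃ b ∈ DRk K D E.x j, ∃ t ∈ Tset Y D I j, a * t = s * b) := by
  intro j
  induction j with
  | zero =>
    intro _
    constructor
    · intro s hs
      induction hs using Submonoid.closure_induction with
      | mem g hg =>
        intro a ha
        rcases hg with ⟨c, hc, rfl⟩ | ⟨i, _, hij, rfl⟩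
        · exact ⟨a, ha, algebraMap K R c,
            Submonoid.subset_closure (Or.inl ⟨c, hc, rfl⟩), Algebra.commutes c a⟩
        · exact absurd hij (by omega)
      | one =>
        intro a ha
        exact ⟨a, ha, 1, Submonoid.one_mem _, by rw [one_mul, mul_one]⟩
      | mul s1 s2 hs1 hs2 hP1 hP2 =>
        intro a ha
        obtain ⟨b2, hb2, t2, ht2, he2⟩ := hP2 a ha
        obtain ⟨b1, hb1, t1, ht1, he1⟩ := hP1 b2 hb2
        exact ⟨b1, hb1, t1 * t2, Submonoid.mul_mem _ ht1 ht2, by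
          rw [mul_assoc, he2, ← mul_assoc, he1, mul_assoc]⟩
    · intro s hs
      induction hs using Submonoid.closure_induction with
      | mem g hg =>
        intro a ha
        rcases hg with ⟨c, hc, rfl⟩ | ⟨i, _, hij, rfl⟩
        · exact ⟨a, ha, algebraMap K R c,
            Submonoid.subset_closure (Or.inl ⟨c, hc, rfl⟩), (Algebra.commutes c a).symm⟩
        · exact absurd hij (by omega)
      | one =>
        intro a ha
        exact ⟨a, ha, 1, Submonoid.one_mem _, by rw [one_mul, mul_one]⟩
      | mul s1 s2 hs1 hs2 hP1 hP2 =>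
        intro a ha
        obtain ⟨b1, hb1, t1, ht1, he1⟩ := hP1 a ha
        obtain ⟨b2, hb2, t2, ht2, he2⟩ := hP2 b1 hb1
        exact ⟨b2, hb2, t1 * t2, Submonoid.mul_mem _ ht1 ht2, by
          rw [← mul_assoc, he1, mul_assoc, he2, ← mul_assoc]⟩
  | succ j IHj =>
    intro hjN
    have hjN' : j < N := by omega
    set jF : Fin N := ⟨j, hjN'⟩ with hjFdef
    have hjFv : (jF : ℕ) = j := rfl
    obtain ⟨OLj, ORj⟩ := IHj (by omega)
    have hTsub : (Tset Y D I j : Set R) ⊆ Tset Y D I (j+1) := Tset_mono (Nat.le_succ j)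
    have hSsub : (DRk K D E.x j : Set R) ⊆ DRk K D E.x (j+1) := DRk_mono (Nat.le_succ j)
    have hxmem : E.x jF ∈ DRk K D E.x (j+1) := x_mem_DRk (by omega)
    have hdeg0 : ∀ a ∈ DRk K D E.x (j+1), degj E jF a = 0 → a ∈ DRk K D E.x j := by
      intro a ha h0
      apply mem_DRk_of ?_ (HA (j+1) a ha).1
      intro f hf mIdx hm
      have h1 := (HA (j+1) a ha).2 f hf mIdx hm
      by_cases hc : (mIdx:ℕ) = j
      · exfalso
        have h2 : f jF ≤ 0 := h0 ▸ degj_coord hf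
        have h3 : mIdx = jF := by rw [Fin.ext_iff]; exact hc
        rw [h3] at hm
        omega
      · omega
    constructor
    · -- left Ore at level j+1
      intro s hs
      induction hs using Submonoid.closure_induction with
      | one =>
        intro a ha
        exact ⟨a, ha, 1, Submonoid.one_mem _, by rw [one_mul, mul_one]⟩
      | mul s1 s2 hs1 hs2 hP1 hP2 =>
        intro a ha
        obtain ⟨b2, hb2, t2, ht2, he2⟩ := hP2 a ha
        obtain ⟨b1, hb1, t1, ht1, he1⟩ := hP1 b2 hb2
        exact ⟨b1, hb1, t1 * t2, Submonoid.mul_mem _ ht1 ht2, by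
          rw [mul_assoc, he2, ← mul_assoc, he1, mul_assoc]⟩
      | mem g hg =>
        rcases hg with ⟨c, hc, rfl⟩ | ⟨i, hiI, hij, rfl⟩
        · intro a ha
          exact ⟨a, ha, algebraMap K R c,
            Submonoid.subset_closure (Or.inl ⟨c, hc, rfl⟩), Algebra.commutes c a⟩
        by_cases hc : (i:ℕ) = j
        · -- top generator: use normality
          intro a ha
          have hnorm := y_normal (Y := Y) HB HA i (hy i)
          rw [hc] at hnorm
          obtain ⟨b, hb, he⟩ := hnorm.1 a ha
          exact ⟨b, hb, Y.y i, Submonoid.subset_closure (Or.inr ⟨i, hiI, by omega, rfl⟩), he⟩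
        · -- lower generator: skew-polynomial argument
          have hilt : (i:ℕ) < j := by omega
          obtain ⟨μ, hμ, hcomm⟩ := y_mu HA HB jF i hilt (hy i) (Hθ jF) (Hθi jF)
          have hyRk : Y.y i ∈ Rk K E.x (jF:ℕ) := Rk_mono (by omega) (y_memRk i)
          have hyDk : Y.y i ∈ DRk K D E.x (jF:ℕ) :=
            DRk_mono (by omega) (y_memDRk HB (HA N) i (hy i))
          have hδmem : E.δ jF (Y.y i) ∈ DRk K D E.x j := Hδ jF _ hyRk hyDk
          have hds : sOK E (SLT (jF:ℕ)) (E.δ jF (Y.y i)) := (HA j _ hδmem).2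
          have hdsD : Dcoef E D (E.δ jF (Y.y i)) := (HA j _ hδmem).1
          have hyis : sOK E (SLT ((jF:ℕ)+1)) (Y.y i) :=
            sOK_mono' (fun f hf => SLT_mono (by omega) hf) (y_sOK HB i)
          have hyiD : Dcoef E D (Y.y i) := y_Dcoef (HA N) i (hy i)
          have hTgen : Y.y i ∈ Tset Y D I j :=
            Submonoid.subset_closure (Or.inr ⟨i, hiI, hilt, rfl⟩)
          have claim : ∀ m : ℕ, ∀ a ∈ DRk K D E.x (j+1), degj E jF a ≤ m →
              ∃ b ∈ DRk K D E.x (j+1), ∃ t ∈ Tset Y D I (j+1), t * a = b * Y.y i := by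
            intro m
            induction m with
            | zero =>
              intro a ha hdeg
              obtain ⟨b, hb, t, ht, he⟩ :=
                OLj (Y.y i) hTgen a (hdeg0 a ha (Nat.le_zero.mp hdeg))
              exact ⟨b, hSsub hb, t, hTsub ht, he⟩
            | succ m IHm =>
              intro a ha hdeg
              obtain ⟨c, r, hcs, hcD, hrs, hrD, hrdeg, haeq⟩ :=
                decompL HB jF m a (HA (j+1) a ha).2 (HA (j+1) a ha).1 hdeg
              have hcj : c ∈ DRk K D E.x j := mem_DRk_of hcs hcD
              obtain ⟨b1, hb1, t1, ht1, he1⟩ := OLj (Y.y i) hTgen c hcj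
              obtain ⟨e, hes, heD, hedeg, heq⟩ :=
                ypow HB jF i μ hμ (E.δ jF (Y.y i)) hds hdsD hcomm hyis hyiD m
              set ν : K := ((μ⁻¹ : Kˣ) : K) with hνdef
              have hνμ : ν ^ (m+1) * ((μ:K)^(m+1)) = 1 := by
                rw [← mul_pow, hνdef, ← Units.val_mul, inv_mul_cancel, Units.val_one, one_pow]
              have hinv : Y.y i * E.x jF ^ (m+1)
                  = ν^(m+1) • (E.x jF ^ (m+1) * Y.y i) - ν^(m+1) • e := by
                calc Y.y i * E.x jF ^ (m+1)
                    = (ν^(m+1) * ((μ:K)^(m+1))) • (Y.y i * E.x jF ^ (m+1)) := by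
                      rw [hνμ, one_smul]
                  _ = ν^(m+1) • (((μ:K)^(m+1)) • (Y.y i * E.x jF ^ (m+1))) := by
                      rw [mul_smul]
                  _ = ν^(m+1) • (E.x jF ^ (m+1) * Y.y i - e) := by
                      rw [eq_sub_of_add_eq heq.symm]
                  _ = ν^(m+1) • (E.x jF ^ (m+1) * Y.y i) - ν^(m+1) • e := by rw [smul_sub]
              have hr' : t1 * a = ν^(m+1) • (b1 * (E.x jF ^ (m+1) * Y.y i))
                  + (t1 * r - ν^(m+1) • (b1 * e)) := by
                calc t1 * a = t1 * (c * E.x jF ^ (m+1)) + t1 * r := by rw [haeq, mul_add]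
                  _ = (t1 * c) * E.x jF ^ (m+1) + t1 * r := by rw [mul_assoc]
                  _ = (b1 * Y.y i) * E.x jF ^ (m+1) + t1 * r := by rw [he1]
                  _ = b1 * (Y.y i * E.x jF ^ (m+1)) + t1 * r := by rw [mul_assoc]
                  _ = b1 * (ν^(m+1) • (E.x jF ^ (m+1) * Y.y i) - ν^(m+1) • e) + t1 * r := by
                      rw [hinv]
                  _ = ν^(m+1) • (b1 * (E.x jF ^ (m+1) * Y.y i))
                      + (t1 * r - ν^(m+1) • (b1 * e)) := by
                      rw [mul_sub, mul_smul_comm, mul_smul_comm]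
                      noncomm_ring
              have hνD : ν^(m+1) ∈ D := D.pow_mem hμ.2 _
              have ht1S : t1 ∈ DRk K D E.x j := Tset_le_DRk HA HB hy ht1
              have hr'mem : t1 * r - ν^(m+1) • (b1 * e) ∈ DRk K D E.x (j+1) := by
                apply Subring.sub_mem
                · exact Subring.mul_mem _ (hSsub ht1S) (mem_DRk_of hrs hrD)
                · exact smul_mem_DRk hνD
                    (Subring.mul_mem _ (hSsub hb1) (mem_DRk_of hes heD))
              have ht1s' : sOK E (SLT ((jF:ℕ)+1)) t1 :=
                sOK_mono' (fun f hf => SLT_mono (Nat.le_succ _) hf) ((HA j t1 ht1S).2)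
              have hb1s' : sOK E (SLT ((jF:ℕ)+1)) b1 :=
                sOK_mono' (fun f hf => SLT_mono (Nat.le_succ _) hf) ((HA j b1 hb1).2)
              have hr'deg : degj E jF (t1 * r - ν^(m+1) • (b1 * e)) ≤ m := by
                apply degj_sub_le
                · have h1 := degj_mul_le (HB N) ht1s' hrs
                  have h2 : degj E jF t1 = 0 := degj_sOKj ((HA j t1 ht1S).2)
                  omega
                · apply degj_smul_le
                  have h1 := degj_mul_le (HB N) hb1s' hes
                  have h2 : degj E jF b1 = 0 := degj_sOKj ((HA j b1 hb1).2)
                  omega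
              obtain ⟨b2, hb2, t2, ht2, he2⟩ := IHm _ hr'mem hr'deg
              refine ⟨ν^(m+1) • (t2 * b1 * E.x jF ^ (m+1)) + b2, ?_, t2 * t1,
                Submonoid.mul_mem _ ht2 (hTsub ht1), ?_⟩
              · refine Subring.add_mem _ ?_ hb2
                apply smul_mem_DRk hνD
                exact Subring.mul_mem _
                  (Subring.mul_mem _ (Tset_le_DRk HA HB hy ht2) (hSsub hb1))
                  (Subring.pow_mem _ hxmem _)
              · calc (t2 * t1) * a = t2 * (t1 * a) := by rw [mul_assoc]
                  _ = t2 * (ν^(m+1) • (b1 * (E.x jF ^ (m+1) * Y.y i)))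
                      + t2 * (t1 * r - ν^(m+1) • (b1 * e)) := by rw [hr', mul_add]
                  _ = ν^(m+1) • (t2 * (b1 * (E.x jF ^ (m+1) * Y.y i))) + b2 * Y.y i := by
                      rw [mul_smul_comm, he2]
                  _ = (ν^(m+1) • (t2 * b1 * E.x jF ^ (m+1)) + b2) * Y.y i := by
                      rw [add_mul, smul_mul_assoc]
                      noncomm_ring
          intro a ha
          exact claim (degj E jF a) a ha (le_refl _)
    · -- right Ore at level j+1
      intro s hs
      induction hs using Submonoid.closure_induction with
      | one =>
        intro a ha
        exact ⟨a, ha, 1, Submonoid.one_mem _, by rw [one_mul, mul_one]⟩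
      | mul s1 s2 hs1 hs2 hP1 hP2 =>
        intro a ha
        obtain ⟨b1, hb1, t1, ht1, he1⟩ := hP1 a ha
        obtain ⟨b2, hb2, t2, ht2, he2⟩ := hP2 b1 hb1
        exact ⟨b2, hb2, t1 * t2, Submonoid.mul_mem _ ht1 ht2, by
          rw [← mul_assoc, he1, mul_assoc, he2, ← mul_assoc]⟩
      | mem g hg =>
        rcases hg with ⟨c, hc, rfl⟩ | ⟨i, hiI, hij, rfl⟩
        · intro a ha
          exact ⟨a, ha, algebraMap K R c,
            Submonoid.subset_closure (Or.inl ⟨c, hc, rfl⟩), (Algebra.commutes c a).symm⟩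
        by_cases hc : (i:ℕ) = j
        · intro a ha
          have hnorm := y_normal (Y := Y) HB HA i (hy i)
          rw [hc] at hnorm
          obtain ⟨b, hb, he⟩ := hnorm.2 a ha
          exact ⟨b, hb, Y.y i, Submonoid.subset_closure (Or.inr ⟨i, hiI, by omega, rfl⟩), he⟩
        · have hilt : (i:ℕ) < j := by omega
          obtain ⟨μ, hμ, hcomm⟩ := y_mu HA HB jF i hilt (hy i) (Hθ jF) (Hθi jF)
          have hyRk : Y.y i ∈ Rk K E.x (jF:ℕ) := Rk_mono (by omega) (y_memRk i)
          have hyDk : Y.y i ∈ DRk K D E.x (jF:ℕ) :=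
            DRk_mono (by omega) (y_memDRk HB (HA N) i (hy i))
          have hδmem : E.δ jF (Y.y i) ∈ DRk K D E.x j := Hδ jF _ hyRk hyDk
          have hds : sOK E (SLT (jF:ℕ)) (E.δ jF (Y.y i)) := (HA j _ hδmem).2
          have hdsD : Dcoef E D (E.δ jF (Y.y i)) := (HA j _ hδmem).1
          have hyis : sOK E (SLT ((jF:ℕ)+1)) (Y.y i) :=
            sOK_mono' (fun f hf => SLT_mono (by omega) hf) (y_sOK HB i)
          have hyiD : Dcoef E D (Y.y i) := y_Dcoef (HA N) i (hy i)
          have hTgen : Y.y i ∈ Tset Y D I j :=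
            Submonoid.subset_closure (Or.inr ⟨i, hiI, hilt, rfl⟩)
          have claim : ∀ m : ℕ, ∀ a ∈ DRk K D E.x (j+1), degj E jF a ≤ m →
              ∃ b ∈ DRk K D E.x (j+1), ∃ t ∈ Tset Y D I (j+1), a * t = Y.y i * b := by
            intro m
            induction m with
            | zero =>
              intro a ha hdeg
              obtain ⟨b, hb, t, ht, he⟩ :=
                ORj (Y.y i) hTgen a (hdeg0 a ha (Nat.le_zero.mp hdeg))
              exact ⟨b, hSsub hb, t, hTsub ht, he⟩
            | succ m IHm =>
              intro a ha hdeg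
              obtain ⟨c, r, hcR, hcDk, hrs, hrD, hrdeg, haeq⟩ :=
                decompR HA HB jF (Hθi jF) (Hδ jF) m a (HA (j+1) a ha).2 (HA (j+1) a ha).1 hdeg
              obtain ⟨b1, hb1, t1, ht1, he1⟩ := ORj (Y.y i) hTgen c hcDk
              obtain ⟨e, hes, heD, hedeg, heq⟩ :=
                ypow HB jF i μ hμ (E.δ jF (Y.y i)) hds hdsD hcomm hyis hyiD m
              have ht1S : t1 ∈ DRk K D E.x j := Tset_le_DRk HA HB hy ht1
              have ht1s' : sOK E (SLT ((jF:ℕ)+1)) t1 :=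
                sOK_mono' (fun f hf => SLT_mono (Nat.le_succ _) hf) ((HA j t1 ht1S).2)
              have hb1s' : sOK E (SLT ((jF:ℕ)+1)) b1 :=
                sOK_mono' (fun f hf => SLT_mono (Nat.le_succ _) hf) ((HA j b1 hb1).2)
              have hr' : a * t1 = ((μ:K)^(m+1)) • (Y.y i * (E.x jF ^ (m+1) * b1))
                  + (e * b1 + r * t1) := by
                calc a * t1 = (E.x jF ^ (m+1)) * (c * t1) + r * t1 := by
                      rw [haeq, add_mul, mul_assoc]
                  _ = (E.x jF ^ (m+1)) * (Y.y i * b1) + r * t1 := by rw [he1]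
                  _ = (E.x jF ^ (m+1) * Y.y i) * b1 + r * t1 := by rw [← mul_assoc]
                  _ = (((μ:K)^(m+1)) • (Y.y i * E.x jF ^ (m+1)) + e) * b1 + r * t1 := by
                      rw [heq]
                  _ = ((μ:K)^(m+1)) • (Y.y i * (E.x jF ^ (m+1) * b1))
                      + (e * b1 + r * t1) := by
                      rw [add_mul, smul_mul_assoc, mul_assoc]
                      noncomm_ring
              have hr'mem : e * b1 + r * t1 ∈ DRk K D E.x (j+1) := by
                apply Subring.add_mem
                · exact Subring.mul_mem _ (mem_DRk_of hes heD) (hSsub hb1)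
                · exact Subring.mul_mem _ (mem_DRk_of hrs hrD) (hSsub ht1S)
              have hr'deg : degj E jF (e * b1 + r * t1) ≤ m := by
                apply degj_add_le
                · have h1 := degj_mul_le (HB N) hes hb1s'
                  have h2 : degj E jF b1 = 0 := degj_sOKj ((HA j b1 hb1).2)
                  omega
                · have h1 := degj_mul_le (HB N) hrs ht1s'
                  have h2 : degj E jF t1 = 0 := degj_sOKj ((HA j t1 ht1S).2)
                  omega
              obtain ⟨b2, hb2, t2, ht2, he2⟩ := IHm _ hr'mem hr'deg
              have hμD : ((μ:K))^(m+1) ∈ D := D.pow_mem hμ.1 _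
              refine ⟨((μ:K)^(m+1)) • (E.x jF ^ (m+1) * b1 * t2) + b2, ?_, t1 * t2,
                Submonoid.mul_mem _ (hTsub ht1) ht2, ?_⟩
              · refine Subring.add_mem _ ?_ hb2
                apply smul_mem_DRk hμD
                exact Subring.mul_mem _
                  (Subring.mul_mem _ (Subring.pow_mem _ hxmem _) (hSsub hb1))
                  (Tset_le_DRk HA HB hy ht2)
              · calc a * (t1 * t2) = (a * t1) * t2 := by rw [mul_assoc]
                  _ = (((μ:K)^(m+1)) • (Y.y i * (E.x jF ^ (m+1) * b1))) * t2
                      + (e * b1 + r * t1) * t2 := by rw [hr', add_mul]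
                  _ = ((μ:K)^(m+1)) • (Y.y i * (E.x jF ^ (m+1) * b1) * t2) + Y.y i * b2 := by
                      rw [smul_mul_assoc, he2]
                  _ = Y.y i * (((μ:K)^(m+1)) • (E.x jF ^ (m+1) * b1 * t2) + b2) := by
                      rw [mul_add, mul_smul_comm]
                      noncomm_ring
          intro a ha
          exact claim (degj E jF a) a ha (le_refl _)

end OreMain

section FinalPrep
variable {K : Type} [Field K] {R : Type} [Ring R] [Algebra K R] {N : ℕ}

lemma one_ne_zero_R (E : CGLExt K R N) : (1 : R) ≠ 0 := by
  intro hcon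
  have h1 : E.pbw.repr (1:R) = 0 := by rw [hcon, map_zero]
  rw [show (1:R) = oMono E.x (fun _ => 0) from one_eq_oMono, rep_oMono] at h1
  exact one_ne_zero (Finsupp.single_eq_zero.mp h1)

end FinalPrep

/-- **Lemma (normality of the `y_k` and Ore sets).** Let `R` be a CGL extension whose
presentation has a `D`-form `R_D = D⟨x_1,…,x_N⟩` containing the homogeneous prime
elements `y_1,…,y_N`. Then (a) each `y_k` is a normal element of
`(R_D)_k = D⟨x_1,…,x_k⟩`, and (b) for any subset `I ⊆ [1,N]` the multiplicative set
generated by `D^× ∪ {y_i : i ∈ I}` is a denominator set in `R_D`. -/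
theorem y_normal_and_denom {K : Type} [Field K] {R : Type} [Ring R] [Algebra K R] {N : ℕ}
    (E : CGLExt K R N) (D : Subring K) (hD : IsDForm D E)
    (Y : YSystem E) (hy : ∀ k : Fin N, Y.y k ∈ DRfull K D E.x) :
    (∀ k : Fin N, IsNormalInSR (DRk K D E.x ((k : ℕ) + 1)) (Y.y k)) ∧
    (∀ I : Set (Fin N),
      IsDenomSetIn (DRfull K D E.x)
        (Submonoid.closure
          ({r : R | ∃ t : K, isUnitIn K D t ∧ r = algebraMap K R t} ∪
            {r : R | ∃ i ∈ I, r = Y.y i}))) := by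
  have Hθ := hD.theta_mem
  have Hθi := hD.thetainv_mem
  have Hδ := hD.delta_mem
  have HA : ∀ m : ℕ, Astat E D m := fun m => (mainAB Hθ Hθi Hδ m).1
  have HB : ∀ m : ℕ, Bstat E D m := fun m => (mainAB Hθ Hθi Hδ m).2
  constructor
  · intro k
    exact y_normal HB HA k (hy k)
  · intro I
    have hSeq : DRfull K D E.x = DRk K D E.x N := DRfull_eq
    have hTeq : Submonoid.closure
        ({r : R | ∃ t : K, isUnitIn K D t ∧ r = algebraMap K R t} ∪
          {r : R | ∃ i ∈ I, r = Y.y i}) = Tset Y D I N := by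
      unfold Tset
      congr 1
      ext r
      simp only [Set.mem_union, Set.mem_setOf_eq]
      constructor
      · rintro (h | ⟨i, hiI, rfl⟩)
        · exact Or.inl h
        · exact Or.inr ⟨i, hiI, i.isLt, rfl⟩
      · rintro (h | ⟨i, hiI, -, rfl⟩)
        · exact Or.inl h
        · exact Or.inr ⟨i, hiI, rfl⟩
    rw [hSeq, hTeq]
    obtain ⟨OL, OR⟩ := oreLevel HA HB Hθ Hθi Hδ hy I N (le_refl N)
    refine ⟨?_, ?_, ?_, ?_⟩
    · intro t ht
      exact Tset_le_DRk HA HB hy ht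
    · intro h0
      have hne : ∀ t ∈ Tset Y D I N, t ≠ (0:R) := by
        intro t ht
        induction ht using Submonoid.closure_induction with
        | mem g hg =>
          rcases hg with ⟨c, hc, rfl⟩ | ⟨i, -, -, rfl⟩
          · intro hcon
            have h1 : algebraMap K R (c⁻¹ * c) = 0 := by rw [map_mul, hcon, mul_zero]
            rw [inv_mul_cancel₀ hc.2.1, map_one] at h1
            exact one_ne_zero_R E h1
          · exact y_ne i
        | one => exact one_ne_zero_R E
        | mul a b _ _ ha hb => exact dom (HB N) ha hb
      exact hne 0 h0 rfl
    · intro a ha s hs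
      exact OL s hs a ha
    · intro a ha s hs
      exact OR s hs a ha

end GYint
end

section
/- Let g be a symmetrizable Kac–Moody algebra and w ∈ W with reduced expression w = s_{i_1}···s_{i_N}. The N × (N − |S(w)|) integer matrix B̃^w with columns indexed by ex(w) := {k ∈ [1,N] : s(k) ≠ +∞} and entries (B̃^w)_{jk} = 1 if j = p(k); −1 if j = s(k); a_{i_j i_k} if j < k < s(j) < s(k); −a_{i_j i_k} if k < j < s(k) < s(j); and 0 otherwise, is compatible with the matrix r^w given by (r^w)_{kj} = q^{−((w_{≤k}+1)ϖ_{i_k}, (w_{≤j}−1)ϖ_{i_j})/2} for j < k; more precisely, its columns (B̃^w)^k, k ∈ ex(w), satisfy Ω_{r^w}((B̃^w)^k, e_l) = q_{i_k}^{−δ_{kl}} for all l ∈ [1,N] and Σ_j (B̃^w)_{jk}(w_{≤j} − 1)ϖ_{i_j} = 0. -/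
open scoped Classical

namespace GYKM

/-! ## Cartan data, weights and the Weyl group action -/

/-- A symmetrizable generalized Cartan matrix `(a_{ij})` on the index set `I = Fin r`,
with symmetrizing positive integers `d_i`. -/
structure CartanDatum (r : ℕ) where
  a : Fin r → Fin r → ℤ
  d : Fin r → ℤ
  d_pos : ∀ i, 0 < d i
  a_diag : ∀ i, a i i = 2
  a_off : ∀ i j, i ≠ j → a i j ≤ 0
  symm : ∀ i j, d i * a i j = d j * a j i

/-- A realization of the weight space of the Kac–Moody algebra: a `ℚ`-vector space `V`
carrying the invariant symmetric bilinear form `B` (with `(α_i, α_j) = d_i a_{ij}`),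
the fundamental weights `fw i = ϖ_i` and simple roots `sr i = α_i`, normalized by
`⟨h_i, ϖ_j⟩ = (α_i, ϖ_j)/d_i = δ_{ij}`. -/
structure KMWeights (r : ℕ) (C : CartanDatum r) (V : Type) [AddCommGroup V]
    [Module ℚ V] where
  B : V →ₗ[ℚ] V →ₗ[ℚ] ℚ
  Bsymm : ∀ u v : V, B u v = B v u
  fw : Fin r → V
  sr : Fin r → V
  pairing : ∀ i j, B (sr i) (fw j) = if i = j then (C.d i : ℚ) else 0
  form_sr : ∀ i j, B (sr i) (sr j) = (C.d i : ℚ) * (C.a i j : ℚ)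

variable {r : ℕ} {C : CartanDatum r} {V : Type} [AddCommGroup V] [Module ℚ V]

/-- The simple reflection `s_i` acting on the weight space:
`s_i(v) = v - ⟨h_i, v⟩ α_i = v - ((α_i, v)/d_i) α_i`. -/
def refl (W : KMWeights r C V) (i : Fin r) (v : V) : V :=
  v - ((W.B (W.sr i) v) / (C.d i : ℚ)) • W.sr i

/-- The action of the word `s_{L₀} s_{L₁} ⋯` on the weight space. -/
def wordProd (W : KMWeights r C V) (L : List (Fin r)) : V → V :=
  L.foldr (fun i f => refl W i ∘ f) id

/-- `w_{≤m} = s_{i_1} ⋯ s_{i_m}` : the action of the first `m` letters of the word `ii`. -/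
def wle (W : KMWeights r C V) {N : ℕ} (ii : Fin N → Fin r) (m : ℕ) : V → V :=
  wordProd W ((List.ofFn ii).take m)

/-- The word `ii` of length `N` is a reduced expression (no shorter word of simple
reflections has the same action on the weight space). -/
def IsReducedWord (W : KMWeights r C V) {N : ℕ} (ii : Fin N → Fin r) : Prop :=
  ∀ L : List (Fin r), wordProd W L = wle W ii N → N ≤ L.length

/-! ## Predecessor/successor functions of the level sets of `k ↦ i_k` -/

/-- The predecessor function `p(k)` for the level sets of `η`. -/
noncomputable def predIdx {N : ℕ} {α : Type} (η : Fin N → α) (k : Fin N) :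
    WithBot (Fin N) :=
  (Finset.univ.filter (fun j : Fin N => (j : ℕ) < (k : ℕ) ∧ η j = η k)).max

/-- The successor function `s(k)` for the level sets of `η`. -/
noncomputable def succIdx {N : ℕ} {α : Type} (η : Fin N → α) (k : Fin N) :
    WithTop (Fin N) :=
  (Finset.univ.filter (fun j : Fin N => (k : ℕ) < (j : ℕ) ∧ η j = η k)).min

/-- `s(k)` as an extended natural number. -/
noncomputable def succN {N : ℕ} {α : Type} (η : Fin N → α) (k : Fin N) : WithTop ℕ :=
  (succIdx η k).map (fun l : Fin N => (l : ℕ))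


/-! ## The initial exchange matrix `B̃^w` and the compatibility identities -/

variable {N : ℕ}

/-- The entries of the exchange matrix `B̃^w`. -/
noncomputable def bentry (C : CartanDatum r) (ii : Fin N → Fin r) (j k : Fin N) : ℤ :=
  if predIdx ii k = (j : WithBot (Fin N)) then 1
  else if succIdx ii k = (j : WithTop (Fin N)) then -1
  else if (j : ℕ) < (k : ℕ) ∧ ((k : ℕ) : WithTop ℕ) < succN ii j ∧
      succN ii j < succN ii k then C.a (ii j) (ii k)
  else if (k : ℕ) < (j : ℕ) ∧ ((j : ℕ) : WithTop ℕ) < succN ii k ∧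
      succN ii k < succN ii j then -(C.a (ii j) (ii k))
  else 0

/-- The exponent (with respect to `X = q^{1/2}`, i.e. twice the exponent of `q`) of the
entry `(r^w)_{kj} = q^{-((w_{≤k}+1)ϖ_{i_k}, (w_{≤j}-1)ϖ_{i_j})/2}` of the
multiplicatively skew-symmetric matrix `r^w` of the initial toric frame. -/
noncomputable def rwExp (W : KMWeights r C V) (ii : Fin N → Fin r) (k j : Fin N) : ℚ :=
  if (j : ℕ) < (k : ℕ) then
    -(W.B (wle W ii ((k : ℕ) + 1) (W.fw (ii k)) + W.fw (ii k))
        (wle W ii ((j : ℕ) + 1) (W.fw (ii j)) - W.fw (ii j)))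
  else if (k : ℕ) < (j : ℕ) then
    W.B (wle W ii ((j : ℕ) + 1) (W.fw (ii j)) + W.fw (ii j))
      (wle W ii ((k : ℕ) + 1) (W.fw (ii k)) - W.fw (ii k))
  else 0

/-! ### Auxiliary lemmas: linearity and invariance -/

section Aux

variable {r : ℕ} {C : CartanDatum r} {V : Type} [AddCommGroup V] [Module ℚ V]
variable (W : KMWeights r C V)

lemma d_ne_zero (i : Fin r) : (C.d i : ℚ) ≠ 0 := by
  exact_mod_cast (C.d_pos i).ne'

lemma refl_add (i : Fin r) (u v : V) :
    refl W i (u + v) = refl W i u + refl W i v := by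
  simp only [refl, map_add, LinearMap.add_apply, add_div, add_smul]
  abel

lemma refl_smul (i : Fin r) (c : ℚ) (v : V) :
    refl W i (c • v) = c • refl W i v := by
  simp only [refl, map_smul, LinearMap.smul_apply, smul_eq_mul, mul_div_assoc, mul_smul,
    smul_sub]

lemma B_refl (i : Fin r) (u v : V) :
    W.B (refl W i u) (refl W i v) = W.B u v := by
  have hBs := W.form_sr i i
  rw [C.a_diag i] at hBs
  have h1 : W.B u (W.sr i) = W.B (W.sr i) u := W.Bsymm u (W.sr i)
  simp only [refl, map_sub, map_smul, LinearMap.sub_apply, LinearMap.smul_apply,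
    smul_eq_mul, hBs, h1]
  have hd : (C.d i : ℚ) ≠ 0 := d_ne_zero (C := C) i
  field_simp
  ring_nf

lemma wordProd_add (L : List (Fin r)) (u v : V) :
    wordProd W L (u + v) = wordProd W L u + wordProd W L v := by
  induction L with
  | nil => rfl
  | cons a L ih =>
      simp only [wordProd, List.foldr_cons, Function.comp_apply] at *
      rw [ih, refl_add]

lemma wordProd_smul (L : List (Fin r)) (c : ℚ) (v : V) :
    wordProd W L (c • v) = c • wordProd W L v := by
  induction L with
  | nil => rfl
  | cons a L ih =>
      simp only [wordProd, List.foldr_cons, Function.comp_apply] at *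
      rw [ih, refl_smul]

/-- `wordProd` as a linear map. -/
noncomputable def wordProdLM (L : List (Fin r)) : V →ₗ[ℚ] V where
  toFun := wordProd W L
  map_add' := wordProd_add W L
  map_smul' := wordProd_smul W L

lemma wordProd_sub (L : List (Fin r)) (u v : V) :
    wordProd W L (u - v) = wordProd W L u - wordProd W L v :=
  map_sub (wordProdLM W L) u v

lemma B_wordProd (L : List (Fin r)) (u v : V) :
    W.B (wordProd W L u) (wordProd W L v) = W.B u v := by
  induction L with
  | nil => rfl
  | cons a L ih =>
      simp only [wordProd, List.foldr_cons, Function.comp_apply] at *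
      rw [B_refl, ih]

lemma B_wle {N : ℕ} (ii : Fin N → Fin r) (m : ℕ) (u v : V) :
    W.B (wle W ii m u) (wle W ii m v) = W.B u v :=
  B_wordProd W _ u v

lemma wle_sub {N : ℕ} (ii : Fin N → Fin r) (m : ℕ) (u v : V) :
    wle W ii m (u - v) = wle W ii m u - wle W ii m v :=
  wordProd_sub W _ u v

lemma wle_smul {N : ℕ} (ii : Fin N → Fin r) (m : ℕ) (c : ℚ) (v : V) :
    wle W ii m (c • v) = c • wle W ii m v :=
  wordProd_smul W _ c v

lemma wordProd_foldr (L : List (Fin r)) (g : V → V) :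
    L.foldr (fun i f => refl W i ∘ f) g = (wordProd W L) ∘ g := by
  induction L with
  | nil => rfl
  | cons a L ih => simp only [List.foldr_cons, ih]; rfl

lemma wordProd_append (L₁ L₂ : List (Fin r)) (v : V) :
    wordProd W (L₁ ++ L₂) v = wordProd W L₁ (wordProd W L₂ v) := by
  simp only [wordProd, List.foldr_append]
  rw [wordProd_foldr]
  rfl

lemma wle_succ {N : ℕ} (ii : Fin N → Fin r) (m : ℕ) (hm : m < N) (v : V) :
    wle W ii (m + 1) v = wle W ii m (refl W (ii ⟨m, hm⟩) v) := by
  have ht : (List.ofFn ii).take (m + 1) =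
      (List.ofFn ii).take m ++ [ii ⟨m, hm⟩] := by
    rw [List.take_succ]
    congr 1
    have : (List.ofFn ii)[m]? = some (ii ⟨m, hm⟩) := by
      rw [List.getElem?_eq_getElem (by simpa using hm)]
      simp
    simp [this]
  simp only [wle, ht, wordProd_append]
  rfl

lemma refl_fw (i j : Fin r) :
    refl W i (W.fw j) = W.fw j - (if i = j then (1:ℚ) else 0) • W.sr i := by
  simp only [refl, W.pairing]
  congr 2
  split_ifs with h
  · rw [div_self (d_ne_zero (C := C) i)]
  · simp

lemma refl_sr (i j : Fin r) :
    refl W i (W.sr j) = W.sr j - ((C.a i j : ℚ)) • W.sr i := by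
  simp only [refl, W.form_sr]
  congr 2
  rw [mul_comm, mul_div_assoc, div_self (d_ne_zero (C := C) i), mul_one]

end Aux

section Telescope

variable {r : ℕ} {C : CartanDatum r} {V : Type} [AddCommGroup V] [Module ℚ V]
variable (W : KMWeights r C V) {N : ℕ}

/-- The roots `β_t = w_{≤t} α_{i_t}` of the word. -/
noncomputable def beta (W : KMWeights r C V) {N : ℕ} (ii : Fin N → Fin r) (t : Fin N) : V :=
  wle W ii (t : ℕ) (W.sr (ii t))

lemma wle_zero (ii : Fin N → Fin r) (v : V) : wle W ii 0 v = v := rfl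

lemma sum_split_last {M : Type} [AddCommGroup M] (m n : ℕ) (hn : n < N)
    (P : Fin N → Prop) [DecidablePred P] (f : Fin N → M) :
    (∑ t : Fin N, if m ≤ (t : ℕ) ∧ (t : ℕ) < n + 1 ∧ P t then f t else 0)
      = (∑ t : Fin N, if m ≤ (t : ℕ) ∧ (t : ℕ) < n ∧ P t then f t else 0)
        + (if m ≤ n ∧ P ⟨n, hn⟩ then f ⟨n, hn⟩ else 0) := by
  have key : ∀ t : Fin N,
      (if m ≤ (t : ℕ) ∧ (t : ℕ) < n + 1 ∧ P t then f t else 0)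
        = (if m ≤ (t : ℕ) ∧ (t : ℕ) < n ∧ P t then f t else 0)
          + (if t = ⟨n, hn⟩ then (if m ≤ n ∧ P ⟨n, hn⟩ then f ⟨n, hn⟩ else 0) else 0) := by
    intro t
    by_cases ht : t = ⟨n, hn⟩
    · subst ht
      by_cases h1 : m ≤ n ∧ P ⟨n, hn⟩
      · rw [if_pos (⟨h1.1, Nat.lt_succ_self n, h1.2⟩ :
            m ≤ ((⟨n, hn⟩ : Fin N) : ℕ) ∧ ((⟨n, hn⟩ : Fin N) : ℕ) < n + 1 ∧ P ⟨n, hn⟩),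
          if_neg (fun h => absurd h.2.1 (Nat.lt_irrefl n)), if_pos rfl, if_pos h1, zero_add]
      · rw [if_neg (fun h => h1 ⟨h.1, h.2.2⟩),
          if_neg (fun h => absurd h.2.1 (Nat.lt_irrefl n)), if_pos rfl, if_neg h1, add_zero]
    · rw [if_neg ht, add_zero]
      have hne : (t : ℕ) ≠ n := fun h => ht (Fin.ext h)
      exact if_congr (by constructor <;> rintro ⟨h1, h2, h3⟩ <;> exact ⟨h1, by omega, h3⟩)
        rfl rfl
  rw [Finset.sum_congr rfl (fun t _ => key t), Finset.sum_add_distrib,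
    Finset.sum_ite_eq' Finset.univ (⟨n, hn⟩ : Fin N), if_pos (Finset.mem_univ _)]

lemma wle_fw_telescope (ii : Fin N → Fin r) (i : Fin r) (m : ℕ) (n : ℕ) (hmn : m ≤ n) :
    n ≤ N →
    wle W ii n (W.fw i) = wle W ii m (W.fw i)
      - ∑ t : Fin N, (if m ≤ (t : ℕ) ∧ (t : ℕ) < n ∧ ii t = i then beta W ii t else 0) := by
  induction n, hmn using Nat.le_induction with
  | base =>
      intro _
      rw [Finset.sum_eq_zero (fun t _ => if_neg (by omega)), sub_zero]
  | succ n hmn ih =>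
      intro hn1
      have hnN : n < N := by omega
      have hs := sum_split_last (N := N) m n hnN (fun t => ii t = i) (beta W ii)
      rw [wle_succ W ii n hnN, refl_fw, wle_sub, wle_smul, ih (by omega), hs, ← sub_sub]
      congr 1
      by_cases hc : ii ⟨n, hnN⟩ = i
      · rw [if_pos hc, if_pos ⟨hmn, hc⟩, one_smul]; rfl
      · rw [if_neg hc, if_neg (fun h => hc h.2), zero_smul]

lemma wle_sr_telescope (ii : Fin N → Fin r) (i : Fin r) (m : ℕ) (n : ℕ) (hmn : m ≤ n) :
    n ≤ N →
    wle W ii n (W.sr i) = wle W ii m (W.sr i)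
      - ∑ t : Fin N, (if m ≤ (t : ℕ) ∧ (t : ℕ) < n ∧ True then
          ((C.a (ii t) i : ℚ)) • beta W ii t else 0) := by
  induction n, hmn using Nat.le_induction with
  | base =>
      intro _
      rw [Finset.sum_eq_zero (fun t _ => if_neg (by omega)), sub_zero]
  | succ n hmn ih =>
      intro hn1
      have hnN : n < N := by omega
      have hs := sum_split_last (N := N) m n hnN (fun _ => True)
        (fun t => ((C.a (ii t) i : ℚ)) • beta W ii t)
      rw [wle_succ W ii n hnN, refl_sr, wle_sub, wle_smul, ih (by omega), hs, ← sub_sub]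
      congr 1
      rw [if_pos ⟨hmn, trivial⟩]
      rfl

end Telescope

section Comb

variable {N : ℕ} {α : Type} (η : Fin N → α)

lemma succIdx_spec {k sk : Fin N} (h : succIdx η k = (sk : WithTop (Fin N))) :
    (k : ℕ) < (sk : ℕ) ∧ η sk = η k ∧
      ∀ j : Fin N, (k : ℕ) < (j : ℕ) → η j = η k → (sk : ℕ) ≤ (j : ℕ) := by
  have hm := Finset.mem_of_min h
  rw [Finset.mem_filter] at hm
  refine ⟨hm.2.1, hm.2.2, fun j hj hje => ?_⟩
  have h2 : succIdx η k ≤ (j : WithTop (Fin N)) :=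
    Finset.min_le (by rw [Finset.mem_filter]; exact ⟨Finset.mem_univ _, hj, hje⟩)
  rw [h, WithTop.coe_le_coe] at h2
  exact h2

lemma succIdx_top {k : Fin N} (h : succIdx η k = ⊤) :
    ∀ j : Fin N, (k : ℕ) < (j : ℕ) → η j ≠ η k := by
  intro j hj hje
  have he : (Finset.univ.filter fun j : Fin N => (k : ℕ) < (j : ℕ) ∧ η j = η k) = ∅ :=
    Finset.min_eq_top.mp h
  have : j ∈ (Finset.univ.filter fun j : Fin N => (k : ℕ) < (j : ℕ) ∧ η j = η k) := by
    rw [Finset.mem_filter]; exact ⟨Finset.mem_univ _, hj, hje⟩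
  rw [he] at this
  simp at this

lemma succIdx_eq {k t : Fin N} (h1 : (k : ℕ) < (t : ℕ)) (h2 : η t = η k)
    (h3 : ∀ j : Fin N, (k : ℕ) < (j : ℕ) → (j : ℕ) < (t : ℕ) → η j ≠ η k) :
    succIdx η k = (t : WithTop (Fin N)) := by
  apply le_antisymm
  · exact Finset.min_le (by rw [Finset.mem_filter]; exact ⟨Finset.mem_univ _, h1, h2⟩)
  · apply Finset.le_min
    intro j hj
    rw [Finset.mem_filter] at hj
    rw [WithTop.coe_le_coe]
    by_contra hc
    have hjt : (j : ℕ) < (t : ℕ) := by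
      have := Fin.lt_def.mp (lt_of_not_ge hc)
      omega
    exact h3 j hj.2.1 hjt hj.2.2

lemma predIdx_spec {k p : Fin N} (h : predIdx η k = (p : WithBot (Fin N))) :
    (p : ℕ) < (k : ℕ) ∧ η p = η k ∧
      ∀ j : Fin N, (j : ℕ) < (k : ℕ) → η j = η k → (j : ℕ) ≤ (p : ℕ) := by
  have hm := Finset.mem_of_max h
  rw [Finset.mem_filter] at hm
  refine ⟨hm.2.1, hm.2.2, fun j hj hje => ?_⟩
  have h2 : (j : WithBot (Fin N)) ≤ predIdx η k :=
    Finset.le_max (by rw [Finset.mem_filter]; exact ⟨Finset.mem_univ _, hj, hje⟩)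
  rw [h, WithBot.coe_le_coe] at h2
  exact h2

lemma predIdx_eq {k t : Fin N} (h1 : (t : ℕ) < (k : ℕ)) (h2 : η t = η k)
    (h3 : ∀ j : Fin N, (t : ℕ) < (j : ℕ) → (j : ℕ) < (k : ℕ) → η j ≠ η k) :
    predIdx η k = (t : WithBot (Fin N)) := by
  apply le_antisymm
  · apply Finset.max_le
    intro j hj
    rw [Finset.mem_filter] at hj
    rw [WithBot.coe_le_coe]
    by_contra hc
    have hjt : (t : ℕ) < (j : ℕ) := by
      have := Fin.lt_def.mp (lt_of_not_ge hc)
      omega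
    exact h3 j hjt hj.2.1 hj.2.2
  · exact Finset.le_max (by rw [Finset.mem_filter]; exact ⟨Finset.mem_univ _, h1, h2⟩)

lemma succN_coe {k sk : Fin N} (h : succIdx η k = (sk : WithTop (Fin N))) :
    succN η k = ((sk : ℕ) : WithTop ℕ) := by
  rw [succN, h]; rfl

lemma succN_top' {k : Fin N} (h : succIdx η k = ⊤) : succN η k = ⊤ := by
  rw [succN, h]; rfl

end Comb

section Eps

variable {r : ℕ} {N : ℕ}

/-- The coefficient vector `ε` of the telescoping relation attached to the column `k`. -/
noncomputable def eps (C : CartanDatum r) (ii : Fin N → Fin r) (k sk t : Fin N) : ℤ :=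
  if (t : ℕ) = (k : ℕ) ∨ (t : ℕ) = (sk : ℕ) then 1
  else if (k : ℕ) < (t : ℕ) ∧ (t : ℕ) < (sk : ℕ) then C.a (ii t) (ii k) else 0

/-- `ε` extended by `0` to `WithTop (Fin N)`. -/
noncomputable def epsT (C : CartanDatum r) (ii : Fin N → Fin r) (k sk : Fin N) :
    WithTop (Fin N) → ℤ :=
  fun o => WithTop.recTopCoe 0 (eps C ii k sk) o

@[simp] lemma epsT_top (C : CartanDatum r) (ii : Fin N → Fin r) (k sk : Fin N) :
    epsT C ii k sk ⊤ = 0 := rfl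

@[simp] lemma epsT_coe (C : CartanDatum r) (ii : Fin N → Fin r) (k sk u : Fin N) :
    epsT C ii k sk (u : WithTop (Fin N)) = eps C ii k sk u := rfl

lemma bentry_eq (C : CartanDatum r) (ii : Fin N → Fin r) {k sk : Fin N}
    (hsk : succIdx ii k = (sk : WithTop (Fin N))) (t : Fin N) :
    bentry C ii t k = epsT C ii k sk (succIdx ii t) - eps C ii k sk t := by
  obtain ⟨hks, hsk_eq, hmin⟩ := succIdx_spec ii hsk
  have hNk : succN ii k = ((sk : ℕ) : WithTop ℕ) := succN_coe ii hsk
  have hc2' : ∀ _ : succIdx ii k = (t : WithTop (Fin N)), (t : ℕ) = (sk : ℕ) := by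
    intro h
    rw [hsk] at h
    rw [WithTop.coe_eq_coe] at h
    rw [h]
  by_cases hti : ii t = ii k
  · rcases Nat.lt_trichotomy (t : ℕ) (k : ℕ) with htk | htk | htk
    · -- t < k
      have htsk : (t : ℕ) ≠ (sk : ℕ) := by omega
      have hepst : eps C ii k sk t = 0 := by
        simp only [eps]
        rw [if_neg (by omega), if_neg (by omega)]
      have hne : succIdx ii t ≠ ⊤ := by
        intro h
        exact succIdx_top ii h k htk hti.symm
      obtain ⟨u, hu⟩ := WithTop.ne_top_iff_exists.mp hne
      obtain ⟨htu, hu_eq, humin⟩ := succIdx_spec ii hu.symm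
      have huk : (u : ℕ) ≤ (k : ℕ) := humin k htk hti.symm
      have hNt : succN ii t = ((u : ℕ) : WithTop ℕ) := succN_coe ii hu.symm
      rcases eq_or_lt_of_le huk with huk' | huk'
      · -- u = k : t = p(k)
        have hc1 : predIdx ii k = (t : WithBot (Fin N)) := by
          apply predIdx_eq ii htk hti
          intro j hj1 hj2 hje
          have := humin j hj1 (by rw [hje, hti])
          omega
        rw [bentry, if_pos hc1, ← hu, epsT_coe, hepst, sub_zero]
        simp only [eps]
        rw [if_pos (Or.inl huk')]
      · -- u < k
        have hc1 : ¬ predIdx ii k = (t : WithBot (Fin N)) := by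
          intro h
          obtain ⟨_, _, hmax⟩ := predIdx_spec ii h
          have := hmax u huk' (by rw [hu_eq, hti])
          omega
        rw [bentry, if_neg hc1, if_neg (fun h => htsk (hc2' h)), hNt, hNk,
          if_neg (by
            rintro ⟨-, h2, -⟩
            have : (k : ℕ) < (u : ℕ) := by exact_mod_cast h2
            omega),
          if_neg (by rintro ⟨h1, -, -⟩; omega), ← hu, epsT_coe, hepst, sub_zero]
        simp only [eps]
        rw [if_neg (by omega), if_neg (by omega)]
    · -- t = k
      have htK : t = k := Fin.ext htk
      rw [bentry,
        if_neg (fun h => by obtain ⟨h1, -, -⟩ := predIdx_spec ii h; omega),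
        if_neg (fun h => by have := hc2' h; omega),
        if_neg (by rintro ⟨h1, -, -⟩; omega),
        if_neg (by rintro ⟨h1, -, -⟩; omega), htK, hsk, epsT_coe]
      simp [eps]
    · -- t > k
      have hskt : (sk : ℕ) ≤ (t : ℕ) := hmin t htk hti
      rcases eq_or_lt_of_le hskt with hskt' | hskt'
      · -- t = sk
        have htSK : t = sk := Fin.ext hskt'.symm
        have hepst : eps C ii k sk t = 1 := by
          simp only [eps]
          rw [if_pos (Or.inr (by omega))]
        rw [bentry,
          if_neg (fun h => by obtain ⟨h1, -, -⟩ := predIdx_spec ii h; omega),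
          if_pos (by rw [htSK]; exact hsk), hepst]
        rcases eq_or_ne (succIdx ii t) ⊤ with hst | hst
        · rw [hst, epsT_top]; norm_num
        · obtain ⟨u, hu⟩ := WithTop.ne_top_iff_exists.mp hst
          obtain ⟨htu, hu_eq, humin⟩ := succIdx_spec ii hu.symm
          rw [← hu, epsT_coe]
          have h0 : eps C ii k sk u = 0 := by
            simp only [eps]
            rw [if_neg (by omega), if_neg (by omega)]
          rw [h0]
          norm_num
      · -- t > sk
        have hepst : eps C ii k sk t = 0 := by
          simp only [eps]
          rw [if_neg (by omega), if_neg (by omega)]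
        rw [bentry,
          if_neg (fun h => by obtain ⟨h1, -, -⟩ := predIdx_spec ii h; omega),
          if_neg (fun h => by have := hc2' h; omega),
          if_neg (by rintro ⟨h1, -, -⟩; omega), hNk,
          if_neg (by
            rintro ⟨-, h2, -⟩
            have : (t : ℕ) < (sk : ℕ) := by exact_mod_cast h2
            omega), hepst]
        rcases eq_or_ne (succIdx ii t) ⊤ with hst | hst
        · rw [hst, epsT_top]; norm_num
        · obtain ⟨u, hu⟩ := WithTop.ne_top_iff_exists.mp hst
          obtain ⟨htu, hu_eq, humin⟩ := succIdx_spec ii hu.symm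
          rw [← hu, epsT_coe]
          have h0 : eps C ii k sk u = 0 := by
            simp only [eps]
            rw [if_neg (by omega), if_neg (by omega)]
          rw [h0]
          norm_num
  · -- ii t ≠ ii k
    have htkn : (t : ℕ) ≠ (k : ℕ) := fun h => hti (by rw [show t = k from Fin.ext h])
    have htskn : (t : ℕ) ≠ (sk : ℕ) := fun h =>
      hti (by rw [show t = sk from Fin.ext h, hsk_eq])
    have hc1 : ¬ predIdx ii k = (t : WithBot (Fin N)) :=
      fun h => hti (predIdx_spec ii h).2.1
    have hc2 : ¬ succIdx ii k = (t : WithTop (Fin N)) := fun h => htskn (hc2' h)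
    have hepst : eps C ii k sk t =
        if (k : ℕ) < (t : ℕ) ∧ (t : ℕ) < (sk : ℕ) then C.a (ii t) (ii k) else 0 := by
      simp only [eps]
      rw [if_neg (by omega)]
    rcases eq_or_ne (succIdx ii t) ⊤ with hst | hst
    · have hNt : succN ii t = ⊤ := succN_top' ii hst
      rw [bentry, if_neg hc1, if_neg hc2, hNt, hNk,
        if_neg (by rintro ⟨-, -, h3⟩; exact not_top_lt h3), hst, epsT_top, hepst]
      by_cases hc : (k : ℕ) < (t : ℕ) ∧ (t : ℕ) < (sk : ℕ)
      · rw [if_pos ⟨hc.1, by exact_mod_cast hc.2, WithTop.coe_lt_top _⟩, if_pos hc]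
        ring
      · rw [if_neg (fun h => hc ⟨h.1, by exact_mod_cast h.2.1⟩), if_neg hc]
        norm_num
    · obtain ⟨u, hu⟩ := WithTop.ne_top_iff_exists.mp hst
      obtain ⟨htu, hu_eq, humin⟩ := succIdx_spec ii hu.symm
      have hNt : succN ii t = ((u : ℕ) : WithTop ℕ) := succN_coe ii hu.symm
      have hukn : (u : ℕ) ≠ (k : ℕ) := fun h =>
        hti (hu_eq.symm.trans (by rw [show u = k from Fin.ext h]))
      have huskn : (u : ℕ) ≠ (sk : ℕ) := fun h =>
        hti (hu_eq.symm.trans (by rw [show u = sk from Fin.ext h, hsk_eq]))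
      rw [bentry, if_neg hc1, if_neg hc2, hNt, hNk, hepst, ← hu, epsT_coe]
      by_cases h3 : (t : ℕ) < (k : ℕ) ∧ (k : ℕ) < (u : ℕ) ∧ (u : ℕ) < (sk : ℕ)
      · rw [if_pos ⟨h3.1, by exact_mod_cast h3.2.1, by exact_mod_cast h3.2.2⟩,
          if_neg (by omega)]
        simp only [eps]
        rw [if_neg (by omega), if_pos ⟨h3.2.1, h3.2.2⟩, hu_eq, sub_zero]
      · rw [if_neg (by
            rintro ⟨e1, e2, e3⟩
            exact h3 ⟨e1, by exact_mod_cast e2, by exact_mod_cast e3⟩)]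
        by_cases h4 : (k : ℕ) < (t : ℕ) ∧ (t : ℕ) < (sk : ℕ) ∧ (sk : ℕ) < (u : ℕ)
        · rw [if_pos ⟨h4.1, by exact_mod_cast h4.2.1, by exact_mod_cast h4.2.2⟩,
            if_pos ⟨h4.1, h4.2.1⟩]
          simp only [eps]
          rw [if_neg (by omega), if_neg (by omega)]
          ring
        · rw [if_neg (by
            rintro ⟨e1, e2, e3⟩
            exact h4 ⟨e1, by exact_mod_cast e2, by exact_mod_cast e3⟩)]
          simp only [eps]
          rw [if_neg (by omega), hu_eq]
          by_cases h5 : (k : ℕ) < (t : ℕ) ∧ (t : ℕ) < (sk : ℕ)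
          · rw [if_pos h5, if_pos (by omega)]
            ring
          · rw [if_neg h5, if_neg (by omega)]
            norm_num

end Eps

section Gamma

variable {r : ℕ} {N : ℕ}

lemma gamma_eq_aux (C : CartanDatum r) (ii : Fin N → Fin r) {k sk : Fin N}
    (hsk : succIdx ii k = (sk : WithTop (Fin N))) :
    ∀ n : ℕ, ∀ t : Fin N, N - (t : ℕ) ≤ n →
    (∑ j : Fin N, if (t : ℕ) ≤ (j : ℕ) ∧ ii j = ii t then bentry C ii j k else 0)
      = - eps C ii k sk t := by
  intro n
  induction n with
  | zero =>
      intro t ht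
      have := t.isLt
      omega
  | succ n ihn =>
      intro t ht
      rcases eq_or_ne (succIdx ii t) ⊤ with hst | hst
      · have key : ∀ j : Fin N,
            (if (t : ℕ) ≤ (j : ℕ) ∧ ii j = ii t then bentry C ii j k else 0)
              = (if j = t then bentry C ii j k else 0) := by
          intro j
          by_cases hj : j = t
          · rw [if_pos hj, if_pos ⟨by rw [hj], by rw [hj]⟩]
          · rw [if_neg hj]
            rw [if_neg]
            rintro ⟨h1, h2⟩
            rcases eq_or_lt_of_le h1 with h3 | h3
            · exact hj (Fin.ext h3.symm)
            · exact succIdx_top ii hst j h3 h2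
        rw [Finset.sum_congr rfl (fun j _ => key j),
          Finset.sum_ite_eq' Finset.univ t, if_pos (Finset.mem_univ _),
          bentry_eq C ii hsk t, hst, epsT_top, zero_sub]
      · obtain ⟨u, hu⟩ := WithTop.ne_top_iff_exists.mp hst
        obtain ⟨htu, hu_eq, humin⟩ := succIdx_spec ii hu.symm
        have key : ∀ j : Fin N,
            (if (t : ℕ) ≤ (j : ℕ) ∧ ii j = ii t then bentry C ii j k else 0)
              = (if j = t then bentry C ii j k else 0)
                + (if (u : ℕ) ≤ (j : ℕ) ∧ ii j = ii u then bentry C ii j k else 0) := by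
          intro j
          by_cases hj : j = t
          · rw [if_pos hj, if_pos ⟨by rw [hj], by rw [hj]⟩,
              if_neg (by rw [hj]; rintro ⟨h1, -⟩; omega), add_zero]
          · rw [if_neg hj, zero_add]
            by_cases hj2 : (t : ℕ) ≤ (j : ℕ) ∧ ii j = ii t
            · have h3 : (t : ℕ) < (j : ℕ) := by
                rcases eq_or_lt_of_le hj2.1 with h3 | h3
                · exact absurd (Fin.ext h3.symm) hj
                · exact h3
              rw [if_pos hj2, if_pos ⟨humin j h3 hj2.2, by rw [hj2.2, hu_eq]⟩]
            · rw [if_neg hj2, if_neg]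
              rintro ⟨h1, h2⟩
              exact hj2 ⟨by omega, by rw [h2, hu_eq]⟩
        rw [Finset.sum_congr rfl (fun j _ => key j), Finset.sum_add_distrib,
          Finset.sum_ite_eq' Finset.univ t, if_pos (Finset.mem_univ _),
          bentry_eq C ii hsk t, ← hu, epsT_coe]
        have hind := ihn u (by have := u.isLt; omega)
        rw [hind]
        ring

lemma gamma_eq (C : CartanDatum r) (ii : Fin N → Fin r) {k sk : Fin N}
    (hsk : succIdx ii k = (sk : WithTop (Fin N))) (t : Fin N) :
    (∑ j : Fin N, if (t : ℕ) ≤ (j : ℕ) ∧ ii j = ii t then bentry C ii j k else 0)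
      = - eps C ii k sk t :=
  gamma_eq_aux C ii hsk N t (by omega)

end Gamma

section GFormula

variable {r : ℕ} {C : CartanDatum r} {V : Type} [AddCommGroup V] [Module ℚ V]
variable (W : KMWeights r C V) {N : ℕ}

lemma wle_neg (ii : Fin N → Fin r) (m : ℕ) (v : V) :
    wle W ii m (-v) = - wle W ii m v :=
  map_neg (wordProdLM W _) v

lemma G_formula (ii : Fin N → Fin r) {k sk : Fin N}
    (hsk : succIdx ii k = (sk : WithTop (Fin N))) (m : ℕ) :
    (∑ t : Fin N, if m ≤ (t : ℕ) then ((eps C ii k sk t : ℚ)) • beta W ii t else 0)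
      = if (k : ℕ) < m ∧ m ≤ (sk : ℕ) then wle W ii m (W.sr (ii k)) else 0 := by
  obtain ⟨hks, hsk_eq, hmin⟩ := succIdx_spec ii hsk
  have hskN : (sk : ℕ) ≤ N := le_of_lt sk.isLt
  have hβsk : beta W ii sk = wle W ii (sk : ℕ) (W.sr (ii k)) := by rw [beta, hsk_eq]
  by_cases hA : (k : ℕ) < m
  · by_cases hB : m ≤ (sk : ℕ)
    · rw [if_pos ⟨hA, hB⟩]
      have key : ∀ t : Fin N,
          (if m ≤ (t : ℕ) then ((eps C ii k sk t : ℚ)) • beta W ii t else 0)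
            = (if m ≤ (t : ℕ) ∧ (t : ℕ) < (sk : ℕ) ∧ True then
                ((C.a (ii t) (ii k) : ℚ)) • beta W ii t else 0)
              + (if t = sk then beta W ii t else 0) := by
        intro t
        by_cases h1 : t = sk
        · have hv : (t : ℕ) = (sk : ℕ) := by rw [h1]
          have he : eps C ii k sk t = 1 := by
            simp only [eps]; rw [if_pos (Or.inr hv)]
          rw [if_pos (show m ≤ (t : ℕ) by omega), he,
            if_neg (by rintro ⟨-, h2, -⟩; omega), if_pos h1, Int.cast_one, one_smul,
            zero_add]
        · have hvne : (t : ℕ) ≠ (sk : ℕ) := fun h => h1 (Fin.ext h)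
          rw [if_neg h1, add_zero]
          by_cases h2 : m ≤ (t : ℕ)
          · by_cases h3 : (t : ℕ) < (sk : ℕ)
            · have he : eps C ii k sk t = C.a (ii t) (ii k) := by
                simp only [eps]; rw [if_neg (by omega), if_pos ⟨by omega, h3⟩]
              rw [if_pos h2, he, if_pos ⟨h2, h3, trivial⟩]
            · have he : eps C ii k sk t = 0 := by
                simp only [eps]; rw [if_neg (by omega), if_neg (by omega)]
              rw [if_pos h2, he, if_neg (by rintro ⟨-, h4, -⟩; omega), Int.cast_zero,
                zero_smul]
          · rw [if_neg h2, if_neg (by rintro ⟨h4, -⟩; omega)]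
      rw [Finset.sum_congr rfl (fun t _ => key t), Finset.sum_add_distrib,
        Finset.sum_ite_eq' Finset.univ sk, if_pos (Finset.mem_univ _)]
      have htel := wle_sr_telescope W ii (ii k) m (sk : ℕ) hB hskN
      rw [hβsk, htel]
      abel
    · rw [if_neg (fun h => hB h.2)]
      refine Finset.sum_eq_zero fun t _ => ?_
      by_cases h2 : m ≤ (t : ℕ)
      · have he : eps C ii k sk t = 0 := by
          simp only [eps]; rw [if_neg (by omega), if_neg (by omega)]
        rw [if_pos h2, he, Int.cast_zero, zero_smul]
      · rw [if_neg h2]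
  · rw [if_neg (fun h => hA h.1)]
    have hmk : m ≤ (k : ℕ) := by omega
    have key : ∀ t : Fin N,
        (if m ≤ (t : ℕ) then ((eps C ii k sk t : ℚ)) • beta W ii t else 0)
          = (if (k : ℕ) + 1 ≤ (t : ℕ) ∧ (t : ℕ) < (sk : ℕ) ∧ True then
              ((C.a (ii t) (ii k) : ℚ)) • beta W ii t else 0)
            + (if t = sk then beta W ii t else 0)
            + (if t = k then beta W ii t else 0) := by
      intro t
      by_cases h1 : t = sk
      · have hv : (t : ℕ) = (sk : ℕ) := by rw [h1]
        have he : eps C ii k sk t = 1 := by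
          simp only [eps]; rw [if_pos (Or.inr hv)]
        rw [if_pos (show m ≤ (t : ℕ) by omega), he,
          if_neg (by rintro ⟨-, h2, -⟩; omega), if_pos h1,
          if_neg (by intro h2; rw [h2] at hv; omega), Int.cast_one, one_smul,
          zero_add, add_zero]
      · have hvne : (t : ℕ) ≠ (sk : ℕ) := fun h => h1 (Fin.ext h)
        rw [if_neg h1, add_zero]
        by_cases h0 : t = k
        · have hv : (t : ℕ) = (k : ℕ) := by rw [h0]
          have he : eps C ii k sk t = 1 := by
            simp only [eps]; rw [if_pos (Or.inl hv)]
          rw [if_pos (show m ≤ (t : ℕ) by omega), he,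
            if_neg (by rintro ⟨h2, -⟩; omega), if_pos h0, Int.cast_one, one_smul,
            zero_add]
        · have hvnk : (t : ℕ) ≠ (k : ℕ) := fun h => h0 (Fin.ext h)
          rw [if_neg h0, add_zero]
          by_cases h3 : (k : ℕ) + 1 ≤ (t : ℕ) ∧ (t : ℕ) < (sk : ℕ)
          · have he : eps C ii k sk t = C.a (ii t) (ii k) := by
              simp only [eps]; rw [if_neg (by omega), if_pos ⟨by omega, h3.2⟩]
            rw [if_pos (show m ≤ (t : ℕ) by omega), he, if_pos ⟨h3.1, h3.2, trivial⟩]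
          · have hq : ¬ ((k : ℕ) + 1 ≤ (t : ℕ) ∧ (t : ℕ) < (sk : ℕ) ∧ True) :=
              fun h => h3 ⟨h.1, h.2.1⟩
            by_cases h2 : m ≤ (t : ℕ)
            · have he : eps C ii k sk t = 0 := by
                simp only [eps]; rw [if_neg (by omega), if_neg (by omega)]
              rw [if_pos h2, he, Int.cast_zero, zero_smul, if_neg hq]
            · rw [if_neg h2, if_neg hq]
    rw [Finset.sum_congr rfl (fun t _ => key t), Finset.sum_add_distrib,
      Finset.sum_add_distrib, Finset.sum_ite_eq' Finset.univ sk,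
      Finset.sum_ite_eq' Finset.univ k, if_pos (Finset.mem_univ _),
      if_pos (Finset.mem_univ _)]
    have htel := wle_sr_telescope W ii (ii k) ((k : ℕ) + 1) (sk : ℕ) (by omega) hskN
    have hSig : (∑ t : Fin N, if (k : ℕ) + 1 ≤ (t : ℕ) ∧ (t : ℕ) < (sk : ℕ) ∧ True then
          ((C.a (ii t) (ii k) : ℚ)) • beta W ii t else 0)
        = wle W ii ((k : ℕ) + 1) (W.sr (ii k)) - wle W ii (sk : ℕ) (W.sr (ii k)) := by
      rw [htel]; abel
    have hk1 : wle W ii ((k : ℕ) + 1) (W.sr (ii k)) = - beta W ii k := by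
      rw [wle_succ W ii (k : ℕ) k.isLt]
      simp only [Fin.eta]
      rw [refl_sr, C.a_diag]
      have h2 : ((2 : ℤ) : ℚ) = (2 : ℚ) := by norm_num
      rw [wle_sub, wle_smul, h2, two_smul]
      simp only [beta]
      abel
    rw [hSig, hk1, ← hβsk]
    abel

end GFormula

section Main2

variable {r : ℕ} {C : CartanDatum r} {V : Type} [AddCommGroup V] [Module ℚ V]
variable (W : KMWeights r C V) {N : ℕ}

/-- `u_j` expanded in terms of roots. -/
lemma u_expand (ii : Fin N → Fin r) (j : Fin N) :
    wle W ii ((j : ℕ) + 1) (W.fw (ii j)) - W.fw (ii j)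
      = - ∑ t : Fin N, (if (t : ℕ) ≤ (j : ℕ) ∧ ii t = ii j then beta W ii t else 0) := by
  have htel := wle_fw_telescope W ii (ii j) 0 ((j : ℕ) + 1) (by omega) j.isLt
  rw [wle_zero] at htel
  rw [htel]
  have hiff : ∀ t : Fin N,
      (0 ≤ (t : ℕ) ∧ (t : ℕ) < (j : ℕ) + 1 ∧ ii t = ii j) ↔
        ((t : ℕ) ≤ (j : ℕ) ∧ ii t = ii j) := by
    intro t
    constructor
    · rintro ⟨-, h2, h3⟩; exact ⟨by omega, h3⟩
    · rintro ⟨h1, h2⟩; exact ⟨by omega, by omega, h2⟩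
  rw [Finset.sum_congr rfl (fun t _ => if_congr (hiff t) rfl rfl)]
  abel

/-- Claim 2 (with rational scalars). -/
lemma main2 (ii : Fin N → Fin r) {k sk : Fin N}
    (hsk : succIdx ii k = (sk : WithTop (Fin N))) :
    (∑ j : Fin N, ((bentry C ii j k : ℚ)) •
        (wle W ii ((j : ℕ) + 1) (W.fw (ii j)) - W.fw (ii j))) = 0 := by
  have step1 : ∀ j : Fin N, ((bentry C ii j k : ℚ)) •
      (wle W ii ((j : ℕ) + 1) (W.fw (ii j)) - W.fw (ii j))
      = ∑ t : Fin N, (if (t : ℕ) ≤ (j : ℕ) ∧ ii j = ii t then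
          (-(bentry C ii j k : ℚ)) • beta W ii t else 0) := by
    intro j
    rw [u_expand W ii j, smul_neg, Finset.smul_sum, ← Finset.sum_neg_distrib]
    refine Finset.sum_congr rfl fun t _ => ?_
    by_cases hc : (t : ℕ) ≤ (j : ℕ) ∧ ii t = ii j
    · rw [if_pos hc, if_pos ⟨hc.1, hc.2.symm⟩, neg_smul]
    · rw [if_neg hc, if_neg (fun h => hc ⟨h.1, h.2.symm⟩), smul_zero, neg_zero]
  rw [Finset.sum_congr rfl (fun j _ => step1 j), Finset.sum_comm]
  have step3 : ∀ t : Fin N,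
      (∑ j : Fin N, if (t : ℕ) ≤ (j : ℕ) ∧ ii j = ii t then
          (-(bentry C ii j k : ℚ)) • beta W ii t else 0)
        = ((eps C ii k sk t : ℚ)) • beta W ii t := by
    intro t
    have hpt : ∀ j : Fin N, (if (t : ℕ) ≤ (j : ℕ) ∧ ii j = ii t then
        (-(bentry C ii j k : ℚ)) • beta W ii t else 0)
        = (if (t : ℕ) ≤ (j : ℕ) ∧ ii j = ii t then -(bentry C ii j k : ℚ) else 0)
            • beta W ii t := by
      intro j
      split_ifs <;> simp
    rw [Finset.sum_congr rfl (fun j _ => hpt j), ← Finset.sum_smul]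
    congr 1
    have : (∑ j : Fin N, if (t : ℕ) ≤ (j : ℕ) ∧ ii j = ii t then
        -(bentry C ii j k : ℚ) else 0)
        = ((∑ j : Fin N, if (t : ℕ) ≤ (j : ℕ) ∧ ii j = ii t then
            -(bentry C ii j k) else 0 : ℤ) : ℚ) := by
      push_cast
      rfl
    rw [this]
    have h2 : (∑ j : Fin N, if (t : ℕ) ≤ (j : ℕ) ∧ ii j = ii t then
        -(bentry C ii j k) else 0 : ℤ) = eps C ii k sk t := by
      have hg := gamma_eq C ii hsk t
      have hpt2 : ∀ j : Fin N, (if (t : ℕ) ≤ (j : ℕ) ∧ ii j = ii t then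
          -(bentry C ii j k) else 0 : ℤ)
          = -(if (t : ℕ) ≤ (j : ℕ) ∧ ii j = ii t then bentry C ii j k else 0 : ℤ) := by
        intro j; split_ifs <;> simp
      rw [Finset.sum_congr rfl (fun j _ => hpt2 j), Finset.sum_neg_distrib, hg, neg_neg]
    rw [h2]
  rw [Finset.sum_congr rfl (fun t _ => step3 t)]
  have hG := G_formula W ii hsk 0
  have hstrip : ∀ t : Fin N, ((eps C ii k sk t : ℚ)) • beta W ii t
      = (if 0 ≤ (t : ℕ) then ((eps C ii k sk t : ℚ)) • beta W ii t else 0) :=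
    fun t => (if_pos (Nat.zero_le _)).symm
  rw [Finset.sum_congr rfl (fun t _ => hstrip t), hG, if_neg (by omega)]

end Main2

section Claim1

variable {r : ℕ} {C : CartanDatum r} {V : Type} [AddCommGroup V] [Module ℚ V]
variable (W : KMWeights r C V) {N : ℕ}

lemma rwExp_eq (ii : Fin N → Fin r) (l j : Fin N) :
    rwExp W ii j l
      = W.B (wle W ii ((l : ℕ) + 1) (W.fw (ii l)) + W.fw (ii l))
          (wle W ii ((j : ℕ) + 1) (W.fw (ii j)) - W.fw (ii j))
        - (if (l : ℕ) < (j : ℕ) then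
            2 * (W.B (wle W ii ((l : ℕ) + 1) (W.fw (ii l)))
                  (wle W ii ((j : ℕ) + 1) (W.fw (ii j)))
               - W.B (W.fw (ii l)) (W.fw (ii j))) else 0) := by
  set Pl := wle W ii ((l : ℕ) + 1) (W.fw (ii l)) with hPl
  set Pj := wle W ii ((j : ℕ) + 1) (W.fw (ii j)) with hPj
  set fl := W.fw (ii l) with hfl
  set fj := W.fw (ii j) with hfj
  rcases Nat.lt_trichotomy (l : ℕ) (j : ℕ) with hl | hl | hl
  · rw [rwExp, if_pos hl, if_pos hl]
    have h1 : W.B Pj Pl = W.B Pl Pj := W.Bsymm _ _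
    have h2 : W.B Pj fl = W.B fl Pj := W.Bsymm _ _
    have h3 : W.B fj Pl = W.B Pl fj := W.Bsymm _ _
    have h4 : W.B fj fl = W.B fl fj := W.Bsymm _ _
    simp only [Pl, Pj, fl, fj] at h1 h2 h3 h4 ⊢
    simp only [map_add, map_sub, LinearMap.add_apply, LinearMap.sub_apply, h1, h2, h3, h4]
    ring
  · have hjl : j = l := Fin.ext hl.symm
    subst hjl
    rw [rwExp, if_neg (by omega), if_neg (by omega), if_neg (by omega), sub_zero]
    have h2 : W.B fj Pj = W.B Pj fj := W.Bsymm _ _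
    have h3 : W.B Pj Pj = W.B fj fj := B_wle W ii ((j : ℕ) + 1) _ _
    simp only [Pl, Pj, fl, fj] at h2 h3 ⊢
    simp only [map_add, map_sub, LinearMap.add_apply, LinearMap.sub_apply, h2, h3]
    ring
  · rw [rwExp, if_neg (by omega), if_pos hl, if_neg (by omega), sub_zero]

lemma c_expand (ii : Fin N → Fin r) (l j : Fin N) (hlj : (l : ℕ) < (j : ℕ)) :
    W.B (wle W ii ((l : ℕ) + 1) (W.fw (ii l))) (wle W ii ((j : ℕ) + 1) (W.fw (ii j)))
      - W.B (W.fw (ii l)) (W.fw (ii j))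
    = ∑ m : Fin N, (if (l : ℕ) < (m : ℕ) ∧ (m : ℕ) ≤ (j : ℕ) ∧ ii m = ii l then
        W.B (beta W ii m) (wle W ii ((j : ℕ) + 1) (W.fw (ii j))) else 0) := by
  have htel := wle_fw_telescope W ii (ii l) ((l : ℕ) + 1) ((j : ℕ) + 1) (by omega) j.isLt
  have hPl : wle W ii ((l : ℕ) + 1) (W.fw (ii l))
      = wle W ii ((j : ℕ) + 1) (W.fw (ii l))
        + ∑ t : Fin N, (if (l : ℕ) + 1 ≤ (t : ℕ) ∧ (t : ℕ) < (j : ℕ) + 1 ∧ ii t = ii l then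
            beta W ii t else 0) := by
    rw [htel]; abel
  rw [hPl, map_add, LinearMap.add_apply, B_wle, map_sum, LinearMap.sum_apply]
  have hpt : ∀ m : Fin N,
      (W.B (if (l : ℕ) + 1 ≤ (m : ℕ) ∧ (m : ℕ) < (j : ℕ) + 1 ∧ ii m = ii l then
          beta W ii m else 0)) (wle W ii ((j : ℕ) + 1) (W.fw (ii j)))
        = (if (l : ℕ) < (m : ℕ) ∧ (m : ℕ) ≤ (j : ℕ) ∧ ii m = ii l then
            W.B (beta W ii m) (wle W ii ((j : ℕ) + 1) (W.fw (ii j))) else 0) := by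
    intro m
    by_cases hc : (l : ℕ) + 1 ≤ (m : ℕ) ∧ (m : ℕ) < (j : ℕ) + 1 ∧ ii m = ii l
    · rw [if_pos hc, if_pos ⟨by omega, by omega, hc.2.2⟩]
    · rw [if_neg hc, if_neg (by rintro ⟨h1, h2, h3⟩; exact hc ⟨by omega, by omega, h3⟩)]
      simp
  rw [Finset.sum_congr rfl (fun m _ => hpt m)]
  abel

lemma BbetaP (ii : Fin N → Fin r) (m j : Fin N) (hmj : (m : ℕ) ≤ (j : ℕ)) :
    W.B (beta W ii m) (wle W ii ((j : ℕ) + 1) (W.fw (ii j)))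
      = (if ii m = ii j then ((C.d (ii m) : ℚ)) else 0)
        - ∑ t : Fin N, (if (m : ℕ) ≤ (t : ℕ) ∧ (t : ℕ) ≤ (j : ℕ) ∧ ii t = ii j then
            W.B (beta W ii m) (beta W ii t) else 0) := by
  have htel := wle_fw_telescope W ii (ii j) (m : ℕ) ((j : ℕ) + 1) (by omega) j.isLt
  rw [htel, map_sub]
  have h1 : W.B (beta W ii m) (wle W ii (m : ℕ) (W.fw (ii j)))
      = (if ii m = ii j then ((C.d (ii m) : ℚ)) else 0) := by
    rw [beta, B_wle, W.pairing]
  rw [h1, map_sum]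
  have hpt : ∀ t : Fin N,
      W.B (beta W ii m) (if (m : ℕ) ≤ (t : ℕ) ∧ (t : ℕ) < (j : ℕ) + 1 ∧ ii t = ii j then
          beta W ii t else 0)
        = (if (m : ℕ) ≤ (t : ℕ) ∧ (t : ℕ) ≤ (j : ℕ) ∧ ii t = ii j then
            W.B (beta W ii m) (beta W ii t) else 0) := by
    intro t
    by_cases hc : (m : ℕ) ≤ (t : ℕ) ∧ (t : ℕ) < (j : ℕ) + 1 ∧ ii t = ii j
    · rw [if_pos hc, if_pos ⟨hc.1, by omega, hc.2.2⟩]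
    · rw [if_neg hc, if_neg (by rintro ⟨h1, h2, h3⟩; exact hc ⟨h1, by omega, h3⟩)]
      simp
  rw [Finset.sum_congr rfl (fun t _ => hpt t)]

end Claim1

section SVal

variable {r : ℕ} {C : CartanDatum r} {V : Type} [AddCommGroup V] [Module ℚ V]
variable (W : KMWeights r C V) {N : ℕ}

lemma S_val (ii : Fin N → Fin r) {k sk : Fin N}
    (hsk : succIdx ii k = (sk : WithTop (Fin N))) (m : Fin N) :
    (∑ j : Fin N, if (m : ℕ) ≤ (j : ℕ) then
        ((bentry C ii j k : ℚ)) *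
          W.B (beta W ii m) (wle W ii ((j : ℕ) + 1) (W.fw (ii j))) else 0)
      = (C.d (ii k) : ℚ) *
          ((if m = sk then 1 else 0) - (if m = k then 1 else 0)) := by
  obtain ⟨hks, hsk_eq, hmin⟩ := succIdx_spec ii hsk
  -- pointwise expansion of `B β_m P_j`
  have hpt : ∀ j : Fin N,
      (if (m : ℕ) ≤ (j : ℕ) then
        ((bentry C ii j k : ℚ)) *
          W.B (beta W ii m) (wle W ii ((j : ℕ) + 1) (W.fw (ii j))) else 0)
      = (if (m : ℕ) ≤ (j : ℕ) ∧ ii j = ii m then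
            ((bentry C ii j k : ℚ)) * (C.d (ii m) : ℚ) else 0)
        - ∑ t : Fin N, (if (m : ℕ) ≤ (j : ℕ) ∧ (m : ℕ) ≤ (t : ℕ) ∧ (t : ℕ) ≤ (j : ℕ)
              ∧ ii t = ii j then
            ((bentry C ii j k : ℚ)) * W.B (beta W ii m) (beta W ii t) else 0) := by
    intro j
    by_cases hmj : (m : ℕ) ≤ (j : ℕ)
    · rw [if_pos hmj, BbetaP W ii m j hmj, mul_sub, Finset.mul_sum]
      congr 1
      · by_cases hij : ii m = ii j
        · rw [if_pos hij, if_pos ⟨hmj, hij.symm⟩]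
        · rw [if_neg hij, if_neg (fun h => hij h.2.symm), mul_zero]
      · refine Finset.sum_congr rfl fun t _ => ?_
        by_cases hc : (m : ℕ) ≤ (t : ℕ) ∧ (t : ℕ) ≤ (j : ℕ) ∧ ii t = ii j
        · rw [if_pos hc, if_pos ⟨hmj, hc.1, hc.2.1, hc.2.2⟩]
        · rw [if_neg hc, if_neg (fun h => hc ⟨h.2.1, h.2.2.1, h.2.2.2⟩), mul_zero]
    · rw [if_neg hmj, if_neg (fun h => hmj h.1),
        Finset.sum_eq_zero (fun t _ => if_neg (fun h => hmj h.1)), sub_zero]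
  rw [Finset.sum_congr rfl (fun j _ => hpt j), Finset.sum_sub_distrib]
  -- first summand
  have hfirst : (∑ j : Fin N, if (m : ℕ) ≤ (j : ℕ) ∧ ii j = ii m then
      ((bentry C ii j k : ℚ)) * (C.d (ii m) : ℚ) else 0)
      = - ((eps C ii k sk m : ℚ)) * (C.d (ii m) : ℚ) := by
    have hp2 : ∀ j : Fin N, (if (m : ℕ) ≤ (j : ℕ) ∧ ii j = ii m then
        ((bentry C ii j k : ℚ)) * (C.d (ii m) : ℚ) else 0)
        = (if (m : ℕ) ≤ (j : ℕ) ∧ ii j = ii m then ((bentry C ii j k : ℚ)) else 0)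
          * (C.d (ii m) : ℚ) := by
      intro j; split_ifs <;> simp
    rw [Finset.sum_congr rfl (fun j _ => hp2 j), ← Finset.sum_mul]
    congr 1
    have hcast : (∑ j : Fin N, if (m : ℕ) ≤ (j : ℕ) ∧ ii j = ii m then
        ((bentry C ii j k : ℚ)) else 0)
        = ((∑ j : Fin N, if (m : ℕ) ≤ (j : ℕ) ∧ ii j = ii m then
            bentry C ii j k else 0 : ℤ) : ℚ) := by
      push_cast; rfl
    rw [hcast, gamma_eq C ii hsk m]
    push_cast; ring
  -- second summand
  have hsecond : (∑ j : Fin N, ∑ t : Fin N,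
      (if (m : ℕ) ≤ (j : ℕ) ∧ (m : ℕ) ≤ (t : ℕ) ∧ (t : ℕ) ≤ (j : ℕ) ∧ ii t = ii j then
        ((bentry C ii j k : ℚ)) * W.B (beta W ii m) (beta W ii t) else 0))
      = - (if (k : ℕ) < (m : ℕ) ∧ (m : ℕ) ≤ (sk : ℕ) then
          W.B (beta W ii m) (wle W ii (m : ℕ) (W.sr (ii k))) else 0) := by
    rw [Finset.sum_comm]
    have hin : ∀ t : Fin N, (∑ j : Fin N,
        (if (m : ℕ) ≤ (j : ℕ) ∧ (m : ℕ) ≤ (t : ℕ) ∧ (t : ℕ) ≤ (j : ℕ) ∧ ii t = ii j then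
          ((bentry C ii j k : ℚ)) * W.B (beta W ii m) (beta W ii t) else 0))
        = (if (m : ℕ) ≤ (t : ℕ) then
            (-(eps C ii k sk t : ℚ)) * W.B (beta W ii m) (beta W ii t) else 0) := by
      intro t
      by_cases hmt : (m : ℕ) ≤ (t : ℕ)
      · rw [if_pos hmt]
        have hp3 : ∀ j : Fin N,
            (if (m : ℕ) ≤ (j : ℕ) ∧ (m : ℕ) ≤ (t : ℕ) ∧ (t : ℕ) ≤ (j : ℕ) ∧ ii t = ii j
              then ((bentry C ii j k : ℚ)) * W.B (beta W ii m) (beta W ii t) else 0)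
            = (if (t : ℕ) ≤ (j : ℕ) ∧ ii j = ii t then ((bentry C ii j k : ℚ)) else 0)
                * W.B (beta W ii m) (beta W ii t) := by
          intro j
          by_cases hc : (t : ℕ) ≤ (j : ℕ) ∧ ii j = ii t
          · rw [if_pos ⟨by omega, hmt, hc.1, hc.2.symm⟩, if_pos hc]
          · rw [if_neg (fun h => hc ⟨h.2.2.1, h.2.2.2.symm⟩), if_neg hc, zero_mul]
        rw [Finset.sum_congr rfl (fun j _ => hp3 j), ← Finset.sum_mul]
        congr 1
        have hcast : (∑ j : Fin N, if (t : ℕ) ≤ (j : ℕ) ∧ ii j = ii t then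
            ((bentry C ii j k : ℚ)) else 0)
            = ((∑ j : Fin N, if (t : ℕ) ≤ (j : ℕ) ∧ ii j = ii t then
                bentry C ii j k else 0 : ℤ) : ℚ) := by
          push_cast; rfl
        rw [hcast, gamma_eq C ii hsk t]
        push_cast; ring
      · rw [if_neg hmt]
        exact Finset.sum_eq_zero (fun j _ => if_neg (fun h => hmt h.2.1))
    rw [Finset.sum_congr rfl (fun t _ => hin t)]
    have hp4 : ∀ t : Fin N,
        (if (m : ℕ) ≤ (t : ℕ) then
          (-(eps C ii k sk t : ℚ)) * W.B (beta W ii m) (beta W ii t) else 0)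
        = - W.B (beta W ii m)
            (if (m : ℕ) ≤ (t : ℕ) then ((eps C ii k sk t : ℚ)) • beta W ii t else 0) := by
      intro t
      by_cases hc : (m : ℕ) ≤ (t : ℕ)
      · rw [if_pos hc, if_pos hc, map_smul, smul_eq_mul]
        ring
      · rw [if_neg hc, if_neg hc, map_zero, neg_zero]
    rw [Finset.sum_congr rfl (fun t _ => hp4 t), Finset.sum_neg_distrib, ← map_sum,
      G_formula W ii hsk (m : ℕ)]
    by_cases hc : (k : ℕ) < (m : ℕ) ∧ (m : ℕ) ≤ (sk : ℕ)
    · rw [if_pos hc, if_pos hc]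
    · rw [if_neg hc, if_neg hc, map_zero]
  rw [hfirst, hsecond]
  have hBB : W.B (beta W ii m) (wle W ii (m : ℕ) (W.sr (ii k)))
      = (C.d (ii m) : ℚ) * (C.a (ii m) (ii k) : ℚ) := by
    rw [beta, B_wle, W.form_sr]
  rw [hBB, sub_neg_eq_add]
  -- now the case analysis
  by_cases hm1 : (m : ℕ) = (k : ℕ)
  · have hmk : m = k := Fin.ext hm1
    have he : eps C ii k sk m = 1 := by
      simp only [eps]; rw [if_pos (Or.inl hm1)]
    rw [he, if_neg (by omega), if_neg (by intro h; rw [h] at hm1; omega), if_pos hmk,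
      hmk]
    push_cast; ring
  · by_cases hm2 : (m : ℕ) = (sk : ℕ)
    · have hmsk : m = sk := Fin.ext hm2
      have he : eps C ii k sk m = 1 := by
        simp only [eps]; rw [if_pos (Or.inr hm2)]
      rw [he, if_pos (by omega), if_pos hmsk, if_neg (fun h => hm1 (by rw [h]))]
      have hiimk : ii m = ii k := by rw [hmsk, hsk_eq]
      rw [hiimk, C.a_diag]
      push_cast; ring
    · have hmns : ¬ m = sk := fun h => hm2 (by rw [h])
      have hmnk : ¬ m = k := fun h => hm1 (by rw [h])
      rw [if_neg hmns, if_neg hmnk]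
      by_cases hc : (k : ℕ) < (m : ℕ) ∧ (m : ℕ) ≤ (sk : ℕ)
      · have he : eps C ii k sk m = C.a (ii m) (ii k) := by
          simp only [eps]; rw [if_neg (by omega), if_pos ⟨hc.1, by omega⟩]
        rw [he, if_pos hc]
        ring
      · have he : eps C ii k sk m = 0 := by
          simp only [eps]; rw [if_neg (by omega), if_neg (by omega)]
        rw [he, if_neg hc]
        push_cast; ring

end SVal

section Final

variable {r : ℕ} {C : CartanDatum r} {V : Type} [AddCommGroup V] [Module ℚ V]
variable (W : KMWeights r C V) {N : ℕ}

lemma main1 (ii : Fin N → Fin r) {k sk : Fin N}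
    (hsk : succIdx ii k = (sk : WithTop (Fin N))) (l : Fin N) :
    (∑ j : Fin N, (bentry C ii j k : ℚ) * rwExp W ii j l)
      = if l = k then -2 * (C.d (ii k) : ℚ) else 0 := by
  obtain ⟨hks, hsk_eq, hmin⟩ := succIdx_spec ii hsk
  have hB : ∀ j : Fin N, (bentry C ii j k : ℚ) * rwExp W ii j l
      = (bentry C ii j k : ℚ) *
          W.B (wle W ii ((l : ℕ) + 1) (W.fw (ii l)) + W.fw (ii l))
            (wle W ii ((j : ℕ) + 1) (W.fw (ii j)) - W.fw (ii j))
        - (if (l : ℕ) < (j : ℕ) then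
            (bentry C ii j k : ℚ) *
              (2 * (W.B (wle W ii ((l : ℕ) + 1) (W.fw (ii l)))
                      (wle W ii ((j : ℕ) + 1) (W.fw (ii j)))
                    - W.B (W.fw (ii l)) (W.fw (ii j)))) else 0) := by
    intro j
    rw [rwExp_eq W ii l j, mul_sub]
    congr 1
    by_cases hc : (l : ℕ) < (j : ℕ)
    · rw [if_pos hc, if_pos hc]
    · rw [if_neg hc, if_neg hc, mul_zero]
  rw [Finset.sum_congr rfl (fun j _ => hB j), Finset.sum_sub_distrib]
  have hZ : (∑ j : Fin N, (bentry C ii j k : ℚ) *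
      W.B (wle W ii ((l : ℕ) + 1) (W.fw (ii l)) + W.fw (ii l))
        (wle W ii ((j : ℕ) + 1) (W.fw (ii j)) - W.fw (ii j))) = 0 := by
    have hp : ∀ j : Fin N, (bentry C ii j k : ℚ) *
        W.B (wle W ii ((l : ℕ) + 1) (W.fw (ii l)) + W.fw (ii l))
          (wle W ii ((j : ℕ) + 1) (W.fw (ii j)) - W.fw (ii j))
        = W.B (wle W ii ((l : ℕ) + 1) (W.fw (ii l)) + W.fw (ii l))
            ((bentry C ii j k : ℚ) •
              (wle W ii ((j : ℕ) + 1) (W.fw (ii j)) - W.fw (ii j))) := by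
      intro j
      rw [map_smul, smul_eq_mul]
    rw [Finset.sum_congr rfl (fun j _ => hp j), ← map_sum, main2 W ii hsk, map_zero]
  rw [hZ, zero_sub]
  have hfac : ∀ j : Fin N, (if (l : ℕ) < (j : ℕ) then
      (bentry C ii j k : ℚ) *
        (2 * (W.B (wle W ii ((l : ℕ) + 1) (W.fw (ii l)))
                (wle W ii ((j : ℕ) + 1) (W.fw (ii j)))
              - W.B (W.fw (ii l)) (W.fw (ii j)))) else 0)
      = 2 * (if (l : ℕ) < (j : ℕ) then
          (bentry C ii j k : ℚ) *
            (W.B (wle W ii ((l : ℕ) + 1) (W.fw (ii l)))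
                (wle W ii ((j : ℕ) + 1) (W.fw (ii j)))
              - W.B (W.fw (ii l)) (W.fw (ii j))) else 0) := by
    intro j
    split_ifs <;> ring
  rw [Finset.sum_congr rfl (fun j _ => hfac j), ← Finset.mul_sum]
  have hX1 : ∀ j : Fin N, (if (l : ℕ) < (j : ℕ) then
      (bentry C ii j k : ℚ) *
        (W.B (wle W ii ((l : ℕ) + 1) (W.fw (ii l)))
            (wle W ii ((j : ℕ) + 1) (W.fw (ii j)))
          - W.B (W.fw (ii l)) (W.fw (ii j))) else 0)
      = ∑ m : Fin N, (if (l : ℕ) < (m : ℕ) ∧ (m : ℕ) ≤ (j : ℕ) ∧ ii m = ii l then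
          (bentry C ii j k : ℚ) *
            W.B (beta W ii m) (wle W ii ((j : ℕ) + 1) (W.fw (ii j))) else 0) := by
    intro j
    by_cases hc : (l : ℕ) < (j : ℕ)
    · rw [if_pos hc, c_expand W ii l j hc, Finset.mul_sum]
      refine Finset.sum_congr rfl fun m _ => ?_
      by_cases hc2 : (l : ℕ) < (m : ℕ) ∧ (m : ℕ) ≤ (j : ℕ) ∧ ii m = ii l
      · rw [if_pos hc2, if_pos hc2]
      · rw [if_neg hc2, if_neg hc2, mul_zero]
    · rw [if_neg hc]
      exact (Finset.sum_eq_zero (fun m _ => if_neg (fun h => hc (by omega)))).symm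
  rw [Finset.sum_congr rfl (fun j _ => hX1 j), Finset.sum_comm]
  have hX2 : ∀ m : Fin N, (∑ j : Fin N,
      (if (l : ℕ) < (m : ℕ) ∧ (m : ℕ) ≤ (j : ℕ) ∧ ii m = ii l then
        (bentry C ii j k : ℚ) *
          W.B (beta W ii m) (wle W ii ((j : ℕ) + 1) (W.fw (ii j))) else 0))
      = (if (l : ℕ) < (m : ℕ) ∧ ii m = ii l then
          (C.d (ii k) : ℚ) * ((if m = sk then 1 else 0) - (if m = k then 1 else 0))
          else 0) := by
    intro m
    by_cases hm : (l : ℕ) < (m : ℕ) ∧ ii m = ii l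
    · rw [if_pos hm, ← S_val W ii hsk m]
      refine Finset.sum_congr rfl fun j _ => ?_
      by_cases hc : (m : ℕ) ≤ (j : ℕ)
      · rw [if_pos ⟨hm.1, hc, hm.2⟩, if_pos hc]
      · rw [if_neg (fun h => hc h.2.1), if_neg hc]
    · rw [if_neg hm]
      exact Finset.sum_eq_zero (fun j _ => if_neg (fun h => hm ⟨h.1, h.2.2⟩))
  rw [Finset.sum_congr rfl (fun m _ => hX2 m)]
  have hsknk : ¬ sk = k := fun h => by rw [h] at hks; omega
  have hp5 : ∀ m : Fin N, (if (l : ℕ) < (m : ℕ) ∧ ii m = ii l then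
      (C.d (ii k) : ℚ) * ((if m = sk then 1 else 0) - (if m = k then 1 else 0))
      else 0)
      = (if m = sk then (if (l : ℕ) < (sk : ℕ) ∧ ii sk = ii l then (C.d (ii k) : ℚ)
          else 0) else 0)
        - (if m = k then (if (l : ℕ) < (k : ℕ) ∧ ii k = ii l then (C.d (ii k) : ℚ)
          else 0) else 0) := by
    clear hB hZ hfac hX1 hX2 hmin
    intro m
    split_ifs <;> simp_all <;> try ring
  rw [Finset.sum_congr rfl (fun m _ => hp5 m), Finset.sum_sub_distrib,
    Finset.sum_ite_eq' Finset.univ sk, Finset.sum_ite_eq' Finset.univ k,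
    if_pos (Finset.mem_univ _), if_pos (Finset.mem_univ _)]
  by_cases hlk : l = k
  · subst hlk
    rw [if_pos rfl, if_pos ⟨hks, hsk_eq⟩, if_neg (by omega)]
    ring
  · rw [if_neg hlk]
    have hlkn : (l : ℕ) ≠ (k : ℕ) := fun h => hlk (Fin.ext h)
    by_cases hil : ii k = ii l
    · by_cases hlk2 : (l : ℕ) < (k : ℕ)
      · rw [if_pos ⟨by omega, hsk_eq.trans hil⟩, if_pos ⟨hlk2, hil⟩]
        ring
      · have hkl : (k : ℕ) < (l : ℕ) := by omega
        have hskl : (sk : ℕ) ≤ (l : ℕ) := hmin l hkl hil.symm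
        rw [if_neg (fun h => by omega), if_neg (fun h => by omega)]
        ring
    · rw [if_neg (fun h => hil (hsk_eq.symm.trans h.2)), if_neg (fun h => hil h.2)]
      ring

end Final

/-- **Proposition (compatibility of the initial pair `(r^w, B̃^w)`).**
For a symmetrizable Kac–Moody algebra `g` and a reduced expression
`w = s_{i_1} ⋯ s_{i_N}`, the matrix `B̃^w` (with columns indexed by
`ex(w) = {k : s(k) ≠ +∞}`) is compatible with `r^w`; more precisely, its columns
satisfy `Ω_{r^w}((B̃^w)^k, e_l) = q_{i_k}^{-δ_{kl}}` for all `l` — expressed here on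
the level of the exponents of `X = q^{1/2}`, i.e.
`Σ_j (B̃^w)_{jk}·exp_X((r^w)_{jl}) = -2 d_{i_k} δ_{kl}` — and
`Σ_j (B̃^w)_{jk} (w_{≤j} - 1) ϖ_{i_j} = 0`. -/
theorem Bw_compatible_with_rw (C : CartanDatum r) (V : Type) [AddCommGroup V]
    [Module ℚ V] (W : KMWeights r C V) (N : ℕ) (ii : Fin N → Fin r)
    (hred : IsReducedWord W ii) :
    (∀ k : Fin N, succIdx ii k ≠ ⊤ → ∀ l : Fin N,
      (∑ j : Fin N, (bentry C ii j k : ℚ) * rwExp W ii j l) =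
        (if l = k then -2 * (C.d (ii k) : ℚ) else 0)) ∧
    (∀ k : Fin N, succIdx ii k ≠ ⊤ →
      (∑ j : Fin N,
        (bentry C ii j k) • (wle W ii ((j : ℕ) + 1) (W.fw (ii j)) - W.fw (ii j))) = 0) := by
  constructor
  · intro k hk l
    obtain ⟨sk, hsk⟩ := WithTop.ne_top_iff_exists.mp hk
    exact main1 W ii hsk.symm l
  · intro k hk
    obtain ⟨sk, hsk⟩ := WithTop.ne_top_iff_exists.mp hk
    have hconv : ∀ j : Fin N, (bentry C ii j k) •
        (wle W ii ((j : ℕ) + 1) (W.fw (ii j)) - W.fw (ii j))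
        = ((bentry C ii j k : ℚ)) •
            (wle W ii ((j : ℕ) + 1) (W.fw (ii j)) - W.fw (ii j)) :=
      fun j => (Int.cast_smul_eq_zsmul ℚ _ _).symm
    rw [Finset.sum_congr rfl (fun j _ => hconv j)]
    exact main2 W ii hsk.symm

end GYKM
end
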